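/- arXiv:1511.03424 — 7 statements merged into one kernel-verified Lean document; each statement's English description precedes it below -/
import Mathlib

section
/- Let λ ∈ ℂ with |λ| > 1 and let G : ℂ² → ℂ² be G(z₁,z₂) = (λz₁, λz₂). A holomorphic automorphism F of ℂ² fixing the origin satisfies F∘G = G∘F if and only if there exist a, b, c, d ∈ ℂ with ad − bc ≠ 0 such that F(z₁,z₂) = (az₁ + bz₂, cz₁ + dz₂) for all (z₁,z₂) ∈ ℂ². (Theorem 3.4, case 1) -/
/-- Theorem 3.4, case 1: for `G(z₁,z₂) = (λz₁, λz₂)` with `|λ| > 1`, a holomorphic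
automorphism `F` of `ℂ²` fixing the origin commutes with `G` iff
`F(z₁,z₂) = (az₁ + bz₂, cz₁ + dz₂)` with `ad − bc ≠ 0`. -/
theorem namba_case_1 (lam : ℂ) (hlam : 1 < ‖lam‖)
    (F Finv : ℂ × ℂ → ℂ × ℂ)
    (hF : Differentiable ℂ F) (hFinv : Differentiable ℂ Finv)
    (hleft : Function.LeftInverse Finv F)
    (hright : Function.RightInverse Finv F)
    (hF0 : F (0, 0) = (0, 0)) :
    (∀ z₁ z₂ : ℂ, F (lam * z₁, lam * z₂)
        = (lam * (F (z₁, z₂)).1, lam * (F (z₁, z₂)).2)) ↔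
      ∃ a b c d : ℂ, a * d - b * c ≠ 0 ∧
        ∀ z₁ z₂ : ℂ, F (z₁, z₂) = (a * z₁ + b * z₂, c * z₁ + d * z₂) := by
  have hF00 : F 0 = 0 := hF0
  constructor
  · intro hcomm
    have hlam0 : lam ≠ 0 := by
      intro h
      rw [h] at hlam
      simp at hlam
      linarith
    have hnormlt : ‖lam⁻¹‖ < 1 := by
      rw [norm_inv]
      rw [inv_lt_one_iff₀]
      right
      exact hlam
    set L := fderiv ℂ F 0 with hLdef
    have hsmul : ∀ z : ℂ × ℂ, F (lam • z) = lam • F z := by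
      rintro ⟨z₁, z₂⟩
      have := hcomm z₁ z₂
      simpa [Prod.smul_mk, Prod.ext_iff] using this
    have hsmulinv : ∀ z : ℂ × ℂ, F (lam⁻¹ • z) = lam⁻¹ • F z := by
      intro z
      have h1 := hsmul (lam⁻¹ • z)
      rw [smul_smul, mul_inv_cancel₀ hlam0, one_smul] at h1
      rw [h1, smul_smul, inv_mul_cancel₀ hlam0, one_smul]
    have hiter : ∀ n : ℕ, ∀ z : ℂ × ℂ, F ((lam⁻¹) ^ n • z) = (lam⁻¹) ^ n • F z := by
      intro n
      induction n with
      | zero => simp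
      | succ n ih =>
        intro z
        rw [pow_succ', mul_smul, hsmulinv, ih, ← mul_smul, ← pow_succ']
    have hderiv : HasFDerivAt F L 0 := (hF 0).hasFDerivAt
    have hlo : (fun h : ℂ × ℂ => F h - L h) =o[nhds 0] fun h => h := by
      have := hasFDerivAt_iff_isLittleO_nhds_zero.mp hderiv
      simpa [hF00] using this
    have hlin : ∀ z : ℂ × ℂ, F z = L z := by
      intro z
      by_cases hz : z = 0
      · simp [hz, hF00]
      have hznorm : 0 < ‖z‖ := norm_pos_iff.mpr hz
      have key : ∀ ε : ℝ, 0 < ε → ‖F z - L z‖ ≤ ε * ‖z‖ := by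
        intro ε hε
        have hev := (Asymptotics.isLittleO_iff.mp hlo) hε
        rw [Metric.eventually_nhds_iff] at hev
        obtain ⟨δ, hδ, hball⟩ := hev
        obtain ⟨n, hn⟩ := exists_pow_lt_of_lt_one (div_pos hδ hznorm) hnormlt
        set w : ℂ × ℂ := (lam⁻¹) ^ n • z with hw
        have hwnorm : ‖w‖ = ‖lam⁻¹‖ ^ n * ‖z‖ := by
          rw [hw, norm_smul, norm_pow]
        have hwlt : dist w 0 < δ := by
          rw [dist_zero_right, hwnorm]
          calc ‖lam⁻¹‖ ^ n * ‖z‖ < (δ / ‖z‖) * ‖z‖ := by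
                exact mul_lt_mul_of_pos_right hn hznorm
            _ = δ := by field_simp
        have hbound := hball hwlt
        have hFw : F w = (lam⁻¹) ^ n • F z := hiter n z
        have hLw : L w = (lam⁻¹) ^ n • L z := by
          rw [hw, L.map_smul]
        have hrec : F z - L z = lam ^ n • (F w - L w) := by
          rw [hFw, hLw, smul_sub, smul_smul, smul_smul, ← mul_pow,
            mul_inv_cancel₀ hlam0, one_pow, one_smul, one_smul]
        calc ‖F z - L z‖ = ‖lam‖ ^ n * ‖F w - L w‖ := by
              rw [hrec, norm_smul, norm_pow]
          _ ≤ ‖lam‖ ^ n * (ε * ‖w‖) := by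
              apply mul_le_mul_of_nonneg_left hbound (by positivity)
          _ = (‖lam‖ ^ n * ‖lam⁻¹‖ ^ n) * (ε * ‖z‖) := by
              rw [hwnorm]; ring
          _ = ε * ‖z‖ := by
              rw [← mul_pow, norm_inv, mul_inv_cancel₀ (by positivity), one_pow, one_mul]
      have hle : ‖F z - L z‖ ≤ 0 := by
        apply le_of_forall_pos_le_add
        intro ε hε
        have := key (ε / ‖z‖) (div_pos hε hznorm)
        rw [div_mul_cancel₀ _ (ne_of_gt hznorm)] at this
        linarith
      have : F z - L z = 0 := by
        rwa [← norm_le_zero_iff]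
      exact sub_eq_zero.mp this
    -- extract the coefficients
    set a := (F (1, 0)).1
    set b := (F (0, 1)).1
    set c := (F (1, 0)).2
    set d := (F (0, 1)).2
    have funeq : ∀ z₁ z₂ : ℂ, F (z₁, z₂) = (a * z₁ + b * z₂, c * z₁ + d * z₂) := by
      intro z₁ z₂
      have hdecomp : (z₁, z₂) = z₁ • ((1 : ℂ), (0 : ℂ)) + z₂ • ((0 : ℂ), (1 : ℂ)) := by
        simp [Prod.ext_iff]
      rw [hlin, hdecomp, L.map_add, L.map_smul, L.map_smul, ← hlin, ← hlin]
      simp [Prod.ext_iff, Prod.smul_def]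
      constructor <;> ring
    refine ⟨a, b, c, d, ?_, funeq⟩
    intro hdet
    have hinj := hleft.injective
    have h1 : F (d, -c) = F (0, 0) := by
      rw [funeq, hF0]
      simp only [Prod.mk.injEq]
      constructor
      · linear_combination hdet
      · ring
    have h1' : d = 0 ∧ -c = 0 := by
      have := hinj h1
      simpa [Prod.ext_iff] using this
    have h2 : F (-b, a) = F (0, 0) := by
      rw [funeq, hF0]
      simp only [Prod.mk.injEq]
      constructor
      · ring
      · linear_combination hdet
    have h2' : -b = 0 ∧ a = 0 := by
      have := hinj h2
      simpa [Prod.ext_iff] using this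
    have h3 : F (1, 0) = F (0, 0) := by
      rw [funeq, hF0]
      simp only [Prod.mk.injEq, mul_one, mul_zero, add_zero]
      exact ⟨h2'.2, neg_eq_zero.mp h1'.2⟩
    have := hinj h3
    simp [Prod.ext_iff] at this
  · rintro ⟨a, b, c, d, hdet, hFeq⟩
    intro z₁ z₂
    rw [hFeq, hFeq]
    simp [Prod.ext_iff]
    constructor <;> ring
end

section
/- Let μ ∈ ℂ with |μ| > 1, let p ≥ 2 be an integer, and let G : ℂ² → ℂ² be G(z₁,z₂) = (μᵖz₁, μz₂). A holomorphic automorphism F of ℂ² fixing the origin satisfies F∘G = G∘F if and only if there exist a, b, d ∈ ℂ with ad ≠ 0 such that F(z₁,z₂) = (az₁ + b·z₂ᵖ, dz₂) for all (z₁,z₂) ∈ ℂ². (Theorem 3.4, case 2) -/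
open Set Bornology

/-- One-variable key lemma: an entire function with `φ(μt) = μ^m φ(t)`, `|μ| > 1`,
is `φ(t) = φ(1) t^m`. -/
lemma aux_homog {φ : ℂ → ℂ} (hφ : Differentiable ℂ φ) {μ : ℂ}
    (hμ : 1 < ‖μ‖) (m : ℕ) (hfe : ∀ t, φ (μ * t) = μ ^ m * φ t) :
    ∀ t, φ t = φ 1 * t ^ m := by
  have hpowinj : ∀ {i j : ℕ}, ‖μ‖ ^ i = ‖μ‖ ^ j → i = j := by
    intro i j hij
    by_contra hne
    rcases Nat.lt_or_ge i j with h | h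
    · exact absurd hij (ne_of_lt (pow_lt_pow_right₀ hμ h))
    · have h' : j < i := lt_of_le_of_ne h (Ne.symm hne)
      exact absurd hij.symm (ne_of_lt (pow_lt_pow_right₀ hμ h'))
  have hcd : ∀ n : ℕ, n ≠ m → iteratedDeriv n φ 0 = 0 := by
    intro n hn
    have h1 : iteratedDeriv n (fun x => φ (μ * x)) 0 = μ ^ n * iteratedDeriv n φ (μ * 0) :=
      congrFun (iteratedDeriv_comp_const_mul hφ.contDiff μ) 0
    have h2 : iteratedDeriv n (fun x => φ (μ * x)) 0 = μ ^ m * iteratedDeriv n φ 0 := by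
      have hfun : (fun x => φ (μ * x)) = fun x => μ ^ m * φ x := funext hfe
      rw [hfun, ← iteratedDerivWithin_univ, ← iteratedDerivWithin_univ]
      exact iteratedDerivWithin_const_mul (Set.mem_univ 0) uniqueDiffOn_univ (μ ^ m)
        hφ.contDiff.contDiffWithinAt
    rw [mul_zero] at h1
    have h3 : μ ^ m * iteratedDeriv n φ 0 = μ ^ n * iteratedDeriv n φ 0 := by
      rw [← h2, h1]
    by_contra hD
    have h4 : (μ : ℂ) ^ m = μ ^ n := mul_right_cancel₀ hD h3
    have h5 : ‖μ‖ ^ m = ‖μ‖ ^ n := by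
      rw [← norm_pow, ← norm_pow, h4]
    exact hn (hpowinj h5).symm
  have ht : ∀ s : ℂ, φ s = (Nat.factorial m : ℂ)⁻¹ * iteratedDeriv m φ 0 * s ^ m := by
    intro s
    have key := Complex.taylorSeries_eq_of_entire' (c := 0) (z := s) hφ
    rw [← key, tsum_eq_single m]
    · simp
    · intro n hn
      simp [hcd n hn]
  intro t
  rw [ht t, ht 1]
  ring

/-- Liouville-type: entire and bounded outside a ball implies constant. -/
lemma aux_liouville {χ : ℂ → ℂ} (hχ : Differentiable ℂ χ) {C R : ℝ}
    (hbd : ∀ w : ℂ, R ≤ ‖w‖ → ‖χ w‖ ≤ C) :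
    ∀ w v : ℂ, χ w = χ v := by
  intro w v
  apply hχ.apply_eq_apply_of_bounded
  have h1 : IsBounded (χ '' Metric.closedBall 0 R) :=
    ((isCompact_closedBall (0 : ℂ) R).image hχ.continuous).isBounded
  have h2 : IsBounded (Metric.closedBall (0 : ℂ) C) := Metric.isBounded_closedBall
  apply (h1.union h2).subset
  rintro x ⟨u, rfl⟩
  rcases le_or_gt (‖u‖) R with h | h
  · exact Or.inl ⟨u, by simpa [Complex.dist_eq] using h, rfl⟩
  · exact Or.inr (by simpa [Complex.dist_eq] using hbd u h.le)

/-- If an entire function `χ` satisfies `χ((z^p)⁻¹) = Φ z` for `z ≠ 0` with `Φ` continuous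
at `0`, then `χ` is constantly `Φ 0`. -/
lemma aux_root_transfer {χ Φ : ℂ → ℂ} (hχ : Differentiable ℂ χ)
    (hΦ : ContinuousAt Φ 0) {p : ℕ} (hp : 0 < p)
    (hrel : ∀ z : ℂ, z ≠ 0 → χ ((z ^ p)⁻¹) = Φ z) :
    ∀ w, χ w = Φ 0 := by
  have hcont : ∀ ε : ℝ, 0 < ε → ∃ δ : ℝ, 0 < δ ∧ ∀ z : ℂ, ‖z‖ ≤ δ →
      ‖Φ z - Φ 0‖ ≤ ε := by
    intro ε hε
    obtain ⟨δ, hδ, h⟩ := Metric.continuousAt_iff.mp hΦ ε hε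
    refine ⟨δ / 2, by positivity, fun z hz => ?_⟩
    have h2 : dist z 0 < δ := by
      rw [Complex.dist_eq, sub_zero]
      linarith
    have := h h2
    rw [Complex.dist_eq] at this
    exact this.le
  have hval : ∀ δ : ℝ, 0 < δ → ∀ w : ℂ, δ⁻¹ ^ p ≤ ‖w‖ →
      ∃ z : ℂ, z ≠ 0 ∧ ‖z‖ ≤ δ ∧ χ w = Φ z := by
    intro δ hδ w hw
    have hRpos : (0 : ℝ) < δ⁻¹ ^ p := pow_pos (inv_pos.mpr hδ) p
    have hw0 : w ≠ 0 := by
      intro h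
      rw [h] at hw
      simp only [norm_zero] at hw
      linarith
    obtain ⟨z, hz⟩ := IsAlgClosed.exists_pow_nat_eq w⁻¹ hp
    have hz0 : z ≠ 0 := by
      intro h
      rw [h, zero_pow hp.ne'] at hz
      exact hw0 (inv_eq_zero.mp hz.symm)
    refine ⟨z, hz0, ?_, ?_⟩
    · by_contra hlt
      push_neg at hlt
      have h1 : δ ^ p < ‖z‖ ^ p := pow_lt_pow_left₀ hlt hδ.le hp.ne'
      have h2 : ‖z‖ ^ p = (‖w‖)⁻¹ := by
        rw [← norm_pow, hz, norm_inv]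
      rw [h2] at h1
      have h3 : (‖w‖)⁻¹ ≤ δ ^ p := by
        rw [inv_pow] at hw
        calc (‖w‖)⁻¹ ≤ ((δ ^ p)⁻¹)⁻¹ := by
              apply inv_anti₀ (by positivity) hw
          _ = δ ^ p := inv_inv _
      linarith
    · rw [← hrel z hz0, hz, inv_inv]
  -- boundedness
  obtain ⟨δ₁, hδ₁, hδ₁'⟩ := hcont 1 one_pos
  have hbd : ∀ w : ℂ, δ₁⁻¹ ^ p ≤ ‖w‖ →
      ‖χ w‖ ≤ ‖Φ 0‖ + 1 := by
    intro w hw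
    obtain ⟨z, hz0, hzδ, hχw⟩ := hval δ₁ hδ₁ w hw
    rw [hχw]
    calc ‖Φ z‖ = ‖Φ 0 + (Φ z - Φ 0)‖ := by ring_nf
      _ ≤ ‖Φ 0‖ + ‖Φ z - Φ 0‖ := norm_add_le _ _
      _ ≤ ‖Φ 0‖ + 1 := by linarith [hδ₁' z hzδ]
  have hconst := aux_liouville hχ hbd
  intro w
  have hle : ∀ ε : ℝ, 0 < ε → ‖χ w - Φ 0‖ ≤ ε := by
    intro ε hε
    obtain ⟨δ, hδ, hδ'⟩ := hcont ε hε
    set z : ℂ := (δ : ℂ) with hzdef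
    have hz0 : z ≠ 0 := by
      simp [hzdef, Complex.ofReal_ne_zero, hδ.ne']
    have hzabs : ‖z‖ ≤ δ := by
      simp [hzdef, abs_of_pos hδ]
    have h1 : χ w = Φ z := by
      rw [hconst w ((z ^ p)⁻¹), hrel z hz0]
    rw [h1]
    exact hδ' z hzabs
  have h0 : ‖χ w - Φ 0‖ ≤ 0 :=
    le_of_forall_pos_le_add (by intro ε hε; simpa using hle ε hε)
  have := le_antisymm h0 (norm_nonneg _)
  rw [← sub_eq_zero]
  exact norm_eq_zero.mp this

/-- Theorem 3.4, case 2: for `G(z₁,z₂) = (μᵖz₁, μz₂)` with `|μ| > 1` and `p ≥ 2`,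
a holomorphic automorphism `F` of `ℂ²` fixing the origin commutes with `G` iff
`F(z₁,z₂) = (az₁ + b·z₂ᵖ, dz₂)` with `ad ≠ 0`. -/
theorem namba_case_2 (μ : ℂ) (hμ : 1 < ‖μ‖)
    (p : ℕ) (hp : 2 ≤ p)
    (F Finv : ℂ × ℂ → ℂ × ℂ)
    (hF : Differentiable ℂ F) (hFinv : Differentiable ℂ Finv)
    (hleft : Function.LeftInverse Finv F)
    (hright : Function.RightInverse Finv F)
    (hF0 : F (0, 0) = (0, 0)) :
    (∀ z₁ z₂ : ℂ, F (μ ^ p * z₁, μ * z₂)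
        = (μ ^ p * (F (z₁, z₂)).1, μ * (F (z₁, z₂)).2)) ↔
      ∃ a b d : ℂ, a * d ≠ 0 ∧
        ∀ z₁ z₂ : ℂ, F (z₁, z₂) = (a * z₁ + b * z₂ ^ p, d * z₂) := by
  constructor
  · intro hcomm
    have hp0 : 0 < p := by omega
    -- homogeneity of the two components
    have homog1 : ∀ t z₁ z₂ : ℂ, (F (t ^ p * z₁, t * z₂)).1 = (F (z₁, z₂)).1 * t ^ p := by
      intro t z₁ z₂
      have hdiff : Differentiable ℂ (fun s : ℂ => (F (s ^ p * z₁, s * z₂)).1) :=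
        (hF.comp (((differentiable_pow p).mul_const z₁).prodMk
          (differentiable_id.mul_const z₂))).fst
      have hfe : ∀ s : ℂ, (F ((μ * s) ^ p * z₁, (μ * s) * z₂)).1
          = μ ^ p * (F (s ^ p * z₁, s * z₂)).1 := by
        intro s
        have h := hcomm (s ^ p * z₁) (s * z₂)
        rw [mul_pow, show μ ^ p * s ^ p * z₁ = μ ^ p * (s ^ p * z₁) from by ring,
          show μ * s * z₂ = μ * (s * z₂) from by ring, h]
      have := aux_homog hdiff hμ p hfe t
      simpa using this
    have homog2 : ∀ t z₁ z₂ : ℂ, (F (t ^ p * z₁, t * z₂)).2 = (F (z₁, z₂)).2 * t := by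
      intro t z₁ z₂
      have hdiff : Differentiable ℂ (fun s : ℂ => (F (s ^ p * z₁, s * z₂)).2) :=
        (hF.comp (((differentiable_pow p).mul_const z₁).prodMk
          (differentiable_id.mul_const z₂))).snd
      have hfe : ∀ s : ℂ, (F ((μ * s) ^ p * z₁, (μ * s) * z₂)).2
          = μ ^ 1 * (F (s ^ p * z₁, s * z₂)).2 := by
        intro s
        have h := hcomm (s ^ p * z₁) (s * z₂)
        rw [mul_pow, show μ ^ p * s ^ p * z₁ = μ ^ p * (s ^ p * z₁) from by ring,
          show μ * s * z₂ = μ * (s * z₂) from by ring, h, pow_one]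
      have := aux_homog hdiff hμ 1 hfe t
      simpa using this
    set a := (F (1, 0)).1 with ha
    set b := (F (0, 1)).1 with hb
    set d := (F (0, 1)).2 with hd
    -- second component vanishes on the first axis
    have gzero : ∀ u : ℂ, (F (u, 0)).2 = 0 := by
      intro u
      have hprim : IsPrimitiveRoot (Complex.exp (2 * Real.pi * Complex.I / p)) p :=
        Complex.isPrimitiveRoot_exp p (by omega)
      set ζ := Complex.exp (2 * Real.pi * Complex.I / p) with hζ
      have hζp : ζ ^ p = 1 := hprim.pow_eq_one
      have hζ1 : ζ ≠ 1 := hprim.ne_one (by omega)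
      have h := homog2 ζ u 0
      rw [mul_zero, hζp, one_mul] at h
      have h2 : (F (u, 0)).2 * (ζ - 1) = 0 := by linear_combination -h
      rcases mul_eq_zero.mp h2 with h3 | h3
      · exact h3
      · exact absurd (sub_eq_zero.mp h3) hζ1
    -- first component on the first axis
    have fax : ∀ u : ℂ, (F (u, 0)).1 = a * u := by
      intro u
      obtain ⟨t, ht⟩ := IsAlgClosed.exists_pow_nat_eq u hp0
      have h := homog1 t 1 0
      rw [mul_one, mul_zero, ht] at h
      rw [h]
    -- slice formulas for z ≠ 0
    have fslice : ∀ u z : ℂ, z ≠ 0 → (F (u, z)).1 = z ^ p * (F (u * (z ^ p)⁻¹, 1)).1 := by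
      intro u z hz
      have hzp : (z : ℂ) ^ p ≠ 0 := pow_ne_zero _ hz
      have h := homog1 z (u * (z ^ p)⁻¹) 1
      rw [mul_one, show z ^ p * (u * (z ^ p)⁻¹) = u from by field_simp] at h
      rw [h]; ring
    have gslice : ∀ u z : ℂ, z ≠ 0 → (F (u, z)).2 = z * (F (u * (z ^ p)⁻¹, 1)).2 := by
      intro u z hz
      have hzp : (z : ℂ) ^ p ≠ 0 := pow_ne_zero _ hz
      have h := homog2 z (u * (z ^ p)⁻¹) 1
      rw [mul_one, show z ^ p * (u * (z ^ p)⁻¹) = u from by field_simp] at h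
      rw [h]; ring
    -- the second component: g(u,z) = d z
    have hg1diff : Differentiable ℂ (fun z : ℂ => (F (1, z)).2) :=
      (hF.comp ((differentiable_const 1).prodMk differentiable_id)).snd
    have hχg : Differentiable ℂ (fun w : ℂ => (F (w, 1)).2) :=
      (hF.comp (differentiable_id.prodMk (differentiable_const 1))).snd
    set Φg := dslope (fun z : ℂ => (F (1, z)).2) 0 with hΦg
    have hrelg : ∀ z : ℂ, z ≠ 0 → (fun w : ℂ => (F (w, 1)).2) ((z ^ p)⁻¹) = Φg z := by
      intro z hz
      have hzp : (z : ℂ) ^ p ≠ 0 := pow_ne_zero _ hz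
      have h1 := gslice 1 z hz
      rw [one_mul] at h1
      have h2 : Φg z = (F (1, z)).2 / z := by
        rw [hΦg, dslope_of_ne _ hz, slope_def_field]
        rw [show (F (1, 0)).2 = 0 from gzero 1, sub_zero, sub_zero]
      rw [h2, h1]
      field_simp
    have hgconst := aux_root_transfer hχg
      (continuousAt_dslope_same.mpr hg1diff.differentiableAt) hp0 hrelg
    have hgw : ∀ w : ℂ, (F (w, 1)).2 = d := by
      intro w
      rw [hd, hgconst w, hgconst 0]
    have hgform : ∀ u z : ℂ, (F (u, z)).2 = d * z := by
      intro u z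
      rcases eq_or_ne z 0 with rfl | hz
      · rw [gzero u, mul_zero]
      · rw [gslice u z hz, hgw (u * (z ^ p)⁻¹)]
        ring
    -- the first component: f(u,z) = a u + b z^p
    have hf1diff : Differentiable ℂ (fun w : ℂ => (F (w, 1)).1) :=
      (hF.comp (differentiable_id.prodMk (differentiable_const 1))).fst
    set ψ := fun w : ℂ => (F (w, 1)).1 - a * w with hψdef
    have hψ : Differentiable ℂ ψ := hf1diff.sub (differentiable_id.const_mul a)
    set χf := dslope ψ 0 with hχf
    have hχfdiff : Differentiable ℂ χf := by
      intro x
      rcases eq_or_ne x 0 with rfl | hx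
      · obtain ⟨q, hq⟩ := hψ.analyticAt 0
        exact hq.has_fpower_series_dslope_fslope.analyticAt.differentiableAt
      · exact (differentiableAt_dslope_of_ne hx).mpr (hψ x)
    set Φf := fun z : ℂ => (F (1, z)).1 - a - b * z ^ p with hΦfdef
    have hΦfcont : Continuous Φf := by
      have hc : Continuous (fun z : ℂ => (F (1, z)).1) :=
        ((hF.comp ((differentiable_const 1).prodMk differentiable_id)).fst).continuous
      exact (hc.sub continuous_const).sub (continuous_const.mul (continuous_pow p))
    have hψ0 : ψ 0 = b := by simp [hψdef, hb]
    have hrelf : ∀ z : ℂ, z ≠ 0 → χf ((z ^ p)⁻¹) = Φf z := by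
      intro z hz
      have hzp : (z : ℂ) ^ p ≠ 0 := pow_ne_zero _ hz
      have hzpi : ((z : ℂ) ^ p)⁻¹ ≠ 0 := inv_ne_zero hzp
      have h1 := fslice 1 z hz
      rw [one_mul] at h1
      have hX : (F ((z ^ p)⁻¹, 1)).1 = (F (1, z)).1 / z ^ p := by
        rw [h1]; field_simp
      rw [hχf, dslope_of_ne _ hzpi, slope_def_field, hψ0, hψdef]
      simp only [hΦfdef]
      rw [hX]
      field_simp
      ring
    have hχf0 : ∀ w, χf w = 0 := by
      have h0 : Φf 0 = 0 := by
        simp [hΦfdef, ha, zero_pow hp0.ne']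
      intro w
      rw [aux_root_transfer hχfdiff hΦfcont.continuousAt hp0 hrelf w, h0]
    have hf1 : ∀ w : ℂ, (F (w, 1)).1 = a * w + b := by
      intro w
      have h := sub_smul_dslope ψ 0 w
      rw [← hχf, hχf0 w, smul_zero] at h
      have h2 : ψ w = ψ 0 := by linear_combination -h
      rw [hψ0] at h2
      have := h2
      simp only [hψdef] at this
      linear_combination this
    have hfform : ∀ u z : ℂ, (F (u, z)).1 = a * u + b * z ^ p := by
      intro u z
      rcases eq_or_ne z 0 with rfl | hz
      · rw [fax u, zero_pow hp0.ne', mul_zero, add_zero]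
      · have hzp : (z : ℂ) ^ p ≠ 0 := pow_ne_zero _ hz
        rw [fslice u z hz, hf1]
        field_simp
    have hFform : ∀ z₁ z₂ : ℂ, F (z₁, z₂) = (a * z₁ + b * z₂ ^ p, d * z₂) := by
      intro z₁ z₂
      exact Prod.ext (hfform z₁ z₂) (hgform z₁ z₂)
    have ha0 : a ≠ 0 := by
      intro h
      have h1 : F (1, 0) = F (0, 0) := by
        rw [hFform 1 0, hFform 0 0, h, zero_pow hp0.ne']
        norm_num
      have := hleft.injective h1
      simp only [Prod.mk.injEq] at this
      exact one_ne_zero this.1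
    have hd0 : d ≠ 0 := by
      obtain ⟨w, hw⟩ := hright.surjective (0, 1)
      intro h
      rw [show w = (w.1, w.2) from rfl, hFform w.1 w.2] at hw
      have := congrArg Prod.snd hw
      simp [h] at this
    exact ⟨a, b, d, mul_ne_zero ha0 hd0, hFform⟩
  · rintro ⟨a, b, d, -, hform⟩ z₁ z₂
    rw [hform, hform]
    simp only [Prod.mk.injEq]
    constructor
    · rw [mul_pow]; ring
    · ring
end

section
/- Let λ, μ ∈ ℂ with |λ| ≥ |μ| > 1 and λ ≠ μᵐ for every positive integer m, and let G : ℂ² → ℂ² be G(z₁,z₂) = (λz₁, μz₂). A holomorphic automorphism F of ℂ² fixing the origin satisfies F∘G = G∘F if and only if there exist a, d ∈ ℂ with ad ≠ 0 such that F(z₁,z₂) = (az₁, dz₂) for all (z₁,z₂) ∈ ℂ². (Theorem 3.4, case 3) -/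
open Metric Set Filter Topology

/-- An entire function's difference quotient `dslope f 0` is entire. -/
private lemma dslope_differentiable {f : ℂ → ℂ} (hf : Differentiable ℂ f) :
    Differentiable ℂ (dslope f 0) := by
  intro z
  rcases eq_or_ne z 0 with rfl | hz
  · obtain ⟨p, hp⟩ := hf.analyticAt 0
    exact hp.has_fpower_series_dslope_fslope.analyticAt.differentiableAt
  · exact (differentiableAt_dslope_of_ne hz).mpr (hf z)

private lemma dslope_key (f : ℂ → ℂ) (z : ℂ) : z * dslope f 0 z = f z - f 0 := by
  have := sub_smul_dslope f 0 z
  simpa [smul_eq_mul] using this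

/-- Linear growth on a sequence of circles implies affine. -/
private lemma slice_affine {f : ℂ → ℂ} (hf : Differentiable ℂ f) {C : ℝ} {R : ℕ → ℝ}
    (hR1 : ∀ n, 1 ≤ R n) (hRtop : Tendsto R atTop atTop)
    (hbound : ∀ n, ∀ z : ℂ, ‖z‖ = R n → ‖f z‖ ≤ C * R n) :
    ∀ z, f z = f 0 + (f 1 - f 0) * z := by
  set g := dslope f 0 with hg
  have hgd : Differentiable ℂ g := dslope_differentiable hf
  have hgb : ∀ w, ‖g w‖ ≤ C + ‖f 0‖ := by
    intro w
    obtain ⟨n, hn⟩ := (hRtop.eventually_ge_atTop (‖w‖ + 1)).exists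
    have hRn : (0:ℝ) < R n := lt_of_lt_of_le one_pos (hR1 n)
    have hw : w ∈ closure (ball (0:ℂ) (R n)) := by
      rw [closure_ball (0:ℂ) (ne_of_gt hRn)]
      simp only [mem_closedBall, dist_zero_right]
      linarith
    refine Complex.norm_le_of_forall_mem_frontier_norm_le isBounded_ball
      hgd.diffContOnCl ?_ hw
    intro z hz
    rw [frontier_ball (0:ℂ) (ne_of_gt hRn)] at hz
    have hzn : ‖z‖ = R n := by simpa [mem_sphere, dist_zero_right] using hz
    have hz0 : z ≠ 0 := by
      intro h; rw [h, norm_zero] at hzn; linarith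
    have h1 : z * g z = f z - f 0 := dslope_key f z
    have h2 : ‖g z‖ = ‖f z - f 0‖ / R n := by
      rw [← h1, norm_mul, hzn]
      field_simp
    rw [h2, div_le_iff₀ hRn]
    calc ‖f z - f 0‖ ≤ ‖f z‖ + ‖f 0‖ := norm_sub_le _ _
      _ ≤ C * R n + ‖f 0‖ := by linarith [hbound n z hzn]
      _ ≤ (C + ‖f 0‖) * R n := by nlinarith [hR1 n, norm_nonneg (f 0)]
  obtain ⟨c, hc⟩ := hgd.exists_const_forall_eq_of_bounded
    (isBounded_iff_forall_norm_le.2 ⟨C + ‖f 0‖, by rintro _ ⟨z, rfl⟩; exact hgb z⟩)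
  intro z
  have h1 : z * c = f z - f 0 := by rw [← hc z]; exact dslope_key f z
  have h2 : (1:ℂ) * c = f 1 - f 0 := by rw [← hc 1]; exact dslope_key f 1
  rw [one_mul] at h2
  rw [← h2]
  linear_combination -h1

/-- A continuous function with `f (μ z) = c f z`, `‖c‖ ≤ 1`, `c ≠ 1`, `‖μ‖ > 1` vanishes. -/
private lemma zero_of_scale {f : ℂ → ℂ} (hf : Continuous f) {μ c : ℂ}
    (hμ : 1 < ‖μ‖) (hc : ‖c‖ ≤ 1) (hc1 : c ≠ 1)
    (heq : ∀ z, f (μ * z) = c * f z) : ∀ z, f z = 0 := by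
  have hμ0 : μ ≠ 0 := by
    intro h; rw [h, norm_zero] at hμ; linarith
  have hf0 : f 0 = 0 := by
    have h := heq 0
    rw [mul_zero] at h
    have h' : (1 - c) * f 0 = 0 := by linear_combination h
    rcases mul_eq_zero.1 h' with h'' | h''
    · exact absurd (by linear_combination -h'' : c = 1) hc1
    · exact h''
  intro z
  have key : ∀ n : ℕ, f z = c ^ n * f (z / μ ^ n) := by
    intro n
    induction n with
    | zero => simp
    | succ n ih =>
      have harg : μ * (z / μ ^ (n + 1)) = z / μ ^ n := by
        field_simp
        ring
      have h := heq (z / μ ^ (n + 1))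
      rw [harg] at h
      rw [ih, h, pow_succ]
      ring
  have h1 : Tendsto (fun n : ℕ => z / μ ^ n) atTop (𝓝 0) := by
    have hinv : ‖μ⁻¹‖ < 1 := by
      rw [norm_inv, inv_lt_one_iff₀]
      right; exact hμ
    have := (tendsto_pow_atTop_nhds_zero_of_norm_lt_one hinv).const_mul z
    simpa [div_eq_mul_inv, inv_pow] using this
  have h2 : Tendsto (fun n : ℕ => ‖f (z / μ ^ n)‖) atTop (𝓝 0) := by
    have := (hf.tendsto 0).comp h1
    rw [hf0] at this
    simpa using this.norm
  have h3 : ∀ n : ℕ, ‖f z‖ ≤ ‖f (z / μ ^ n)‖ := by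
    intro n
    rw [key n, norm_mul, norm_pow]
    have hcn : ‖c‖ ^ n ≤ 1 := pow_le_one₀ (norm_nonneg c) hc
    nlinarith [norm_nonneg (f (z / μ ^ n))]
  have : ‖f z‖ ≤ 0 := ge_of_tendsto h2 (Eventually.of_forall h3)
  exact norm_le_zero_iff.1 this

/-- A continuous function with `f (μ z) = f z`, `‖μ‖ > 1` is constant. -/
private lemma const_of_scale_inv {f : ℂ → ℂ} (hf : Continuous f) {μ : ℂ}
    (hμ : 1 < ‖μ‖) (heq : ∀ z, f (μ * z) = f z) : ∀ z, f z = f 0 := by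
  have hμ0 : μ ≠ 0 := by
    intro h; rw [h, norm_zero] at hμ; linarith
  intro z
  have key : ∀ n : ℕ, f z = f (z / μ ^ n) := by
    intro n
    induction n with
    | zero => simp
    | succ n ih =>
      have harg : μ * (z / μ ^ (n + 1)) = z / μ ^ n := by
        field_simp
        ring
      have h := heq (z / μ ^ (n + 1))
      rw [harg] at h
      rw [ih, ← h]
  have h1 : Tendsto (fun n : ℕ => z / μ ^ n) atTop (𝓝 0) := by
    have hinv : ‖μ⁻¹‖ < 1 := by
      rw [norm_inv, inv_lt_one_iff₀]
      right; exact hμ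
    have := (tendsto_pow_atTop_nhds_zero_of_norm_lt_one hinv).const_mul z
    simpa [div_eq_mul_inv, inv_pow] using this
  have h2 : Tendsto (fun n : ℕ => f (z / μ ^ n)) atTop (𝓝 (f 0)) := (hf.tendsto 0).comp h1
  have h3 : Tendsto (fun _ : ℕ => f z) atTop (𝓝 (f 0)) := by
    simpa [← key] using h2
  exact tendsto_nhds_unique tendsto_const_nhds h3

/-- An entire function with `f (μ z) = μ f z`, `‖μ‖ > 1` is linear. -/
private lemma linear_of_scale {f : ℂ → ℂ} (hf : Differentiable ℂ f) {μ : ℂ}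
    (hμ : 1 < ‖μ‖) (heq : ∀ z, f (μ * z) = μ * f z) : ∀ z, f z = f 1 * z := by
  have hμ0 : μ ≠ 0 := by
    intro h; rw [h, norm_zero] at hμ; linarith
  have hμ1 : μ ≠ 1 := by
    intro h; rw [h, norm_one] at hμ; linarith
  have hf0 : f 0 = 0 := by
    have h := heq 0
    rw [mul_zero] at h
    have h' : (1 - μ) * f 0 = 0 := by linear_combination h
    rcases mul_eq_zero.1 h' with h'' | h''
    · exact absurd (by linear_combination -h'' : μ = 1) hμ1
    · exact h''
  set g := dslope f 0 with hg
  have hgd : Differentiable ℂ g := dslope_differentiable hf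
  have hkey : ∀ z, z * g z = f z := by
    intro z
    rw [dslope_key f z, hf0, sub_zero]
  have hgeq : ∀ z, g (μ * z) = g z := by
    have hEq : EqOn (fun z => g (μ * z)) (fun z => g z) {(0:ℂ)}ᶜ := by
      intro z hz
      have hz0 : z ≠ 0 := hz
      have h1 : (μ * z) * g (μ * z) = μ * (z * g z) := by
        rw [hkey, hkey, heq]
      have hμz : μ * z ≠ 0 := mul_ne_zero hμ0 hz0
      show g (μ * z) = g z
      apply mul_left_cancel₀ hμz
      linear_combination h1
    have hfun := Continuous.ext_on (dense_compl_singleton (0:ℂ))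
      (hgd.continuous.comp (continuous_const.mul continuous_id)) hgd.continuous hEq
    intro z
    exact congrFun hfun z
  have hconst := const_of_scale_inv hgd.continuous hμ hgeq
  intro z
  have h1 : f 1 = g 0 := by rw [← hkey 1, hconst 1, one_mul]
  rw [← hkey z, hconst z, h1]
  ring

/-- An entire function with `f (μ z) = lam * f z` and `lam` non-resonant vanishes. -/
private lemma zero_of_scale_nonres {f : ℂ → ℂ} (hf : Differentiable ℂ f) {μ lam : ℂ}
    (hμ : 1 < ‖μ‖) (hne : ∀ k : ℕ, lam ≠ μ ^ k)
    (heq : ∀ z, f (μ * z) = lam * f z) : ∀ z, f z = 0 := by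
  have hμ0 : μ ≠ 0 := by
    intro h; rw [h, norm_zero] at hμ; linarith
  obtain ⟨K, hK⟩ : ∃ K : ℕ, ‖lam‖ ≤ ‖μ‖ ^ K :=
    ((tendsto_pow_atTop_atTop_of_one_lt hμ).eventually_ge_atTop ‖lam‖).exists
  set g : ℕ → ℂ → ℂ := fun k => (fun h => dslope h 0)^[k] f with hgdef
  have hstep : ∀ k, g (k + 1) = dslope (g k) 0 := by
    intro k
    simp only [hgdef]
    rw [Function.iterate_succ_apply']
  have hQ : ∀ k, Differentiable ℂ (g k) ∧ (∀ z, g k (μ * z) = (lam / μ ^ k) * g k z) ∧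
      g k 0 = 0 := by
    intro k
    induction k with
    | zero =>
      refine ⟨by simpa [hgdef] using hf, fun z => by simpa [hgdef] using heq z, ?_⟩
      have h := heq 0
      rw [mul_zero] at h
      have hlam1 : lam ≠ 1 := by simpa using hne 0
      have h' : (1 - lam) * f 0 = 0 := by linear_combination h
      rcases mul_eq_zero.1 h' with h'' | h''
      · exact absurd (by linear_combination -h'' : lam = 1) hlam1
      · simpa [hgdef] using h''
    | succ k ih =>
      obtain ⟨hd, he, h0⟩ := ih
      have hd' : Differentiable ℂ (g (k + 1)) := by
        rw [hstep]; exact dslope_differentiable hd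
      have hkey : ∀ z, z * g (k + 1) z = g k z := by
        intro z
        rw [hstep, dslope_key (g k) z, h0, sub_zero]
      have he' : ∀ z, g (k + 1) (μ * z) = (lam / μ ^ (k + 1)) * g (k + 1) z := by
        have hEq : EqOn (fun z => g (k + 1) (μ * z))
            (fun z => (lam / μ ^ (k + 1)) * g (k + 1) z) {(0:ℂ)}ᶜ := by
          intro z hz
          have hz0 : z ≠ 0 := hz
          have h1 : (μ * z) * g (k + 1) (μ * z) = (lam / μ ^ k) * (z * g (k + 1) z) := by
            rw [hkey, hkey, he]
          have hμz : μ * z ≠ 0 := mul_ne_zero hμ0 hz0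
          have hμk1 : (μ:ℂ) ^ (k + 1) ≠ 0 := pow_ne_zero _ hμ0
          show g (k + 1) (μ * z) = lam / μ ^ (k + 1) * g (k + 1) z
          apply mul_left_cancel₀ hμz
          rw [h1]
          field_simp
          ring
        have hfun := Continuous.ext_on (dense_compl_singleton (0:ℂ))
          (hd'.continuous.comp (continuous_const.mul continuous_id))
          (continuous_const.mul hd'.continuous) hEq
        intro z
        exact congrFun hfun z
      have h0' : g (k + 1) 0 = 0 := by
        have h := he' 0
        rw [mul_zero] at h
        have hlamne : lam / μ ^ (k + 1) ≠ 1 := by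
          intro hcon
          apply hne (k + 1)
          field_simp at hcon
          exact hcon
        have h' : (1 - lam / μ ^ (k + 1)) * g (k + 1) 0 = 0 := by linear_combination h
        rcases mul_eq_zero.1 h' with h'' | h''
        · exact absurd (by linear_combination -h'' : lam / μ ^ (k + 1) = 1) hlamne
        · exact h''
      exact ⟨hd', he', h0'⟩
  have hKzero : ∀ z, g K z = 0 := by
    refine zero_of_scale (hQ K).1.continuous hμ ?_ ?_ (hQ K).2.1
    · rw [norm_div, norm_pow, div_le_one (by positivity)]
      exact hK
    · intro hcon
      apply hne K
      field_simp at hcon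
      exact hcon
  have hdown : ∀ k, (∀ z, g k z = 0) → ∀ z, f z = 0 := by
    intro k
    induction k with
    | zero => intro h z; simpa [hgdef] using h z
    | succ k ih =>
      intro h
      apply ih
      intro w
      have hkeyw : w * g (k + 1) w = g k w := by
        rw [hstep, dslope_key (g k) w, (hQ k).2.2, sub_zero]
      rw [← hkeyw, h w, mul_zero]
  exact hdown K hKzero

/-- Theorem 3.4, case 3: for `G(z₁,z₂) = (λz₁, μz₂)` with `|λ| ≥ |μ| > 1` and
`λ ≠ μᵐ` for every positive integer `m`, a holomorphic automorphism `F` of `ℂ²`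
fixing the origin commutes with `G` iff `F(z₁,z₂) = (az₁, dz₂)` with `ad ≠ 0`. -/
theorem namba_case_3 (lam μ : ℂ)
    (hμ : 1 < ‖μ‖) (hlamμ : ‖μ‖ ≤ ‖lam‖)
    (hne : ∀ m : ℕ, 0 < m → lam ≠ μ ^ m)
    (F Finv : ℂ × ℂ → ℂ × ℂ)
    (hF : Differentiable ℂ F) (hFinv : Differentiable ℂ Finv)
    (hleft : Function.LeftInverse Finv F)
    (hright : Function.RightInverse Finv F)
    (hF0 : F (0, 0) = (0, 0)) :
    (∀ z₁ z₂ : ℂ, F (lam * z₁, μ * z₂)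
        = (lam * (F (z₁, z₂)).1, μ * (F (z₁, z₂)).2)) ↔
      ∃ a d : ℂ, a * d ≠ 0 ∧
        ∀ z₁ z₂ : ℂ, F (z₁, z₂) = (a * z₁, d * z₂) := by
  have hμ' : 1 < ‖μ‖ := hμ
  have hlam' : 1 < ‖lam‖ := lt_of_lt_of_le hμ hlamμ
  have hlamμ' : ‖μ‖ ≤ ‖lam‖ := hlamμ
  have hμ0 : μ ≠ 0 := by intro h; rw [h, norm_zero] at hμ'; linarith
  have hlam0 : lam ≠ 0 := by intro h; rw [h, norm_zero] at hlam'; linarith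
  constructor
  · intro hcomm
    have hF₁ : Differentiable ℂ (fun p : ℂ × ℂ => (F p).1) := hF.fst
    have hF₂ : Differentiable ℂ (fun p : ℂ × ℂ => (F p).2) := hF.snd
    have hc1 : ∀ z₁ z₂ : ℂ, (F (lam * z₁, μ * z₂)).1 = lam * (F (z₁, z₂)).1 := fun z₁ z₂ =>
      congrArg Prod.fst (hcomm z₁ z₂)
    have hc2 : ∀ z₁ z₂ : ℂ, (F (lam * z₁, μ * z₂)).2 = μ * (F (z₁, z₂)).2 := fun z₁ z₂ =>
      congrArg Prod.snd (hcomm z₁ z₂)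
    have hn1 : ∀ n : ℕ, ∀ z₁ z₂ : ℂ,
        (F (lam ^ n * z₁, μ ^ n * z₂)).1 = lam ^ n * (F (z₁, z₂)).1 := by
      intro n
      induction n with
      | zero => intro z₁ z₂; simp
      | succ n ih =>
        intro z₁ z₂
        have h1 : lam ^ (n + 1) * z₁ = lam * (lam ^ n * z₁) := by ring
        have h2 : μ ^ (n + 1) * z₂ = μ * (μ ^ n * z₂) := by ring
        rw [h1, h2, hc1, ih]
        ring
    have hn2 : ∀ n : ℕ, ∀ z₁ z₂ : ℂ,
        (F (lam ^ n * z₁, μ ^ n * z₂)).2 = μ ^ n * (F (z₁, z₂)).2 := by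
      intro n
      induction n with
      | zero => intro z₁ z₂; simp
      | succ n ih =>
        intro z₁ z₂
        have h1 : lam ^ (n + 1) * z₁ = lam * (lam ^ n * z₁) := by ring
        have h2 : μ ^ (n + 1) * z₂ = μ * (μ ^ n * z₂) := by ring
        rw [h1, h2, hc2, ih]
        ring
    have hRtop : Tendsto (fun n : ℕ => ‖lam‖ ^ n) atTop atTop :=
      tendsto_pow_atTop_atTop_of_one_lt hlam'
    have hR1 : ∀ n : ℕ, 1 ≤ ‖lam‖ ^ n := fun n => one_le_pow₀ (le_of_lt hlam')
    -- every horizontal slice of each component is affine in `z₁`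
    have haff : ∀ w : ℂ,
        (∀ z : ℂ, (F (z, w)).1 = (F (0, w)).1 + ((F (1, w)).1 - (F (0, w)).1) * z) ∧
        (∀ z : ℂ, (F (z, w)).2 = (F (0, w)).2 + ((F (1, w)).2 - (F (0, w)).2) * z) := by
      intro w
      have hKc : IsCompact (closedBall (0:ℂ) 1 ×ˢ closedBall (0:ℂ) ‖w‖) :=
        (isCompact_closedBall _ _).prod (isCompact_closedBall _ _)
      obtain ⟨M₁, hM₁⟩ := hKc.exists_bound_of_continuousOn hF₁.continuous.continuousOn
      obtain ⟨M₂, hM₂⟩ := hKc.exists_bound_of_continuousOn hF₂.continuous.continuousOn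
      have hmem : ∀ n : ℕ, ∀ z : ℂ, ‖z‖ = ‖lam‖ ^ n →
          (z / lam ^ n, w / μ ^ n) ∈ closedBall (0:ℂ) 1 ×ˢ closedBall (0:ℂ) ‖w‖ := by
        intro n z hz
        constructor
        · simp only [mem_closedBall, dist_zero_right, norm_div, norm_pow, hz]
          rw [div_self (by positivity)]
        · simp only [mem_closedBall, dist_zero_right, norm_div, norm_pow]
          exact div_le_self (norm_nonneg w) (one_le_pow₀ hμ'.le)
      have hsplit : ∀ n : ℕ, ∀ z : ℂ,
          (lam ^ n * (z / lam ^ n), μ ^ n * (w / μ ^ n)) = (z, w) := by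
        intro n z
        have h1 : lam ^ n ≠ 0 := pow_ne_zero _ hlam0
        have h2 : μ ^ n ≠ 0 := pow_ne_zero _ hμ0
        simp only [Prod.mk.injEq]
        constructor <;> field_simp
      constructor
      · refine slice_affine (f := fun z => (F (z, w)).1)
          (hF₁.comp (differentiable_id.prodMk (differentiable_const w)))
          (C := max M₁ 0) hR1 hRtop ?_
        intro n z hz
        have h := hn1 n (z / lam ^ n) (w / μ ^ n)
        rw [hsplit n z] at h
        show ‖(F (z, w)).1‖ ≤ max M₁ 0 * ‖lam‖ ^ n
        rw [h, norm_mul, norm_pow]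
        have hb := hM₁ _ (hmem n z hz)
        have hb' : ‖(F (z / lam ^ n, w / μ ^ n)).1‖ ≤ max M₁ 0 := le_trans hb (le_max_left _ _)
        calc ‖lam‖ ^ n * ‖(F (z / lam ^ n, w / μ ^ n)).1‖ ≤ ‖lam‖ ^ n * max M₁ 0 :=
              mul_le_mul_of_nonneg_left hb' (by positivity)
          _ = max M₁ 0 * ‖lam‖ ^ n := mul_comm _ _
      · refine slice_affine (f := fun z => (F (z, w)).2)
          (hF₂.comp (differentiable_id.prodMk (differentiable_const w)))
          (C := max M₂ 0) hR1 hRtop ?_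
        intro n z hz
        have h := hn2 n (z / lam ^ n) (w / μ ^ n)
        rw [hsplit n z] at h
        show ‖(F (z, w)).2‖ ≤ max M₂ 0 * ‖lam‖ ^ n
        rw [h, norm_mul, norm_pow]
        have hb := hM₂ _ (hmem n z hz)
        have hb' : ‖(F (z / lam ^ n, w / μ ^ n)).2‖ ≤ max M₂ 0 := le_trans hb (le_max_left _ _)
        calc ‖μ‖ ^ n * ‖(F (z / lam ^ n, w / μ ^ n)).2‖ ≤ ‖μ‖ ^ n * max M₂ 0 :=
              mul_le_mul_of_nonneg_left hb' (by positivity)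
          _ ≤ ‖lam‖ ^ n * max M₂ 0 := by
              apply mul_le_mul_of_nonneg_right _ (le_max_right _ _)
              exact pow_le_pow_left₀ (norm_nonneg μ) hlamμ' n
          _ = max M₂ 0 * ‖lam‖ ^ n := mul_comm _ _
    have haff1 : ∀ w z : ℂ, (F (z, w)).1 = (F (0, w)).1 + ((F (1, w)).1 - (F (0, w)).1) * z :=
      fun w => (haff w).1
    have haff2 : ∀ w z : ℂ, (F (z, w)).2 = (F (0, w)).2 + ((F (1, w)).2 - (F (0, w)).2) * z :=
      fun w => (haff w).2
    -- the four coefficient functions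
    have hne' : ∀ k : ℕ, lam ≠ μ ^ k := by
      intro k
      cases k with
      | zero =>
        intro h
        rw [pow_zero] at h
        rw [h, norm_one] at hlam'
        linarith
      | succ n => exact hne (n + 1) (Nat.succ_pos n)
    -- α ≡ 0
    have hαzero : ∀ w : ℂ, (F ((0:ℂ), w)).1 = 0 := by
      refine zero_of_scale_nonres (f := fun w => (F ((0:ℂ), w)).1)
        (hF₁.comp ((differentiable_const _).prodMk differentiable_id)) hμ' hne' ?_
      intro w
      have h := hc1 0 w
      rwa [mul_zero] at h
    -- β constant
    have hβconst : ∀ w : ℂ, (F ((1:ℂ), w)).1 - (F ((0:ℂ), w)).1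
        = (F ((1:ℂ), (0:ℂ))).1 - (F ((0:ℂ), (0:ℂ))).1 := by
      refine const_of_scale_inv (f := fun w => (F ((1:ℂ), w)).1 - (F ((0:ℂ), w)).1)
        ((hF₁.comp ((differentiable_const _).prodMk differentiable_id)).sub
          (hF₁.comp ((differentiable_const _).prodMk differentiable_id))).continuous hμ' ?_
      intro w
      have h1 := hc1 1 w
      have h2 := hc1 0 w
      rw [mul_zero] at h2
      have h3 := haff1 (μ * w) (lam * 1)
      have h4 : lam * ((F ((1:ℂ), μ * w)).1 - (F ((0:ℂ), μ * w)).1)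
          = lam * ((F ((1:ℂ), w)).1 - (F ((0:ℂ), w)).1) := by
        linear_combination h1 - h3 - h2
      exact mul_left_cancel₀ hlam0 h4
    -- γ linear
    have hγlin : ∀ w : ℂ, (F ((0:ℂ), w)).2 = (F ((0:ℂ), (1:ℂ))).2 * w := by
      refine linear_of_scale (f := fun w => (F ((0:ℂ), w)).2)
        (hF₂.comp ((differentiable_const _).prodMk differentiable_id)) hμ' ?_
      intro w
      have h := hc2 0 w
      rwa [mul_zero] at h
    -- δ ≡ 0
    have hδzero : ∀ w : ℂ, (F ((1:ℂ), w)).2 - (F ((0:ℂ), w)).2 = 0 := by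
      refine zero_of_scale (f := fun w => (F ((1:ℂ), w)).2 - (F ((0:ℂ), w)).2)
        ((hF₂.comp ((differentiable_const _).prodMk differentiable_id)).sub
          (hF₂.comp ((differentiable_const _).prodMk differentiable_id))).continuous hμ'
        (c := μ / lam) ?_ ?_ ?_
      · rw [norm_div, div_le_one (by positivity)]
        exact hlamμ'
      · intro hcon
        apply hne 1 one_pos
        rw [pow_one]
        field_simp at hcon
        exact hcon.symm
      · intro w
        have h1 := hc2 1 w
        have h2 := hc2 0 w
        rw [mul_zero] at h2
        have h3 := haff2 (μ * w) (lam * 1)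
        have h4 : lam * ((F ((1:ℂ), μ * w)).2 - (F ((0:ℂ), μ * w)).2)
            = μ * ((F ((1:ℂ), w)).2 - (F ((0:ℂ), w)).2) := by
          linear_combination h1 - h3 - h2
        have hgoal : lam * ((F ((1:ℂ), μ * w)).2 - (F ((0:ℂ), μ * w)).2)
            = lam * (μ / lam * ((F ((1:ℂ), w)).2 - (F ((0:ℂ), w)).2)) := by
          rw [h4]
          field_simp
        exact mul_left_cancel₀ hlam0 hgoal
    -- assemble
    set a : ℂ := (F ((1:ℂ), (0:ℂ))).1 - (F ((0:ℂ), (0:ℂ))).1 with ha_def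
    set d : ℂ := (F ((0:ℂ), (1:ℂ))).2 with hd_def
    have hfun : ∀ z₁ z₂ : ℂ, F (z₁, z₂) = (a * z₁, d * z₂) := by
      intro z₁ z₂
      rw [Prod.ext_iff]
      constructor
      · rw [haff1 z₂ z₁, hβconst z₂, hαzero z₂]
        ring
      · rw [haff2 z₂ z₁, hδzero z₂, hγlin z₂]
        ring
    have ha : a ≠ 0 := by
      intro ha0
      have h1 : F (1, 0) = F (0, 0) := by
        rw [hfun 1 0, hF0, ha0]
        simp
      have h2 := hleft.injective h1
      have : (1:ℂ) = 0 := congrArg Prod.fst h2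
      exact one_ne_zero this
    have hd : d ≠ 0 := by
      intro hd0
      have h1 : F (0, 1) = F (0, 0) := by
        rw [hfun 0 1, hF0, hd0]
        simp
      have h2 := hleft.injective h1
      have : (1:ℂ) = 0 := congrArg Prod.snd h2
      exact one_ne_zero this
    exact ⟨a, d, mul_ne_zero ha hd, hfun⟩
  · rintro ⟨a, d, had, h⟩ z₁ z₂
    rw [h, h]
    simp only [Prod.mk.injEq]
    constructor <;> ring
end

section
/- Let λ, τ ∈ ℂ with |λ| > 1 and τ ≠ 0, and let G : ℂ² → ℂ² be G(z₁,z₂) = (λz₁ + τz₂, λz₂). A holomorphic automorphism F of ℂ² fixing the origin satisfies F∘G = G∘F if and only if there exist a, b ∈ ℂ with a ≠ 0 such that F(z₁,z₂) = (az₁ + bz₂, az₂) for all (z₁,z₂) ∈ ℂ². (Theorem 3.4, case 4) -/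
open Metric Set Filter Topology

/-- Quadratic Schwarz lemma: an entire map vanishing to second order at 0,
bounded by `M` on the unit disk, satisfies `‖g t‖ ≤ (M+1)‖t‖²` there. -/
lemma quadSchwarz {E : Type*} [NormedAddCommGroup E] [NormedSpace ℂ E] (hE : CompleteSpace E) {g : ℂ → E} {M : ℝ}
    (hg : Differentiable ℂ g) (h0 : g 0 = 0) (hd : deriv g 0 = 0)
    (hM : ∀ t : ℂ, ‖t‖ < 1 → ‖g t‖ < M) {t : ℂ} (ht : ‖t‖ < 1) :
    ‖g t‖ ≤ (M + 1) * ‖t‖ ^ 2 := by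
  have hM0 : 0 < M := lt_of_le_of_lt (norm_nonneg (g 0)) (hM 0 (by simp))
  have hgo : DifferentiableOn ℂ g (ball (0:ℂ) 1) := hg.differentiableOn
  have maps1 : MapsTo g (ball (0:ℂ) 1) (ball (g 0) M) := by
    intro x hx
    rw [mem_ball, h0, dist_zero_right]
    exact hM x (by simpa [mem_ball, dist_zero_right] using hx)
  have sA : ∀ x ∈ ball (0:ℂ) 1, ‖g x‖ ≤ M * ‖x‖ := by
    intro x hx
    have := Complex.dist_le_div_mul_dist_of_mapsTo_ball hgo (maps1.mono_right ball_subset_closedBall) hx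
    simpa [h0, dist_zero_right] using this
  set g₁ : ℂ → E := dslope g 0 with hg₁
  have hg₁d : DifferentiableOn ℂ g₁ (ball (0:ℂ) 1) := by
    haveI : CompleteSpace E := hE
    exact (Complex.differentiableOn_dslope (ball_mem_nhds _ one_pos)).mpr hgo
  have hg₁0 : g₁ 0 = 0 := by rw [hg₁, dslope_same, hd]
  have hg₁b : ∀ x ∈ ball (0:ℂ) 1, ‖g₁ x‖ ≤ M := by
    intro x hx
    rcases eq_or_ne x 0 with rfl | hx0
    · rw [hg₁0, norm_zero]; exact hM0.le
    · rw [hg₁, dslope_of_ne _ hx0, slope_def_module, h0, sub_zero, sub_zero, norm_smul,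
        norm_inv]
      have hx0' : (0:ℝ) < ‖x‖ := norm_pos_iff.mpr hx0
      calc ‖x‖⁻¹ * ‖g x‖ ≤ ‖x‖⁻¹ * (M * ‖x‖) := by
            gcongr; exact sA x hx
        _ = M := by
          rw [mul_comm M ‖x‖, ← mul_assoc, inv_mul_cancel₀ hx0'.ne', one_mul]
  have maps2 : MapsTo g₁ (ball (0:ℂ) 1) (ball (g₁ 0) (M + 1)) := by
    intro x hx
    rw [mem_ball, hg₁0, dist_zero_right]
    exact lt_of_le_of_lt (hg₁b x hx) (by linarith)
  have sB := Complex.dist_le_div_mul_dist_of_mapsTo_ball hg₁d (maps2.mono_right ball_subset_closedBall)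
    (by simpa [mem_ball, dist_zero_right] using ht)
  rw [hg₁0, dist_zero_right, dist_zero_right, div_one] at sB
  rcases eq_or_ne t 0 with rfl | ht0
  · simp only [h0, norm_zero]; positivity
  · have : g t = t • g₁ t := by
      rw [hg₁, dslope_of_ne _ ht0, slope_def_module, h0, sub_zero, sub_zero, smul_smul,
        mul_inv_cancel₀ ht0, one_smul]
    rw [this, norm_smul]
    calc ‖t‖ * ‖g₁ t‖ ≤ ‖t‖ * ((M + 1) * ‖t‖) := by gcongr
      _ = (M + 1) * ‖t‖ ^ 2 := by ring

/-- Polynomial-times-geometric decay. -/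
lemma polyGeom {K r : ℝ} (hK : 0 ≤ K) (hr : 1 < r) (m : ℕ) :
    Tendsto (fun n : ℕ => (1 + (n:ℝ) * K) ^ m * (r⁻¹) ^ n) atTop (𝓝 0) := by
  have hr0 : (0:ℝ) < r := lt_trans one_pos hr
  have t1 : Tendsto (fun n : ℕ => (n:ℝ) ^ m / r ^ n) atTop (𝓝 0) :=
    tendsto_pow_const_div_const_pow_of_one_lt m hr
  have t2 : Tendsto (fun n : ℕ => ((n:ℝ) + 1) ^ m / r ^ n) atTop (𝓝 0) := by
    have := (t1.comp (tendsto_add_atTop_nat 1)).mul_const r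
    rw [zero_mul] at this
    refine this.congr fun n => ?_
    have : ((n + 1 : ℕ) : ℝ) = (n:ℝ) + 1 := by push_cast; ring
    simp only [Function.comp_def, this, pow_succ]
    rw [div_mul_eq_div_div]
    field_simp
  have t3 : Tendsto (fun n : ℕ => (1 + K) ^ m * (((n:ℝ) + 1) ^ m / r ^ n)) atTop (𝓝 0) := by
    simpa using t2.const_mul ((1 + K) ^ m)
  refine squeeze_zero (fun n => by positivity) (fun n => ?_) t3
  have hb : (1 + (n:ℝ) * K) ^ m ≤ ((1 + K) * ((n:ℝ) + 1)) ^ m := by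
    apply pow_le_pow_left₀ (by positivity)
    have hn : (0:ℝ) ≤ (n:ℝ) := Nat.cast_nonneg n
    nlinarith
  calc (1 + (n:ℝ) * K) ^ m * (r⁻¹) ^ n ≤ ((1 + K) * ((n:ℝ) + 1)) ^ m * (r⁻¹) ^ n :=
        mul_le_mul_of_nonneg_right hb (by positivity)
    _ = (1 + K) ^ m * (((n:ℝ) + 1) ^ m / r ^ n) := by
        rw [mul_pow, inv_pow, div_eq_mul_inv]
        ring

set_option maxHeartbeats 2000000 in
/-- Theorem 3.4, case 4: for `G(z₁,z₂) = (λz₁ + τz₂, λz₂)` with `|λ| > 1` and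
`τ ≠ 0`, a holomorphic automorphism `F` of `ℂ²` fixing the origin commutes with
`G` iff `F(z₁,z₂) = (az₁ + bz₂, az₂)` with `a ≠ 0`. -/
theorem namba_case_4 (lam τ : ℂ) (hlam : 1 < ‖lam‖) (hτ : τ ≠ 0)
    (F Finv : ℂ × ℂ → ℂ × ℂ)
    (hF : Differentiable ℂ F) (hFinv : Differentiable ℂ Finv)
    (hleft : Function.LeftInverse Finv F)
    (hright : Function.RightInverse Finv F)
    (hF0 : F (0, 0) = (0, 0)) :
    (∀ z₁ z₂ : ℂ, F (lam * z₁ + τ * z₂, lam * z₂)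
        = (lam * (F (z₁, z₂)).1 + τ * (F (z₁, z₂)).2, lam * (F (z₁, z₂)).2)) ↔
      ∃ a b : ℂ, a ≠ 0 ∧
        ∀ z₁ z₂ : ℂ, F (z₁, z₂) = (a * z₁ + b * z₂, a * z₂) := by
  have hr : (1:ℝ) < ‖lam‖ := hlam
  have hlam0 : lam ≠ 0 := by
    intro h; rw [h] at hr; simp at hr; linarith
  constructor
  · intro hcomm
    -- the linear map G
    set Gop : (ℂ × ℂ) →L[ℂ] (ℂ × ℂ) :=
      ContinuousLinearMap.prod
        (lam • ContinuousLinearMap.fst ℂ ℂ ℂ + τ • ContinuousLinearMap.snd ℂ ℂ ℂ)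
        (lam • ContinuousLinearMap.snd ℂ ℂ ℂ) with hGLdef
    have hGL : ∀ p : ℂ × ℂ, Gop p = (lam * p.1 + τ * p.2, lam * p.2) := by
      intro p
      simp [hGLdef, ContinuousLinearMap.prod_apply, smul_eq_mul]
    have hF00 : F 0 = 0 := hF0
    -- A = derivative of F at 0
    set A : (ℂ × ℂ) →L[ℂ] (ℂ × ℂ) := fderiv ℂ F 0 with hAdef
    have hA0 : HasFDerivAt F A 0 := (hF 0).hasFDerivAt
    -- A commutes with Gop
    have hcomm' : (fun p => F (Gop p)) = fun p => Gop (F p) := by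
      funext p
      rw [hGL p, hGL (F p)]
      exact hcomm p.1 p.2
    have hAG : A.comp Gop = Gop.comp A := by
      have hGL0 : Gop (0 : ℂ × ℂ) = 0 := map_zero Gop
      have h1 : HasFDerivAt (fun p => F (Gop p)) (A.comp Gop) 0 := by
        have := (hGL0.symm ▸ hA0 : HasFDerivAt F A (Gop 0)).comp 0 Gop.hasFDerivAt
        exact this
      have h2 : HasFDerivAt (fun p => Gop (F p)) (Gop.comp A) 0 := by
        have := (hF00.symm ▸ Gop.hasFDerivAt (x := (0:ℂ × ℂ)) :
          HasFDerivAt Gop Gop (F 0)).comp 0 hA0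
        exact this
      rw [hcomm'] at h1
      exact h1.unique h2
    have hAGv : ∀ v : ℂ × ℂ, A (Gop v) = Gop (A v) := by
      intro v
      have := DFunLike.congr_fun hAG v
      simpa using this
    set a : ℂ := (A (1, 0)).1 with ha_def
    set b : ℂ := (A (0, 1)).1 with hb_def
    -- second component of A (1,0) vanishes
    have hc0 : (A (1, 0)).2 = 0 := by
      have h := hAGv (1, 0)
      rw [hGL, hGL] at h
      simp only [mul_one, mul_zero, add_zero] at h
      have h10 : ((lam, 0) : ℂ × ℂ) = lam • (1, 0) := by simp [Prod.ext_iff]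
      rw [h10, map_smul] at h
      have h1 := congrArg Prod.fst h
      simp only [Prod.smul_fst, smul_eq_mul] at h1
      -- lam * (A (1,0)).1 = lam * (A (1,0)).1 + τ * (A (1,0)).2
      have : τ * (A (1, 0)).2 = 0 := by linear_combination -h1
      exact (mul_eq_zero.mp this).resolve_left hτ
    have hd_eq : (A (0, 1)).2 = a := by
      have h := hAGv (0, 1)
      rw [hGL, hGL] at h
      simp only [mul_one, mul_zero, zero_add, add_zero] at h
      have h01 : ((τ, lam) : ℂ × ℂ) = τ • (1, 0) + lam • (0, 1) := by
        simp [Prod.ext_iff]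
      rw [h01, map_add, map_smul, map_smul] at h
      have h1 := congrArg Prod.fst h
      simp only [Prod.fst_add, Prod.smul_fst, smul_eq_mul] at h1
      -- τ * a + lam * b = lam * b + τ * (A (0,1)).2
      have : τ * a = τ * (A (0, 1)).2 := by linear_combination h1
      have := mul_left_cancel₀ hτ this
      exact this.symm
    -- formula for A
    have hA : ∀ p : ℂ × ℂ, A p = (a * p.1 + b * p.2, a * p.2) := by
      intro p
      have hp : p = p.1 • ((1:ℂ), (0:ℂ)) + p.2 • ((0:ℂ), (1:ℂ)) := by
        simp [Prod.ext_iff]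
      rw [hp, map_add, map_smul, map_smul]
      simp only [Prod.ext_iff, Prod.fst_add, Prod.snd_add, Prod.smul_fst, Prod.smul_snd,
        smul_eq_mul, hc0, hd_eq]
      constructor <;> ring
    -- a ≠ 0
    have hFinv0 : Finv 0 = 0 := by
      have := hleft (0, 0)
      rw [hF0] at this
      exact this
    have ha : a ≠ 0 := by
      set B : (ℂ × ℂ) →L[ℂ] (ℂ × ℂ) := fderiv ℂ Finv 0 with hBdef
      have hB0 : HasFDerivAt Finv B 0 := (hFinv 0).hasFDerivAt
      have h1 : HasFDerivAt (fun p => F (Finv p)) (A.comp B) 0 := by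
        have := (hFinv0.symm ▸ hA0 : HasFDerivAt F A (Finv 0)).comp 0 hB0
        exact this
      have hid : (fun p => F (Finv p)) = id := funext fun p => hright p
      rw [hid] at h1
      have h2 : HasFDerivAt (id : ℂ × ℂ → ℂ × ℂ) (ContinuousLinearMap.id ℂ (ℂ × ℂ)) 0 :=
        hasFDerivAt_id 0
      have hAB : A.comp B = ContinuousLinearMap.id ℂ (ℂ × ℂ) := h1.unique h2
      have := DFunLike.congr_fun hAB ((0:ℂ), (1:ℂ))
      simp only [ContinuousLinearMap.coe_comp', Function.comp_apply,
        ContinuousLinearMap.coe_id', id_eq] at this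
      rw [hA (B (0, 1))] at this
      have h2nd := congrArg Prod.snd this
      simp only at h2nd
      intro ha0
      rw [ha0, zero_mul] at h2nd
      exact one_ne_zero h2nd.symm
    -- the error term h
    set h : ℂ × ℂ → ℂ × ℂ := fun p => F p - A p with hh_def
    have hh_diff : Differentiable ℂ h := hF.sub A.differentiable
    have hh0 : h 0 = 0 := by simp [hh_def, hF00]
    have hhD : HasFDerivAt h (0 : (ℂ × ℂ) →L[ℂ] (ℂ × ℂ)) 0 := by
      have := hA0.sub A.hasFDerivAt
      rw [sub_self] at this
      exact this
    -- h semi-conjugates G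
    have hhG : ∀ w : ℂ × ℂ,
        h (lam * w.1 + τ * w.2, lam * w.2)
          = (lam * (h w).1 + τ * (h w).2, lam * (h w).2) := by
      intro w
      have e1 := hcomm w.1 w.2
      have e2 := hA (lam * w.1 + τ * w.2, lam * w.2)
      have e3 := hA w
      simp only [hh_def, Prod.ext_iff, Prod.fst_sub, Prod.snd_sub]
      rw [e1, e2]
      constructor <;> · simp [e3]; ring
    -- second order bound for h near 0
    obtain ⟨C, hC⟩ := (isCompact_closedBall (0 : ℂ × ℂ) 1).exists_bound_of_continuousOn
      hh_diff.continuous.continuousOn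
    set M : ℝ := C + 1 with hM_def
    have hM : ∀ p : ℂ × ℂ, ‖p‖ ≤ 1 → ‖h p‖ < M := by
      intro p hp
      have := hC p (by simpa [mem_closedBall, dist_zero_right] using hp)
      linarith
    have hM0 : 0 < M := lt_of_le_of_lt (norm_nonneg (h 0)) (hM 0 (by simp))
    have hquad : ∀ w : ℂ × ℂ, ‖w‖ < 1 → ‖h w‖ ≤ (M + 1) * ‖w‖ ^ 2 := by
      intro w hw
      rcases eq_or_ne w 0 with rfl | hw0
      · simp only [hh0, norm_zero]; positivity
      · have hwn : (0:ℝ) < ‖w‖ := norm_pos_iff.mpr hw0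
        set u : ℂ × ℂ := ((‖w‖⁻¹ : ℝ) : ℂ) • w with hu_def
        have hu_norm : ‖u‖ = 1 := by
          rw [hu_def, norm_smul, Complex.norm_real, Real.norm_eq_abs,
            abs_of_nonneg (by positivity), inv_mul_cancel₀ hwn.ne']
        set g : ℂ → ℂ × ℂ := fun t => h (t • u) with hg_def
        have hg_diff : Differentiable ℂ g :=
          hh_diff.comp (differentiable_id.smul_const u)
        have hg0 : g 0 = 0 := by simp [hg_def, hh0]
        have hgd : deriv g 0 = 0 := by
          have hdu : HasDerivAt (fun t : ℂ => t • u) u 0 := by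
            simpa using (hasDerivAt_id (0:ℂ)).smul_const u
          have : HasDerivAt g ((0 : (ℂ × ℂ) →L[ℂ] (ℂ × ℂ)) u) 0 := by
            have h0u : (0:ℂ) • u = 0 := zero_smul _ _
            exact (h0u ▸ hhD : HasFDerivAt h 0 ((0:ℂ) • u)).comp_hasDerivAt 0 hdu
          simpa using this.deriv
        have hgM : ∀ t : ℂ, ‖t‖ < 1 → ‖g t‖ < M := by
          intro t htn
          apply hM
          rw [norm_smul, hu_norm, mul_one]
          exact htn.le
        have hkey := quadSchwarz (by infer_instance) hg_diff hg0 hgd hgM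
          (t := ((‖w‖ : ℝ) : ℂ)) (by
            rw [Complex.norm_real, Real.norm_eq_abs, abs_of_nonneg hwn.le]; exact hw)
        have hws : ((‖w‖ : ℝ) : ℂ) • u = w := by
          rw [hu_def, smul_smul, ← Complex.ofReal_mul, mul_inv_cancel₀ hwn.ne']
          simp
        rw [hg_def] at hkey
        simp only [hws] at hkey
        rwa [Complex.norm_real, Real.norm_eq_abs, abs_of_nonneg hwn.le] at hkey
    -- now fix z and iterate
    refine ⟨a, b, ha, fun z₁ z₂ => ?_⟩
    set z : ℂ × ℂ := (z₁, z₂) with hz_def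
    set μ : ℂ := τ / lam with hμ_def
    have hτμ : τ = μ * lam := (div_mul_cancel₀ τ hlam0).symm
    set K : ℝ := ‖μ‖ with hK_def
    have hK0 : (0:ℝ) ≤ K := norm_nonneg μ
    set r : ℝ := ‖lam‖ with hr_def
    have hr0 : (0:ℝ) < r := lt_trans one_pos hr
    set u : ℕ → ℂ × ℂ := fun n =>
      ((lam⁻¹) ^ n * (z.1 - (n:ℂ) * μ * z.2), (lam⁻¹) ^ n * z.2) with hu_def
    -- key iteration identity
    have key : ∀ n : ℕ, h z =
        (lam ^ n * ((h (u n)).1 + (n:ℂ) * μ * (h (u n)).2), lam ^ n * (h (u n)).2) := by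
      intro n
      induction n with
      | zero =>
        have hu0 : u 0 = z := by simp [hu_def]
        rw [hu0]
        simp [Prod.ext_iff]
      | succ n ih =>
        have hGu : (lam * (u (n+1)).1 + τ * (u (n+1)).2, lam * (u (n+1)).2) = u n := by
          simp only [hu_def, Prod.ext_iff]
          constructor
          · push_cast
            rw [hτμ]
            field_simp
            ring_nf
            rw [mul_inv_cancel₀ hlam0]
            ring
          · field_simp
            ring_nf
            rw [mul_inv_cancel₀ hlam0]
            ring
        have h2 := hhG (u (n+1))
        rw [hGu] at h2
        rw [ih, h2]
        simp only [Prod.ext_iff]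
        constructor
        · push_cast
          rw [hτμ]
          ring
        · ring
    -- norm bounds
    set S : ℝ := ‖z.1‖ + ‖z.2‖ + 1 with hS_def
    have hS0 : (0:ℝ) < S := by positivity
    have hz1S : ‖z.1‖ ≤ S := by simp only [hS_def]; linarith [norm_nonneg z.2]
    have hz2S : ‖z.2‖ ≤ S := by simp only [hS_def]; linarith [norm_nonneg z.1]
    have hmaster : ∀ n : ℕ, ‖h z‖ ≤ r ^ n * ((1 + (n:ℝ) * K) * ‖h (u n)‖) := by
      intro n
      have hn0 : (0:ℝ) ≤ (n:ℝ) := Nat.cast_nonneg n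
      set p : ℂ × ℂ := h (u n) with hp_def
      have hp1 : ‖p.1‖ ≤ ‖p‖ := norm_fst_le p
      have hp2 : ‖p.2‖ ≤ ‖p‖ := norm_snd_le p
      have b1 : ‖lam ^ n * (p.1 + (n:ℂ) * μ * p.2)‖ ≤ r ^ n * ((1 + (n:ℝ) * K) * ‖p‖) := by
        rw [norm_mul, norm_pow]
        gcongr r ^ n * ?_
        calc ‖p.1 + (n:ℂ) * μ * p.2‖ ≤ ‖p.1‖ + ‖(n:ℂ) * μ * p.2‖ := norm_add_le _ _
          _ = ‖p.1‖ + (n:ℝ) * K * ‖p.2‖ := by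
              rw [norm_mul, norm_mul, Complex.norm_natCast]
          _ ≤ ‖p‖ + (n:ℝ) * K * ‖p‖ := by gcongr
          _ = (1 + (n:ℝ) * K) * ‖p‖ := by ring
      have b2 : ‖lam ^ n * p.2‖ ≤ r ^ n * ((1 + (n:ℝ) * K) * ‖p‖) := by
        rw [norm_mul, norm_pow]
        gcongr r ^ n * ?_
        calc ‖p.2‖ ≤ ‖p‖ := hp2
          _ = 1 * ‖p‖ := (one_mul _).symm
          _ ≤ (1 + (n:ℝ) * K) * ‖p‖ := by
              have h1 : (1:ℝ) ≤ 1 + (n:ℝ) * K := by nlinarith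
              exact mul_le_mul_of_nonneg_right h1 (norm_nonneg p)
      rw [key n, Prod.norm_def]
      exact max_le b1 b2
    have hu_bound : ∀ n : ℕ, ‖u n‖ ≤ (r⁻¹) ^ n * ((1 + (n:ℝ) * K) * S) := by
      intro n
      have hn0 : (0:ℝ) ≤ (n:ℝ) := Nat.cast_nonneg n
      have c1 : ‖(lam⁻¹) ^ n * (z.1 - (n:ℂ) * μ * z.2)‖ ≤ (r⁻¹) ^ n * ((1 + (n:ℝ) * K) * S) := by
        rw [norm_mul, norm_pow, norm_inv]
        gcongr (r⁻¹) ^ n * ?_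
        calc ‖z.1 - (n:ℂ) * μ * z.2‖ ≤ ‖z.1‖ + ‖(n:ℂ) * μ * z.2‖ := norm_sub_le _ _
          _ = ‖z.1‖ + (n:ℝ) * K * ‖z.2‖ := by
              rw [norm_mul, norm_mul, Complex.norm_natCast]
          _ ≤ S + (n:ℝ) * K * S := by gcongr
          _ = (1 + (n:ℝ) * K) * S := by ring
      have c2 : ‖(lam⁻¹) ^ n * z.2‖ ≤ (r⁻¹) ^ n * ((1 + (n:ℝ) * K) * S) := by
        rw [norm_mul, norm_pow, norm_inv]
        gcongr (r⁻¹) ^ n * ?_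
        calc ‖z.2‖ ≤ S := hz2S
          _ = 1 * S := (one_mul _).symm
          _ ≤ (1 + (n:ℝ) * K) * S := by
              have h1 : (1:ℝ) ≤ 1 + (n:ℝ) * K := by nlinarith
              exact mul_le_mul_of_nonneg_right h1 hS0.le
      rw [hu_def, Prod.norm_def]
      exact max_le c1 c2
    -- e n → 0
    set e : ℕ → ℝ := fun n => (r⁻¹) ^ n * ((1 + (n:ℝ) * K) * S) with he_def
    have he0 : Tendsto e atTop (𝓝 0) := by
      have := (polyGeom hK0 hr 1).mul_const S
      rw [zero_mul] at this
      refine this.congr fun n => ?_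
      simp only [pow_one]
      ring
    have hev : ∀ᶠ n in atTop, e n < 1 := he0.eventually_lt_const one_pos
    -- final bound
    set γ : ℕ → ℝ := fun n => ((M + 1) * S ^ 2) * ((1 + (n:ℝ) * K) ^ 3 * (r⁻¹) ^ n)
      with hγ_def
    have hγ0 : Tendsto γ atTop (𝓝 0) := by
      have := (polyGeom hK0 hr 3).const_mul ((M + 1) * S ^ 2)
      rwa [mul_zero] at this
    have hfinal : ∀ᶠ n in atTop, ‖h z‖ ≤ γ n := by
      filter_upwards [hev] with n hn
      have hun : ‖u n‖ < 1 := lt_of_le_of_lt (hu_bound n) hn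
      have hq : ‖h (u n)‖ ≤ (M + 1) * ‖u n‖ ^ 2 := hquad (u n) hun
      have hn0 : (0:ℝ) ≤ (n:ℝ) := Nat.cast_nonneg n
      have hPn : (0:ℝ) ≤ 1 + (n:ℝ) * K := by nlinarith [mul_nonneg hn0 hK0]
      have inner : ‖h (u n)‖ ≤ (M + 1) * (e n) ^ 2 := by
        refine hq.trans (mul_le_mul_of_nonneg_left ?_ (by linarith))
        exact pow_le_pow_left₀ (norm_nonneg _) (hu_bound n) 2
      have step : ‖h z‖ ≤ r ^ n * ((1 + (n:ℝ) * K) * ((M + 1) * (e n) ^ 2)) := by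
        refine (hmaster n).trans ?_
        exact mul_le_mul_of_nonneg_left (mul_le_mul_of_nonneg_left inner hPn)
          (by positivity)
      refine step.trans (le_of_eq ?_)
      have hrn : (0:ℝ) < r ^ n := by positivity
      have hge : e n = (r⁻¹) ^ n * ((1 + (n:ℝ) * K) * S) := rfl
      have hgγ : γ n = ((M + 1) * S ^ 2) * ((1 + (n:ℝ) * K) ^ 3 * (r⁻¹) ^ n) := rfl
      rw [hge, hgγ, inv_pow]
      have hx : r ^ n * ((r ^ n)⁻¹ * (r ^ n)⁻¹) = (r ^ n)⁻¹ := by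
        rw [← mul_assoc, mul_inv_cancel₀ hrn.ne', one_mul]
      calc r ^ n * ((1 + (n:ℝ) * K) * ((M + 1) * ((r ^ n)⁻¹ * ((1 + (n:ℝ) * K) * S)) ^ 2))
          = ((M + 1) * S ^ 2) * ((1 + (n:ℝ) * K) ^ 3 * (r ^ n * ((r ^ n)⁻¹ * (r ^ n)⁻¹))) := by
            ring
        _ = ((M + 1) * S ^ 2) * ((1 + (n:ℝ) * K) ^ 3 * (r ^ n)⁻¹) := by rw [hx]
    have hz0 : h z = 0 := by
      have : ‖h z‖ ≤ 0 := ge_of_tendsto hγ0 hfinal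
      exact norm_le_zero_iff.mp this
    -- conclude
    have hFz : F z = A z := by
      have h0' : F z - A z = 0 := hz0
      exact sub_eq_zero.mp h0'
    rw [hFz, hA z, hz_def]
  · rintro ⟨a, b, ha, hab⟩ z₁ z₂
    rw [hab, hab]
    simp only [Prod.ext_iff]
    constructor <;> ring
end

section
/- Let μ, τ ∈ ℂ with |μ| > 1 and τ ≠ 0, let p ≥ 2 be an integer, and let G : ℂ² → ℂ² be G(z₁,z₂) = (μᵖz₁ + τ·z₂ᵖ, μz₂). A holomorphic automorphism F of ℂ² fixing the origin satisfies F∘G = G∘F if and only if there exist a, b ∈ ℂ with a ≠ 0 such that F(z₁,z₂) = (aᵖz₁ + b·z₂ᵖ, az₂) for all (z₁,z₂) ∈ ℂ². (Theorem 3.4, case 5) -/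
open Metric Filter Topology Set

noncomputable section

namespace NambaAux5

/-- Cauchy estimate for the derivative of an entire function. -/
lemma deriv_bound {φ : ℂ → ℂ} (hφ : Differentiable ℂ φ) {M : ℝ} {z : ℂ}
    (h : ∀ w ∈ sphere z 1, ‖φ w‖ ≤ M) : ‖deriv φ z‖ ≤ M := by
  rw [← Complex.cderiv_eq_deriv isOpen_univ hφ.differentiableOn one_pos (subset_univ _)]
  have := Complex.norm_cderiv_le one_pos h
  rwa [div_one] at this

/-- Lipschitz estimate for an entire function on a ball from a bound on a bigger ball. -/
lemma lipschitz_bound {φ : ℂ → ℂ} (hφ : Differentiable ℂ φ) {M R : ℝ}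
    (h : ∀ w : ℂ, ‖w‖ ≤ R + 1 → ‖φ w‖ ≤ M) {x y : ℂ} (hx : ‖x‖ ≤ R) (hy : ‖y‖ ≤ R) :
    ‖φ y - φ x‖ ≤ M * ‖y - x‖ := by
  have hconv : Convex ℝ (closedBall (0:ℂ) R) := convex_closedBall _ _
  refine hconv.norm_image_sub_le_of_norm_deriv_le (fun u _ => hφ.differentiableAt)
    (fun u hu => deriv_bound hφ fun w hw => h w ?_) ?_ ?_
  · have h1 : ‖w - u‖ = 1 := by simpa [mem_sphere_iff_norm] using hw
    have h2 : ‖u‖ ≤ R := by simpa [mem_closedBall, dist_zero_right] using hu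
    calc ‖w‖ = ‖(w - u) + u‖ := by ring_nf
    _ ≤ ‖w - u‖ + ‖u‖ := norm_add_le _ _
    _ ≤ R + 1 := by rw [h1]; linarith
  · simpa [mem_closedBall, dist_zero_right] using hx
  · simpa [mem_closedBall, dist_zero_right] using hy

lemma iteratedDeriv_pow' (m : ℕ) : ∀ (k : ℕ), iteratedDeriv k (fun s : ℂ => s ^ m) =
    fun s => (m.descFactorial k : ℂ) * s ^ (m - k)
  | 0 => by simp
  | (k+1) => by
    rw [iteratedDeriv_succ, iteratedDeriv_pow' m k]
    funext s
    rw [deriv_const_mul _ (differentiableAt_pow _), deriv_pow_field, Nat.descFactorial_succ,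
      Nat.cast_mul, ← Nat.sub_sub]
    ring

lemma iteratedDeriv_pow_zero (m k : ℕ) : iteratedDeriv k (fun s : ℂ => s ^ m) 0 =
    if k = m then (m.factorial : ℂ) else 0 := by
  rw [iteratedDeriv_pow']
  rcases lt_trichotomy k m with h | h | h
  · rw [if_neg h.ne]; simp [zero_pow (Nat.sub_ne_zero_of_lt h)]
  · subst h; simp [Nat.descFactorial_self]
  · rw [if_neg h.ne']; simp [Nat.descFactorial_eq_zero_iff_lt.mpr h]

lemma iteratedDeriv_const_mul_fun {k : ℕ} {f : ℂ → ℂ} (hf : ContDiff ℂ k f) (A : ℂ) (x : ℂ) :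
    iteratedDeriv k (fun s => A * f s) x = A * iteratedDeriv k f x := by
  simp only [← iteratedDerivWithin_univ]
  exact iteratedDerivWithin_const_mul (mem_univ x) uniqueDiffOn_univ A hf.contDiffWithinAt

lemma iteratedDeriv_add_fun {k : ℕ} {f g : ℂ → ℂ} (hf : ContDiff ℂ k f) (hg : ContDiff ℂ k g)
    (x : ℂ) : iteratedDeriv k (fun s => f s + g s) x
      = iteratedDeriv k f x + iteratedDeriv k g x := by
  simp only [← iteratedDerivWithin_univ]
  exact iteratedDerivWithin_add (mem_univ x) uniqueDiffOn_univ hf.contDiffWithinAt hg.contDiffWithinAt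

/-- One-variable classification: an entire function with `ρ(μs) = μ^m ρ(s) + c s^m`, `|μ| > 1`,
must be a multiple of `s^m`, and `c = 0`. -/
lemma monomial_classify {μ : ℂ} (hμ : 1 < ‖μ‖) {m : ℕ} {c : ℂ} {ρ : ℂ → ℂ}
    (hρ : Differentiable ℂ ρ) (heq : ∀ s, ρ (μ * s) = μ ^ m * ρ s + c * s ^ m) :
    c = 0 ∧ ∀ s, ρ s = (m.factorial : ℂ)⁻¹ * iteratedDeriv m ρ 0 * s ^ m := by
  have key : ∀ k : ℕ, μ ^ k * iteratedDeriv k ρ 0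
      = μ ^ m * iteratedDeriv k ρ 0 + c * (if k = m then (m.factorial : ℂ) else 0) := by
    intro k
    have hL : iteratedDeriv k (fun s => ρ (μ * s)) 0 = μ ^ k * iteratedDeriv k ρ 0 := by
      rw [iteratedDeriv_comp_const_mul hρ.contDiff μ]
      simp
    have hfun : (fun s => ρ (μ * s)) = fun s => μ ^ m * ρ s + c * s ^ m := funext heq
    have hfC : ContDiff ℂ k (fun s : ℂ => μ ^ m * ρ s) := contDiff_const.mul hρ.contDiff
    have hgC : ContDiff ℂ k (fun s : ℂ => c * s ^ m) := by fun_prop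
    have hpC : ContDiff ℂ k (fun s : ℂ => s ^ m) := by fun_prop
    rw [← hL, hfun, iteratedDeriv_add_fun hfC hgC 0,
      iteratedDeriv_const_mul_fun hρ.contDiff, iteratedDeriv_const_mul_fun hpC]
    congr 1
    congr 1
    exact iteratedDeriv_pow_zero m k
  have hD : ∀ k : ℕ, k ≠ m → iteratedDeriv k ρ 0 = 0 := by
    intro k hk
    have h1 := key k
    rw [if_neg hk, mul_zero, add_zero] at h1
    have h2 : (μ ^ k - μ ^ m) * iteratedDeriv k ρ 0 = 0 := by linear_combination h1
    have h3 : μ ^ k ≠ μ ^ m := by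
      intro hEq
      have h4 : ‖μ ^ k‖ = ‖μ ^ m‖ := by rw [hEq]
      rw [norm_pow, norm_pow] at h4
      rcases hk.lt_or_gt with h | h
      · exact absurd h4 (pow_lt_pow_right₀ hμ h).ne
      · exact absurd h4.symm (pow_lt_pow_right₀ hμ h).ne
    rcases mul_eq_zero.mp h2 with h | h
    · exact absurd h (sub_ne_zero.mpr h3)
    · exact h
  have hc : c = 0 := by
    have h1 := key m
    rw [if_pos rfl] at h1
    have h2 : c * (m.factorial : ℂ) = 0 := by linear_combination -h1
    rcases mul_eq_zero.mp h2 with h | h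
    · exact h
    · exact absurd h (Nat.cast_ne_zero.mpr m.factorial_ne_zero)
  refine ⟨hc, fun s => ?_⟩
  have hT := Complex.taylorSeries_eq_of_entire' (c := 0) (z := s) hρ
  rw [← hT, tsum_eq_single m]
  · rw [sub_zero, mul_assoc]
  · intro k hk
    rw [hD k hk, mul_zero, zero_mul]

end NambaAux5

namespace NambaAux5

variable {μ τ : ℂ} {p : ℕ}

/-- first coordinate of the backward orbit -/
def Aseq (μ τ : ℂ) (p : ℕ) (x y : ℂ) (n : ℕ) : ℂ :=
  (x - n * (τ * μ⁻¹ ^ p) * y ^ p) * μ⁻¹ ^ (p * n)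

/-- second coordinate of the backward orbit -/
def Bseq (μ : ℂ) (y : ℂ) (n : ℕ) : ℂ := y * μ⁻¹ ^ n

lemma Aseq_zero (x y : ℂ) : Aseq μ τ p x y 0 = x := by simp [Aseq]

lemma Bseq_zero (y : ℂ) : Bseq μ y 0 = y := by simp [Bseq]

lemma Bseq_step (hμ0 : μ ≠ 0) (y : ℂ) (n : ℕ) : μ * Bseq μ y (n + 1) = Bseq μ y n := by
  have hμν : μ * μ⁻¹ = 1 := mul_inv_cancel₀ hμ0
  simp only [Bseq, pow_succ]
  linear_combination (y * μ⁻¹ ^ n) * hμν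

lemma Aseq_step (hμ0 : μ ≠ 0) (x y : ℂ) (n : ℕ) :
    μ ^ p * Aseq μ τ p x y (n + 1) + τ * (Bseq μ y (n + 1)) ^ p = Aseq μ τ p x y n := by
  have hμν : μ * μ⁻¹ = 1 := mul_inv_cancel₀ hμ0
  have hpow : μ ^ p * μ⁻¹ ^ p = 1 := by rw [← mul_pow, hμν, one_pow]
  have e1 : μ⁻¹ ^ (p * (n + 1)) = μ⁻¹ ^ (p * n) * μ⁻¹ ^ p := by
    rw [← pow_add]
    congr 1
  have e2 : (μ⁻¹ ^ (n + 1)) ^ p = μ⁻¹ ^ (p * n) * μ⁻¹ ^ p := by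
    rw [← pow_mul, ← pow_add]
    congr 1
    ring
  simp only [Aseq, Bseq]
  rw [e1, mul_pow, e2]
  push_cast
  linear_combination ((x - ((n : ℂ) + 1) * (τ * μ⁻¹ ^ p) * y ^ p) * μ⁻¹ ^ (p * n)) * hpow

lemma Aseq_sub (x x' y : ℂ) (n : ℕ) :
    Aseq μ τ p x y n - Aseq μ τ p x' y n = (x - x') * μ⁻¹ ^ (p * n) := by
  simp only [Aseq]; ring

lemma Aseq_tendsto (hν : ‖μ⁻¹‖ < 1) (hp0 : p ≠ 0) (x y : ℂ) :
    Filter.Tendsto (fun n => Aseq μ τ p x y n) atTop (nhds 0) := by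
  have hw : ‖μ⁻¹ ^ p‖ < 1 := by
    rw [norm_pow]
    exact pow_lt_one₀ (norm_nonneg _) hν hp0
  have t1 : Filter.Tendsto (fun n : ℕ => (μ⁻¹ ^ p) ^ n) atTop (nhds 0) :=
    tendsto_pow_atTop_nhds_zero_of_norm_lt_one hw
  have t2 : Filter.Tendsto (fun n : ℕ => (n : ℂ) * (μ⁻¹ ^ p) ^ n) atTop (nhds 0) :=
    squeeze_zero_norm (fun n => le_of_eq (by rw [norm_mul, norm_pow, Complex.norm_natCast]))
      (tendsto_self_mul_const_pow_of_lt_one (norm_nonneg _) hw)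
  have heq : (fun n => Aseq μ τ p x y n)
      = fun n : ℕ => x * (μ⁻¹ ^ p) ^ n - (τ * μ⁻¹ ^ p * y ^ p) * ((n : ℂ) * (μ⁻¹ ^ p) ^ n) := by
    funext n
    simp only [Aseq, pow_mul]
    ring
  rw [heq]
  simpa using (t1.const_mul x).sub (t2.const_mul (τ * μ⁻¹ ^ p * y ^ p))

lemma Bseq_tendsto (hν : ‖μ⁻¹‖ < 1) (y : ℂ) :
    Filter.Tendsto (fun n => Bseq μ y n) atTop (nhds 0) := by
  simpa [Bseq] using (tendsto_pow_atTop_nhds_zero_of_norm_lt_one hν).const_mul y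

lemma Aseq_eventually_le (hν : ‖μ⁻¹‖ < 1) (hp0 : p ≠ 0) (x y : ℂ) :
    ∀ᶠ n in atTop, ‖Aseq μ τ p x y n‖ ≤ 1 := by
  have h := (Aseq_tendsto (τ := τ) hν hp0 x y).norm
  simp only [norm_zero] at h
  filter_upwards [h.eventually_le_const (by norm_num : (0:ℝ) < 1)] with n hn
  exact hn

lemma Bseq_eventually_le (hν : ‖μ⁻¹‖ < 1) (y : ℂ) :
    ∀ᶠ n in atTop, ‖Bseq μ y n‖ ≤ 1 := by
  have h := (Bseq_tendsto (μ := μ) hν y).norm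
  simp only [norm_zero] at h
  filter_upwards [h.eventually_le_const (by norm_num : (0:ℝ) < 1)] with n hn
  exact hn

end NambaAux5

namespace NambaAux5

variable {μ τ : ℂ} {p : ℕ}

lemma basic_facts (hμ : 1 < ‖μ‖) : μ ≠ 0 ∧ ‖μ⁻¹‖ < 1 ∧ ‖μ‖ * ‖μ⁻¹‖ = 1 := by
  have hμ0 : μ ≠ 0 := by
    intro h; rw [h, norm_zero] at hμ; linarith
  have h1 : ‖μ‖ ≠ 0 := by positivity
  refine ⟨hμ0, ?_, ?_⟩
  · rw [norm_inv]
    rw [inv_lt_one_iff₀]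
    right; exact hμ
  · rw [norm_inv]; exact mul_inv_cancel₀ h1

/-- If `φ∘G = c·φ` with `‖c‖ ≤ ‖μ‖`, then `φ` does not depend on the first variable. -/
lemma indep_first (hμ : 1 < ‖μ‖) (hp : 2 ≤ p)
    (φ : ℂ × ℂ → ℂ) (hφ : Differentiable ℂ φ) {c : ℂ} (hc : ‖c‖ ≤ ‖μ‖)
    (hfe : ∀ x y : ℂ, φ (μ ^ p * x + τ * y ^ p, μ * y) = c * φ (x, y)) :
    ∀ x x' y : ℂ, φ (x, y) = φ (x', y) := by
  obtain ⟨hμ0, hν, hμν⟩ := basic_facts hμ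
  have hp0 : p ≠ 0 := by omega
  have hiter : ∀ x y (n : ℕ), φ (x, y) = c ^ n * φ (Aseq μ τ p x y n, Bseq μ y n) := by
    intro x y n
    induction n with
    | zero => simp [Aseq_zero, Bseq_zero]
    | succ n ih =>
      have hW : φ (Aseq μ τ p x y n, Bseq μ y n)
          = c * φ (Aseq μ τ p x y (n + 1), Bseq μ y (n + 1)) := by
        rw [← Aseq_step hμ0 x y n, ← Bseq_step hμ0 y n, hfe]
      rw [ih, hW, pow_succ]; ring
  intro x x' y
  obtain ⟨M, hM⟩ := (isCompact_closedBall (0 : ℂ × ℂ) 2).exists_bound_of_continuousOn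
    hφ.continuous.continuousOn
  have hM0 : 0 ≤ M := le_trans (norm_nonneg _) (hM 0 (by simp))
  -- contraction ratio
  have hu0 : (0:ℝ) < ‖μ‖ := by linarith
  have hui : ‖μ⁻¹‖ ≤ 1 := hν.le
  have hrlt : ‖μ‖ * ‖μ⁻¹‖ ^ p < 1 := by
    calc ‖μ‖ * ‖μ⁻¹‖ ^ p ≤ ‖μ‖ * ‖μ⁻¹‖ ^ 2 :=
          mul_le_mul_of_nonneg_left (pow_le_pow_of_le_one (norm_nonneg _) hui hp) hu0.le
    _ = (‖μ‖ * ‖μ⁻¹‖) * ‖μ⁻¹‖ := by ring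
    _ = ‖μ⁻¹‖ := by rw [hμν, one_mul]
    _ < 1 := hν
  have hr0 : (0:ℝ) ≤ ‖μ‖ * ‖μ⁻¹‖ ^ p := by positivity
  -- key estimate
  have key : ∀ n : ℕ, ‖Aseq μ τ p x y n‖ ≤ 1 → ‖Aseq μ τ p x' y n‖ ≤ 1 → ‖Bseq μ y n‖ ≤ 1 →
      ‖φ (x, y) - φ (x', y)‖ ≤ (M * ‖x - x'‖) * (‖μ‖ * ‖μ⁻¹‖ ^ p) ^ n := by
    intro n h1 h2 h3
    have hslice : Differentiable ℂ (fun u : ℂ => φ (u, Bseq μ y n)) := by fun_prop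
    have hbound : ∀ w : ℂ, ‖w‖ ≤ (1:ℝ) + 1 → ‖φ (w, Bseq μ y n)‖ ≤ M := by
      intro w hw
      apply hM
      rw [Metric.mem_closedBall, dist_zero_right, Prod.norm_def]
      exact max_le (by norm_num at hw ⊢; linarith) (by linarith)
    have hlip := lipschitz_bound hslice hbound h2 h1
    have hAsub : ‖Aseq μ τ p x y n - Aseq μ τ p x' y n‖ = ‖x - x'‖ * ‖μ⁻¹‖ ^ (p * n) := by
      rw [Aseq_sub, norm_mul, norm_pow]
    calc ‖φ (x, y) - φ (x', y)‖
        = ‖c‖ ^ n * ‖φ (Aseq μ τ p x y n, Bseq μ y n) - φ (Aseq μ τ p x' y n, Bseq μ y n)‖ := by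
          rw [hiter x y n, hiter x' y n, ← mul_sub, norm_mul, norm_pow]
      _ ≤ ‖c‖ ^ n * (M * ‖Aseq μ τ p x y n - Aseq μ τ p x' y n‖) := by
          apply mul_le_mul_of_nonneg_left hlip (by positivity)
      _ = ‖c‖ ^ n * (M * (‖x - x'‖ * ‖μ⁻¹‖ ^ (p * n))) := by rw [hAsub]
      _ ≤ ‖μ‖ ^ n * (M * (‖x - x'‖ * ‖μ⁻¹‖ ^ (p * n))) := by
          apply mul_le_mul_of_nonneg_right (pow_le_pow_left₀ (norm_nonneg _) hc n) (by positivity)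
      _ = (M * ‖x - x'‖) * (‖μ‖ * ‖μ⁻¹‖ ^ p) ^ n := by
          rw [pow_mul, mul_pow]; ring
  -- conclude
  have hev : ∀ᶠ n in atTop, ‖φ (x, y) - φ (x', y)‖
      ≤ (M * ‖x - x'‖) * (‖μ‖ * ‖μ⁻¹‖ ^ p) ^ n := by
    filter_upwards [Aseq_eventually_le (τ := τ) hν hp0 x y,
      Aseq_eventually_le (τ := τ) hν hp0 x' y, Bseq_eventually_le (μ := μ) hν y] with n h1 h2 h3
    exact key n h1 h2 h3
  have hlim : Filter.Tendsto (fun n : ℕ => M * ‖x - x'‖ * (‖μ‖ * ‖μ⁻¹‖ ^ p) ^ n)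
      atTop (nhds 0) := by
    have h := (tendsto_pow_atTop_nhds_zero_of_lt_one hr0 hrlt).const_mul (M * ‖x - x'‖)
    rwa [mul_zero] at h
  have htend : Filter.Tendsto (fun _ : ℕ => φ (x, y) - φ (x', y)) atTop (nhds 0) :=
    squeeze_zero_norm' hev hlim
  have h0 := tendsto_nhds_unique tendsto_const_nhds htend
  exact sub_eq_zero.mp h0

/-- If `φ∘G = c·φ + ψ(y)` with `‖c‖ ≤ ‖μ‖^p`, then second differences of `φ` in the
first variable are independent of the base point. -/
lemma second_difference (hμ : 1 < ‖μ‖) (hp : 2 ≤ p)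
    (φ : ℂ × ℂ → ℂ) (hφ : Differentiable ℂ φ) {c : ℂ} (hc : ‖c‖ ≤ ‖μ‖ ^ p) (ψ : ℂ → ℂ)
    (hfe : ∀ x y : ℂ, φ (μ ^ p * x + τ * y ^ p, μ * y) = c * φ (x, y) + ψ y) :
    ∀ x x' s y : ℂ, φ (x + s, y) - φ (x, y) = φ (x' + s, y) - φ (x', y) := by
  obtain ⟨hμ0, hν, hμν⟩ := basic_facts hμ
  have hp0 : p ≠ 0 := by omega
  intro x x' s y
  have hiter4 : ∀ n : ℕ, φ (x + s, y) - φ (x, y) - φ (x' + s, y) + φ (x', y)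
      = c ^ n * (φ (Aseq μ τ p (x + s) y n, Bseq μ y n) - φ (Aseq μ τ p x y n, Bseq μ y n)
          - φ (Aseq μ τ p (x' + s) y n, Bseq μ y n) + φ (Aseq μ τ p x' y n, Bseq μ y n)) := by
    intro n
    induction n with
    | zero => simp [Aseq_zero, Bseq_zero]
    | succ n ih =>
      have hW : ∀ z : ℂ, φ (Aseq μ τ p z y n, Bseq μ y n)
          = c * φ (Aseq μ τ p z y (n + 1), Bseq μ y (n + 1)) + ψ (Bseq μ y (n + 1)) := by
        intro z
        rw [← Aseq_step hμ0 z y n, ← Bseq_step hμ0 y n, hfe]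
      rw [ih, hW (x + s), hW x, hW (x' + s), hW x', pow_succ]; ring
  obtain ⟨M, hM⟩ := (isCompact_closedBall (0 : ℂ × ℂ) 4).exists_bound_of_continuousOn
    hφ.continuous.continuousOn
  have hM0 : 0 ≤ M := le_trans (norm_nonneg _) (hM 0 (by simp))
  have hu0 : (0:ℝ) < ‖μ‖ := by linarith
  have hrp : ‖μ⁻¹‖ ^ p < 1 := pow_lt_one₀ (norm_nonneg _) hν hp0
  have hμνp : ‖μ‖ ^ p * ‖μ⁻¹‖ ^ p = 1 := by
    rw [← mul_pow, hμν, one_pow]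
  -- key estimate
  have key : ∀ n : ℕ, ‖Aseq μ τ p x y n‖ ≤ 1 → ‖Aseq μ τ p x' y n‖ ≤ 1 → ‖Bseq μ y n‖ ≤ 1 →
      ‖s‖ * ‖μ⁻¹‖ ^ (p * n) ≤ 1 →
      ‖φ (x + s, y) - φ (x, y) - φ (x' + s, y) + φ (x', y)‖
        ≤ (M * ‖s‖ * ‖x - x'‖) * (‖μ⁻¹‖ ^ p) ^ n := by
    intro n h1 h2 h3 h4
    set Bn := Bseq μ y n with hBn
    set A2 := Aseq μ τ p x y n with hA2
    set A4 := Aseq μ τ p x' y n with hA4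
    set d : ℂ := s * μ⁻¹ ^ (p * n) with hd
    have hdn : ‖d‖ = ‖s‖ * ‖μ⁻¹‖ ^ (p * n) := by rw [hd, norm_mul, norm_pow]
    have hd1 : ‖d‖ ≤ 1 := by rw [hdn]; exact h4
    have hd0 : 0 ≤ ‖d‖ := norm_nonneg _
    have hA1 : Aseq μ τ p (x + s) y n = A2 + d := by
      have h5 := Aseq_sub (μ := μ) (τ := τ) (p := p) (x + s) x y n
      rw [add_sub_cancel_left] at h5
      rw [hA2, hd]; linear_combination h5
    have hA3 : Aseq μ τ p (x' + s) y n = A4 + d := by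
      have h5 := Aseq_sub (μ := μ) (τ := τ) (p := p) (x' + s) x' y n
      rw [add_sub_cancel_left] at h5
      rw [hA4, hd]; linear_combination h5
    have hslice : Differentiable ℂ (fun u : ℂ => φ (u, Bn)) := by fun_prop
    have hψdiff : Differentiable ℂ (fun u : ℂ => φ (u + d, Bn) - φ (u, Bn)) := by fun_prop
    have hbound4 : ∀ w : ℂ, ‖w‖ ≤ (3:ℝ) + 1 → ‖φ (w, Bn)‖ ≤ M := by
      intro w hw
      apply hM
      rw [Metric.mem_closedBall, dist_zero_right, Prod.norm_def]
      exact max_le (by norm_num at hw ⊢; linarith) (by linarith)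
    have hstep1 : ∀ u : ℂ, ‖u‖ ≤ (1:ℝ) + 1 → ‖φ (u + d, Bn) - φ (u, Bn)‖ ≤ M * ‖d‖ := by
      intro u hu
      have hu3 : ‖u‖ ≤ 3 := by linarith
      have hud3 : ‖u + d‖ ≤ 3 := le_trans (norm_add_le _ _) (by linarith)
      have h5 := lipschitz_bound hslice hbound4 hu3 hud3
      rwa [add_sub_cancel_left] at h5
    have hstep2 : ‖(φ (A2 + d, Bn) - φ (A2, Bn)) - (φ (A4 + d, Bn) - φ (A4, Bn))‖
        ≤ (M * ‖d‖) * ‖A2 - A4‖ :=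
      lipschitz_bound hψdiff hstep1 h2 h1
    have hAsub : ‖A2 - A4‖ = ‖x - x'‖ * ‖μ⁻¹‖ ^ (p * n) := by
      rw [hA2, hA4, Aseq_sub, norm_mul, norm_pow]
    calc ‖φ (x + s, y) - φ (x, y) - φ (x' + s, y) + φ (x', y)‖
        = ‖c‖ ^ n * ‖(φ (A2 + d, Bn) - φ (A2, Bn)) - (φ (A4 + d, Bn) - φ (A4, Bn))‖ := by
          rw [hiter4 n, hA1, hA3, norm_mul, norm_pow]
          congr 2
          ring
      _ ≤ ‖c‖ ^ n * ((M * ‖d‖) * ‖A2 - A4‖) :=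
          mul_le_mul_of_nonneg_left hstep2 (by positivity)
      _ ≤ (‖μ‖ ^ p) ^ n * ((M * ‖d‖) * ‖A2 - A4‖) :=
          mul_le_mul_of_nonneg_right (pow_le_pow_left₀ (norm_nonneg _) hc n) (by positivity)
      _ = (M * ‖s‖ * ‖x - x'‖) * ((‖μ‖ ^ p * ‖μ⁻¹‖ ^ p * ‖μ⁻¹‖ ^ p)) ^ n := by
          rw [hdn, hAsub, pow_mul, mul_pow, mul_pow]
          ring
      _ = (M * ‖s‖ * ‖x - x'‖) * (‖μ⁻¹‖ ^ p) ^ n := by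
          rw [hμνp, one_mul]
  -- eventual bound
  have hsd : Filter.Tendsto (fun n : ℕ => ‖s‖ * ‖μ⁻¹‖ ^ (p * n)) atTop (nhds 0) := by
    have := (tendsto_pow_atTop_nhds_zero_of_lt_one
      (pow_nonneg (norm_nonneg (μ⁻¹)) p) hrp).const_mul ‖s‖
    simpa [pow_mul] using this
  have hev : ∀ᶠ n in atTop, ‖φ (x + s, y) - φ (x, y) - φ (x' + s, y) + φ (x', y)‖
      ≤ (M * ‖s‖ * ‖x - x'‖) * (‖μ⁻¹‖ ^ p) ^ n := by
    filter_upwards [Aseq_eventually_le (τ := τ) hν hp0 x y,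
      Aseq_eventually_le (τ := τ) hν hp0 x' y, Bseq_eventually_le (μ := μ) hν y,
      hsd.eventually_le_const (by norm_num : (0:ℝ) < 1)] with n h1 h2 h3 h4
    exact key n h1 h2 h3 h4
  have htend : Filter.Tendsto
      (fun _ : ℕ => φ (x + s, y) - φ (x, y) - φ (x' + s, y) + φ (x', y)) atTop (nhds 0) :=
    squeeze_zero_norm' hev (by
      have h := (tendsto_pow_atTop_nhds_zero_of_lt_one
        (pow_nonneg (norm_nonneg (μ⁻¹)) p) hrp).const_mul (M * ‖s‖ * ‖x - x'‖)
      rwa [mul_zero] at h)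
  have h0 := tendsto_nhds_unique tendsto_const_nhds htend
  linear_combination h0

end NambaAux5

end

open NambaAux5

/-- Theorem 3.4, case 5: for `G(z₁,z₂) = (μᵖz₁ + τ·z₂ᵖ, μz₂)` with `|μ| > 1`,
`τ ≠ 0` and `p ≥ 2`, a holomorphic automorphism `F` of `ℂ²` fixing the origin
commutes with `G` iff `F(z₁,z₂) = (aᵖz₁ + b·z₂ᵖ, az₂)` with `a ≠ 0`. -/
theorem namba_case_5 (μ τ : ℂ) (hμ : 1 < ‖μ‖) (hτ : τ ≠ 0)
    (p : ℕ) (hp : 2 ≤ p)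
    (F Finv : ℂ × ℂ → ℂ × ℂ)
    (hF : Differentiable ℂ F) (hFinv : Differentiable ℂ Finv)
    (hleft : Function.LeftInverse Finv F)
    (hright : Function.RightInverse Finv F)
    (hF0 : F (0, 0) = (0, 0)) :
    (∀ z₁ z₂ : ℂ, F (μ ^ p * z₁ + τ * z₂ ^ p, μ * z₂)
        = (μ ^ p * (F (z₁, z₂)).1 + τ * ((F (z₁, z₂)).2) ^ p,
            μ * (F (z₁, z₂)).2)) ↔
      ∃ a b : ℂ, a ≠ 0 ∧
        ∀ z₁ z₂ : ℂ, F (z₁, z₂) = (a ^ p * z₁ + b * z₂ ^ p, a * z₂) := by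
  constructor
  · -- forward direction
    intro hcomm
    have hμn : 1 < ‖μ‖ := by exact hμ
    obtain ⟨hμ0, hν, hμν⟩ := basic_facts hμn
    have hp0 : p ≠ 0 := by omega
    have hgG : ∀ x y : ℂ, (F (μ ^ p * x + τ * y ^ p, μ * y)).2 = μ * (F (x, y)).2 := by
      intro x y; rw [hcomm x y]
    have hfGr : ∀ x y : ℂ, (F (μ ^ p * x + τ * y ^ p, μ * y)).1
        = μ ^ p * (F (x, y)).1 + τ * ((F (x, y)).2) ^ p := by
      intro x y; rw [hcomm x y]
    -- second coordinate is independent of the first variable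
    have hgind : ∀ x x' y : ℂ, (F (x, y)).2 = (F (x', y)).2 :=
      indep_first hμn hp (fun z => (F z).2) (by fun_prop) (le_refl ‖μ‖) hgG
    -- second coordinate is linear
    have hρg : Differentiable ℂ (fun y : ℂ => (F (0, y)).2) := by fun_prop
    have hρg_eq : ∀ y : ℂ, (F (0, μ * y)).2 = μ ^ 1 * (F (0, y)).2 + 0 * y ^ 1 := by
      intro y
      have h1 := hgG 0 y
      have h2 : (F (μ ^ p * 0 + τ * y ^ p, μ * y)).2 = (F (0, μ * y)).2 :=
        hgind _ 0 (μ * y)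
      rw [h2] at h1
      rw [h1]; ring
    obtain ⟨-, hρg_form⟩ := monomial_classify hμn hρg hρg_eq
    set a : ℂ := ((Nat.factorial 1 : ℕ) : ℂ)⁻¹ * iteratedDeriv 1 (fun y : ℂ => (F (0, y)).2) 0
      with ha_def
    have hgy : ∀ x y : ℂ, (F (x, y)).2 = a * y := by
      intro x y
      rw [hgind x 0 y]
      have h3 := hρg_form y
      rw [h3]; rw [pow_one]
    -- first coordinate functional equation
    have hfe2 : ∀ x y : ℂ, (F (μ ^ p * x + τ * y ^ p, μ * y)).1
        = μ ^ p * (F (x, y)).1 + (τ * a ^ p) * y ^ p := by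
      intro x y
      rw [hfGr x y, hgy x y]
      ring
    have hsecond := second_difference hμn hp (fun z => (F z).1) (by fun_prop)
      (le_of_eq (norm_pow μ p)) (fun y => (τ * a ^ p) * y ^ p) hfe2
    -- slices of the first coordinate are affine
    have haffine : ∀ x y : ℂ,
        (F (x, y)).1 = (F (0, y)).1 + ((F (1, y)).1 - (F (0, y)).1) * x := by
      intro x y
      have hsl : Differentiable ℂ (fun u : ℂ => (F (u, y)).1) := by fun_prop
      have hderiv_const : ∀ z : ℂ, deriv (fun u : ℂ => (F (u, y)).1) z
          = deriv (fun u : ℂ => (F (u, y)).1) 0 := by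
        intro z
        have hfun : (fun u : ℂ => (F (z + u, y)).1)
            = fun u : ℂ => (F (u, y)).1 + ((F (z, y)).1 - (F (0, y)).1) := by
          funext u
          have h6 := hsecond z 0 u y
          rw [zero_add] at h6
          linear_combination h6
        have h7 : deriv (fun u : ℂ => (F (z + u, y)).1) 0
            = deriv (fun u : ℂ => (F (u, y)).1) z := by
          have h7' : deriv (fun u : ℂ => (F (z + u, y)).1) 0
              = deriv (fun u : ℂ => (F (u, y)).1) (z + 0) :=
            deriv_comp_const_add (f := fun v : ℂ => (F (v, y)).1) (a := z) (x := 0)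
          rwa [add_zero] at h7'
        rw [← h7, hfun, deriv_add_const]
      have hq : ∀ z : ℂ, (F (z, y)).1 - deriv (fun u : ℂ => (F (u, y)).1) 0 * z
          = (F (0, y)).1 := by
        intro z
        have hqd : Differentiable ℂ
            (fun u : ℂ => (F (u, y)).1 - deriv (fun v : ℂ => (F (v, y)).1) 0 * u) := by
          fun_prop
        have hz : ∀ u : ℂ, deriv
            (fun u : ℂ => (F (u, y)).1 - deriv (fun v : ℂ => (F (v, y)).1) 0 * u) u = 0 := by
          intro u
          have hlin : deriv (fun u : ℂ => deriv (fun v : ℂ => (F (v, y)).1) 0 * u) u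
              = deriv (fun v : ℂ => (F (v, y)).1) 0 := by
            simpa using ((hasDerivAt_id u).const_mul
              (deriv (fun v : ℂ => (F (v, y)).1) 0)).deriv
          rw [deriv_fun_sub (hsl u) (by fun_prop), hlin, hderiv_const u, sub_self]
        have h8 := is_const_of_deriv_eq_zero hqd hz z 0
        simpa using h8
      have h9 := hq x
      have h10 := hq 1
      linear_combination h9 - x * h10
    -- the slope is G-invariant, hence constant
    have hcf_inv : ∀ y : ℂ, (F (1, μ * y)).1 - (F (0, μ * y)).1
        = (F (1, y)).1 - (F (0, y)).1 := by
      intro y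
      have h1 := hfe2 1 y
      have h0 := hfe2 0 y
      have e1 := haffine (μ ^ p * 1 + τ * y ^ p) (μ * y)
      have e0 := haffine (μ ^ p * 0 + τ * y ^ p) (μ * y)
      have hcancel : μ ^ p * ((F (1, μ * y)).1 - (F (0, μ * y)).1)
          = μ ^ p * ((F (1, y)).1 - (F (0, y)).1) := by
        linear_combination h1 - h0 - e1 + e0
      exact mul_left_cancel₀ (pow_ne_zero p hμ0) hcancel
    have hcf_const : ∀ y : ℂ, (F (1, y)).1 - (F (0, y)).1
        = (F (1, 0)).1 - (F (0, 0)).1 := by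
      intro y
      have hrec : ∀ n : ℕ, (F (1, y)).1 - (F (0, y)).1
          = (F (1, μ⁻¹ ^ n * y)).1 - (F (0, μ⁻¹ ^ n * y)).1 := by
        intro n
        induction n with
        | zero => rw [pow_zero, one_mul]
        | succ n ih =>
          have h5 : μ * (μ⁻¹ ^ (n + 1) * y) = μ⁻¹ ^ n * y := by
            rw [pow_succ]
            have hμν' : μ * μ⁻¹ = 1 := mul_inv_cancel₀ hμ0
            linear_combination (μ⁻¹ ^ n * y) * hμν'
          have h6 := hcf_inv (μ⁻¹ ^ (n + 1) * y)
          rw [h5] at h6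
          rw [ih, ← h6]
      have hcont : Continuous (fun v : ℂ => (F (1, v)).1 - (F (0, v)).1) := by
        have : Differentiable ℂ (fun v : ℂ => (F (1, v)).1 - (F (0, v)).1) := by fun_prop
        exact this.continuous
      have htnd : Filter.Tendsto (fun n : ℕ => μ⁻¹ ^ n * y) Filter.atTop (nhds 0) := by
        simpa using (tendsto_pow_atTop_nhds_zero_of_norm_lt_one hν).mul_const y
      have h7 : Filter.Tendsto
          (fun n : ℕ => (F (1, μ⁻¹ ^ n * y)).1 - (F (0, μ⁻¹ ^ n * y)).1)
          Filter.atTop (nhds ((F (1, 0)).1 - (F (0, 0)).1)) := by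
        have := (hcont.tendsto 0).comp htnd
        simpa [Function.comp_def] using this
      have h8 : (fun n : ℕ => (F (1, μ⁻¹ ^ n * y)).1 - (F (0, μ⁻¹ ^ n * y)).1)
          = fun _ : ℕ => (F (1, y)).1 - (F (0, y)).1 := funext fun n => (hrec n).symm
      rw [h8] at h7
      exact tendsto_nhds_unique tendsto_const_nhds h7
    -- the remaining one-variable equation
    have hρf : Differentiable ℂ (fun y : ℂ => (F (0, y)).1) := by fun_prop
    have hρf_eq : ∀ y : ℂ, (F (0, μ * y)).1 = μ ^ p * (F (0, y)).1
        + (τ * (a ^ p - ((F (1, 0)).1 - (F (0, 0)).1))) * y ^ p := by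
      intro y
      have h0 := hfe2 0 y
      have e0 := haffine (μ ^ p * 0 + τ * y ^ p) (μ * y)
      have e2 := hcf_const (μ * y)
      linear_combination h0 - e0 - (τ * y ^ p) * e2
    obtain ⟨hczero, hρf_form⟩ := monomial_classify hμn hρf hρf_eq
    have hA : (F (1, 0)).1 - (F (0, 0)).1 = a ^ p := by
      rcases mul_eq_zero.mp hczero with h | h
      · exact absurd h hτ
      · linear_combination -h
    set b : ℂ := ((Nat.factorial p : ℕ) : ℂ)⁻¹
        * iteratedDeriv p (fun y : ℂ => (F (0, y)).1) 0 with hb_def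
    have hfull : ∀ z₁ z₂ : ℂ, F (z₁, z₂) = (a ^ p * z₁ + b * z₂ ^ p, a * z₂) := by
      intro z₁ z₂
      have h1 : (F (z₁, z₂)).1 = a ^ p * z₁ + b * z₂ ^ p := by
        have e := haffine z₁ z₂
        have e2 := hcf_const z₂
        have e3 := hρf_form z₂
        linear_combination e + z₁ * e2 + e3 + z₁ * hA
      have h2 : (F (z₁, z₂)).2 = a * z₂ := hgy z₁ z₂
      rw [← h1, ← h2]
    have ha : a ≠ 0 := by
      intro h
      have h1 : F (1, 0) = (0, 0) := by
        rw [hfull 1 0, h]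
        simp [zero_pow hp0]
      have h2 := hleft (1, 0)
      have h3 := hleft (0, 0)
      rw [h1] at h2
      rw [hF0, h2] at h3
      have h4 := congrArg Prod.fst h3
      norm_num at h4
    exact ⟨a, b, ha, hfull⟩
  · -- reverse direction
    rintro ⟨a, b, ha, hform⟩ z₁ z₂
    rw [hform, hform]
    simp only [Prod.mk.injEq]
    constructor <;> ring
end

section
/- Let λ ∈ ℂ with |λ| > 1. Suppose ξ₁, ξ₂ : ℂ² × [0,∞) → ℂ are as in the context and satisfy ξ₁(λz₁, λz₂, φ(x)) = λ·ξ₁(z₁,z₂,x) and ξ₂(λz₁, λz₂, φ(x)) = λ·ξ₂(z₁,z₂,x) for all (z₁,z₂) ∈ ℂ² and x ≥ 0. Then there exist continuous functions a₁, a₂ : [0,∞) → ℂ with a₁(0) = a₂(0) = 0 and aⱼ(φ(x)) = λ·aⱼ(x) (j = 1,2) such that ξ₁(z₁,z₂,x) = z₁ + a₁(x) and ξ₂(z₁,z₂,x) = z₂ + a₂(x) for all (z₁,z₂,x). (Classification in Case 1 of Section 3.2, underlying Theorem 3.9) -/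
open Set Filter



lemma liouville_linear (f : ℂ → ℂ) (hf : Differentiable ℂ f) (C : ℝ)
    (hC : ∀ z, ‖f z‖ ≤ C * (1 + ‖z‖)) (z : ℂ) :
    f z = f 0 + (f 1 - f 0) * z := by
  have hC0 : 0 ≤ C := by
    have h1 := hC 0
    have h2 : ‖(0:ℂ)‖ = 0 := norm_zero
    nlinarith [norm_nonneg (f 0)]
  set g := dslope f 0 with hg
  have hgd : Differentiable ℂ g := by
    rw [← differentiableOn_univ] at hf ⊢
    exact (Complex.differentiableOn_dslope (Filter.univ_mem)).2 hf
  obtain ⟨K, hK⟩ := (isCompact_closedBall (0:ℂ) 1).exists_bound_of_continuousOn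
    hgd.continuous.continuousOn
  have hb : ∀ w : ℂ, ‖g w‖ ≤ max K (2*C + ‖f 0‖) := by
    intro w
    rcases le_or_gt ‖w‖ 1 with h | h
    · exact le_max_of_le_left (hK w (by simpa [Metric.mem_closedBall] using h))
    · have hw0 : w ≠ (0:ℂ) := by
        intro h0; rw [h0] at h; simp at h; linarith
      have hgw : g w = (f w - f 0) / w := by
        rw [hg, dslope_of_ne f hw0, slope_def_field]
        ring_nf
      refine le_max_of_le_right ?_
      rw [hgw, norm_div]
      rw [div_le_iff₀ (by linarith : (0:ℝ) < ‖w‖)]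
      have h1 : ‖f w - f 0‖ ≤ C * (1 + ‖w‖) + ‖f 0‖ :=
        le_trans (norm_sub_le _ _) (by linarith [hC w])
      nlinarith [norm_nonneg (f 0)]
  have hconst : ∀ w : ℂ, g w = g 1 := by
    intro w
    refine hgd.apply_eq_apply_of_bounded ?_ w 1
    rw [isBounded_iff_forall_norm_le]
    exact ⟨_, Set.forall_mem_range.2 hb⟩
  have hg1 : g 1 = f 1 - f 0 := by
    rw [hg, dslope_of_ne f one_ne_zero, slope_def_field]
    simp
  have key := sub_smul_dslope f 0 z
  rw [← hg, hconst z, hg1] at key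
  simp only [sub_zero, smul_eq_mul] at key
  linear_combination -key



lemma orbit_exists (φ : ℝ → ℝ) (hφcont : ContinuousOn φ (Set.Ici 0))
    (hφbij : Set.BijOn φ (Set.Ici 0) (Set.Ici 0)) (hφ0 : φ 0 = 0)
    (hexp : ∀ x : ℝ, 0 < x → x < φ x) (x : ℝ) (hx : 0 ≤ x) :
    ∃ y : ℕ → ℝ, y 0 = x ∧ (∀ n, y n ∈ Set.Icc (0:ℝ) x) ∧
      (∀ n, φ (y (n + 1)) = y n) ∧ Filter.Tendsto y Filter.atTop (nhds 0) := by
  classical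
  set ψ : ℝ → ℝ := fun t => Function.invFunOn φ (Set.Ici 0) t with hψ
  have hψ_spec : ∀ t : ℝ, 0 ≤ t → 0 ≤ ψ t ∧ φ (ψ t) = t := by
    intro t ht
    have hex : ∃ a ∈ Set.Ici (0:ℝ), φ a = t := hφbij.surjOn ht
    exact ⟨Function.invFunOn_mem hex, Function.invFunOn_eq hex⟩
  set y : ℕ → ℝ := fun n => ψ^[n] x with hy
  have hy0 : y 0 = x := rfl
  have hysucc : ∀ n, y (n + 1) = ψ (y n) := by
    intro n
    simp [hy, Function.iterate_succ_apply']
  have hynn : ∀ n, 0 ≤ y n := by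
    intro n
    induction n with
    | zero => exact hx
    | succ n ih => rw [hysucc]; exact (hψ_spec (y n) ih).1
  have hstep : ∀ n, φ (y (n + 1)) = y n := by
    intro n
    rw [hysucc]
    exact (hψ_spec (y n) (hynn n)).2
  have hdec : ∀ n, y (n + 1) ≤ y n := by
    intro n
    rcases eq_or_lt_of_le (hynn (n + 1)) with h | h
    · have h2 := hstep n
      rw [← h, hφ0] at h2
      rw [← h, ← h2]
    · have := hexp (y (n+1)) h
      rw [hstep n] at this
      exact le_of_lt this
  have hanti : Antitone y := antitone_nat_of_succ_le hdec
  have hbdd : BddBelow (Set.range y) := ⟨0, Set.forall_mem_range.2 hynn⟩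
  have htend : Filter.Tendsto y Filter.atTop (nhds (⨅ n, y n)) :=
    tendsto_atTop_ciInf hanti hbdd
  set L := ⨅ n, y n with hL
  have hLnn : 0 ≤ L := le_ciInf hynn
  have hφL : φ L = L := by
    have h1 : Filter.Tendsto (fun n => y (n + 1)) Filter.atTop (nhds L) :=
      htend.comp (Filter.tendsto_add_atTop_nat 1)
    have h2 : Filter.Tendsto (fun n => y (n + 1)) Filter.atTop (nhdsWithin L (Set.Ici 0)) := by
      rw [tendsto_nhdsWithin_iff]
      exact ⟨h1, Filter.Eventually.of_forall fun n => hynn (n + 1)⟩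
    have h3 : Filter.Tendsto (fun n => φ (y (n + 1))) Filter.atTop (nhds (φ L)) :=
      ((hφcont L hLnn).tendsto).comp h2
    have h4 : Filter.Tendsto (fun n => φ (y (n + 1))) Filter.atTop (nhds L) := by
      simpa only [hstep] using htend
    exact tendsto_nhds_unique h3 h4
  have hL0 : L = 0 := by
    rcases eq_or_lt_of_le hLnn with h | h
    · exact h.symm
    · exact absurd hφL (ne_of_gt (hexp L h))
  refine ⟨y, hy0, fun n => ⟨hynn n, ?_⟩, hstep, by rwa [hL0] at htend⟩
  have := hanti (Nat.zero_le n)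
  rwa [hy0] at this

lemma invariant_const (φ : ℝ → ℝ) (hφcont : ContinuousOn φ (Set.Ici 0))
    (hφbij : Set.BijOn φ (Set.Ici 0) (Set.Ici 0)) (hφ0 : φ 0 = 0)
    (hexp : ∀ x : ℝ, 0 < x → x < φ x)
    (d : ℝ → ℂ) (hd : ContinuousOn d (Set.Ici 0))
    (hinv : ∀ x : ℝ, 0 ≤ x → d (φ x) = d x)
    (x : ℝ) (hx : 0 ≤ x) : d x = d 0 := by
  obtain ⟨y, hy0, hymem, hstep, htend⟩ := orbit_exists φ hφcont hφbij hφ0 hexp x hx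
  have hconst : ∀ n, d (y n) = d x := by
    intro n
    induction n with
    | zero => rw [hy0]
    | succ n ih =>
      rw [← ih, ← hstep n]
      exact (hinv (y (n + 1)) (hymem (n + 1)).1).symm
  have h2 : Filter.Tendsto y Filter.atTop (nhdsWithin 0 (Set.Ici 0)) := by
    rw [tendsto_nhdsWithin_iff]
    exact ⟨htend, Filter.Eventually.of_forall fun n => (hymem n).1⟩
  have h3 : Filter.Tendsto (fun n => d (y n)) Filter.atTop (nhds (d 0)) :=
    ((hd 0 Set.self_mem_Ici).tendsto).comp h2
  have h4 : Filter.Tendsto (fun n => d (y n)) Filter.atTop (nhds (d x)) := by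
    simpa only [hconst] using tendsto_const_nhds
  exact tendsto_nhds_unique h4 h3



lemma growth_bound (lam : ℂ) (hlam : 1 < ‖lam‖)
    (φ : ℝ → ℝ) (hφcont : ContinuousOn φ (Set.Ici 0))
    (hφbij : Set.BijOn φ (Set.Ici 0) (Set.Ici 0)) (hφ0 : φ 0 = 0)
    (hexp : ∀ x : ℝ, 0 < x → x < φ x)
    (ξ : ℂ → ℂ → ℝ → ℂ)
    (hcont : ContinuousOn (fun p : ℂ × ℂ × ℝ => ξ p.1 p.2.1 p.2.2)
      (Set.univ ×ˢ Set.univ ×ˢ Set.Ici 0))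
    (hL : ∀ z₁ z₂ : ℂ, ∀ x : ℝ, 0 ≤ x →
      ξ (lam * z₁) (lam * z₂) (φ x) = lam * ξ z₁ z₂ x)
    (x : ℝ) (hx : 0 ≤ x) :
    ∃ M : ℝ, 0 ≤ M ∧ ∀ z w : ℂ, ‖ξ z w x‖ ≤ M * max (max ‖z‖ ‖w‖) 1 := by
  classical
  have hA1 : (1:ℝ) < ‖lam‖ := by exact hlam
  have hA0 : (0:ℝ) < ‖lam‖ := lt_trans one_pos hA1
  have hlam0 : lam ≠ 0 := by
    intro h; rw [h] at hA1; simp at hA1; linarith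
  -- orbit
  obtain ⟨y, hy0, hymem, hstep, -⟩ :=
    orbit_exists φ hφcont hφbij hφ0 hexp x hx
  -- key iteration identity
  have hiter : ∀ n : ℕ, ∀ z w : ℂ,
      ξ z w x = lam ^ n * ξ ((lam⁻¹) ^ n * z) ((lam⁻¹) ^ n * w) (y n) := by
    intro n
    induction n with
    | zero => intro z w; simp [hy0]
    | succ n ih =>
      intro z w
      have h1 := hL ((lam⁻¹) ^ (n+1) * z) ((lam⁻¹) ^ (n+1) * w) (y (n+1)) (hymem (n+1)).1
      rw [hstep n] at h1
      have e1 : lam * ((lam⁻¹) ^ (n+1) * z) = (lam⁻¹) ^ n * z := by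
        rw [pow_succ', ← mul_assoc, ← mul_assoc, mul_inv_cancel₀ hlam0, one_mul]
      have e2 : lam * ((lam⁻¹) ^ (n+1) * w) = (lam⁻¹) ^ n * w := by
        rw [pow_succ', ← mul_assoc, ← mul_assoc, mul_inv_cancel₀ hlam0, one_mul]
      rw [e1, e2] at h1
      rw [ih z w, h1]
      ring
  -- compact bound
  set K : Set (ℂ × ℂ × ℝ) :=
    Metric.closedBall 0 1 ×ˢ Metric.closedBall 0 1 ×ˢ Set.Icc 0 x with hK
  have hKcomp : IsCompact K :=
    (isCompact_closedBall _ _).prod ((isCompact_closedBall _ _).prod isCompact_Icc)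
  have hKsub : K ⊆ Set.univ ×ˢ Set.univ ×ˢ Set.Ici 0 := by
    rintro ⟨a, b, t⟩ ⟨-, -, ht⟩
    exact ⟨Set.mem_univ _, Set.mem_univ _, ht.1⟩
  obtain ⟨M₀, hM₀⟩ := hKcomp.exists_bound_of_continuousOn (hcont.mono hKsub)
  set M₁ := max M₀ 0 with hM₁
  have hM₁nn : 0 ≤ M₁ := le_max_right _ _
  refine ⟨‖lam‖ * M₁, by positivity, ?_⟩
  intro z w
  set R := max (max ‖z‖ ‖w‖) 1 with hR
  have hR1 : (1:ℝ) ≤ R := le_max_right _ _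
  have hR0 : (0:ℝ) < R := lt_of_lt_of_le one_pos hR1
  -- find minimal n with R ≤ ‖lam‖^n
  have hex : ∃ n : ℕ, R ≤ ‖lam‖ ^ n :=
    ((tendsto_pow_atTop_atTop_of_one_lt hA1).eventually_ge_atTop R).exists
  set n := Nat.find hex with hn
  have hn1 : R ≤ ‖lam‖ ^ n := Nat.find_spec hex
  have hn2 : ‖lam‖ ^ n ≤ ‖lam‖ * R := by
    rcases Nat.eq_zero_or_pos n with h | h
    · rw [h, pow_zero]
      nlinarith
    · have hmin := Nat.find_min hex (m := n - 1) (by omega)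
      push_neg at hmin
      have : ‖lam‖ ^ n = ‖lam‖ * ‖lam‖ ^ (n - 1) := by
        rw [← pow_succ']
        congr 1
        omega
      rw [this]
      nlinarith
  -- the scaled point lies in K
  have hzb : ‖(lam⁻¹) ^ n * z‖ ≤ 1 := by
    rw [norm_mul, norm_pow, norm_inv]
    rw [inv_pow]
    have hzR : ‖z‖ ≤ R := le_trans (le_max_left _ _) (le_max_left _ _)
    rw [inv_mul_le_iff₀ (by positivity)]
    nlinarith [pow_pos hA0 n]
  have hwb : ‖(lam⁻¹) ^ n * w‖ ≤ 1 := by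
    rw [norm_mul, norm_pow, norm_inv, inv_pow]
    have hwR : ‖w‖ ≤ R := le_trans (le_max_right _ _) (le_max_left _ _)
    rw [inv_mul_le_iff₀ (by positivity)]
    nlinarith [pow_pos hA0 n]
  have hmemK : ((lam⁻¹) ^ n * z, (lam⁻¹) ^ n * w, y n) ∈ K := by
    refine ⟨by simpa [Metric.mem_closedBall] using hzb,
      by simpa [Metric.mem_closedBall] using hwb, hymem n⟩
  have hbound := hM₀ _ hmemK
  have hfinal : ‖ξ z w x‖ ≤ ‖lam‖ ^ n * M₁ := by
    rw [hiter n z w, norm_mul, norm_pow]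
    have : ‖ξ ((lam⁻¹) ^ n * z) ((lam⁻¹) ^ n * w) (y n)‖ ≤ M₁ :=
      le_trans hbound (le_max_left _ _)
    nlinarith [pow_pos hA0 n, norm_nonneg (ξ ((lam⁻¹) ^ n * z) ((lam⁻¹) ^ n * w) (y n))]
  calc ‖ξ z w x‖ ≤ ‖lam‖ ^ n * M₁ := hfinal
    _ ≤ (‖lam‖ * R) * M₁ := by nlinarith
    _ = ‖lam‖ * M₁ * R := by ring

open Set Filter

lemma affine_of_growth (F : ℂ × ℂ → ℂ) (hF : Differentiable ℂ F) (M : ℝ) (hM : 0 ≤ M)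
    (hb : ∀ z w : ℂ, ‖F (z, w)‖ ≤ M * max (max ‖z‖ ‖w‖) 1) (z w : ℂ) :
    F (z, w) = F (0, 0) + (F (1, 0) - F (0, 0)) * z + (F (0, 1) - F (0, 0)) * w := by
  have hdiff1 : ∀ w : ℂ, Differentiable ℂ (fun z => F (z, w)) := fun w =>
    hF.comp (differentiable_id.prodMk (differentiable_const w))
  have hdiff2 : ∀ z : ℂ, Differentiable ℂ (fun w => F (z, w)) := fun z =>
    hF.comp ((differentiable_const z).prodMk differentiable_id)
  have hmax : ∀ u v : ℝ, 0 ≤ u → 0 ≤ v → max (max u v) 1 ≤ max v 1 * (1 + u) := by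
    intro u v hu hv
    have h1 : max v 1 ≥ 1 := le_max_right _ _
    have h2 : v ≤ max v 1 := le_max_left _ _
    have : max (max u v) 1 ≤ max v 1 + u := by
      refine max_le (max_le (by linarith) (by linarith)) (by linarith)
    nlinarith
  -- affine in z for each fixed w
  have h1 : ∀ w z : ℂ, F (z, w) = F (0, w) + (F (1, w) - F (0, w)) * z := by
    intro w z
    exact liouville_linear (fun z => F (z, w)) (hdiff1 w) (M * max ‖w‖ 1)
      (fun z => by
        calc ‖F (z, w)‖ ≤ M * max (max ‖z‖ ‖w‖) 1 := hb z w
          _ ≤ M * (max ‖w‖ 1 * (1 + ‖z‖)) := by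
              have := hmax ‖z‖ ‖w‖ (norm_nonneg _) (norm_nonneg _)
              nlinarith
          _ = M * max ‖w‖ 1 * (1 + ‖z‖) := by ring) z
  have hlin : ∀ v : ℝ, 0 ≤ v → max v 1 ≤ 1 + v := fun v hv =>
    max_le (by linarith) (by linarith)
  -- affine in w on the axis z = 0
  have h2 : ∀ w : ℂ, F (0, w) = F (0, 0) + (F (0, 1) - F (0, 0)) * w := by
    intro w
    refine liouville_linear (fun w => F (0, w)) (hdiff2 0) M (fun w => ?_) w
    calc ‖F (0, w)‖ ≤ M * max (max ‖(0:ℂ)‖ ‖w‖) 1 := hb 0 w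
      _ ≤ M * (1 + ‖w‖) := by
          have h3 : max (max ‖(0:ℂ)‖ ‖w‖) 1 ≤ 1 + ‖w‖ := by
            simp only [norm_zero]
            refine max_le (max_le (by positivity) (by linarith [norm_nonneg w])) (by
              linarith [norm_nonneg w])
          nlinarith
  -- the coefficient function is affine in w
  set c : ℂ → ℂ := fun w => F (1, w) - F (0, w) with hc
  have hcb : ∀ w : ℂ, ‖c w‖ ≤ (2 * M) * (1 + ‖w‖) := by
    intro w
    have hb1 : ‖F (1, w)‖ ≤ M * (1 + ‖w‖) := by
      have := hb 1 w
      have h3 : max (max ‖(1:ℂ)‖ ‖w‖) 1 ≤ 1 + ‖w‖ := by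
        simp only [norm_one]
        refine max_le (max_le (by linarith [norm_nonneg w]) (by linarith)) (by
          linarith [norm_nonneg w])
      nlinarith
    have hb0 : ‖F (0, w)‖ ≤ M * (1 + ‖w‖) := by
      have := hb 0 w
      have h3 : max (max ‖(0:ℂ)‖ ‖w‖) 1 ≤ 1 + ‖w‖ := by
        simp only [norm_zero]
        refine max_le (max_le (by positivity) (by linarith [norm_nonneg w])) (by
          linarith [norm_nonneg w])
      nlinarith
    calc ‖c w‖ ≤ ‖F (1, w)‖ + ‖F (0, w)‖ := norm_sub_le _ _
      _ ≤ (2 * M) * (1 + ‖w‖) := by linarith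
  have h3 : ∀ w : ℂ, c w = c 0 + (c 1 - c 0) * w :=
    fun w => liouville_linear c ((hdiff2 1).sub (hdiff2 0)) (2 * M) hcb w
  set E : ℂ := c 1 - c 0 with hE
  -- quadratic coefficient vanishes
  have hE0 : E = 0 := by
    by_contra hne
    set B : ℂ := F (0, 1) - F (0, 0) with hB
    set C' : ℝ := M + ‖F (0, 0)‖ + ‖B‖ + ‖c 0‖ with hC'
    have hC'nn : 0 ≤ C' := by positivity
    have key : ∀ t : ℝ, 1 ≤ t → ‖E‖ * t ≤ C' := by
      intro t ht
      have ht0 : (0:ℝ) < t := by linarith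
      have hnt : ‖(t:ℂ)‖ = t := by
        rw [Complex.norm_real]
        exact abs_of_pos ht0
      have e3 : F (1, (t:ℂ)) - F (0, (t:ℂ)) = c 0 + E * (t:ℂ) := h3 (t:ℂ)
      have hFtt : F (t, t) = F (0, 0) + B * t + c 0 * t + E * t ^ 2 := by
        have e1 := h1 (t:ℂ) (t:ℂ)
        have e2 := h2 (t:ℂ)
        linear_combination e1 + e2 + (t:ℂ) * e3
      have hbt : ‖F ((t:ℂ), (t:ℂ))‖ ≤ M * t := by
        have := hb (t:ℂ) (t:ℂ)
        have h4 : max (max ‖(t:ℂ)‖ ‖(t:ℂ)‖) 1 = t := by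
          rw [hnt, max_self]
          exact max_eq_left ht
        rw [h4] at this
        exact this
      have hEt : ‖E * (t:ℂ) ^ 2‖ ≤ M * t + ‖F (0, 0)‖ + ‖B‖ * t + ‖c 0‖ * t := by
        have : E * (t:ℂ) ^ 2 = F ((t:ℂ), (t:ℂ)) - F (0, 0) - B * t - c 0 * t := by
          rw [hFtt]; ring
        rw [this]
        calc ‖F ((t:ℂ), (t:ℂ)) - F (0, 0) - B * t - c 0 * t‖
            ≤ ‖F ((t:ℂ), (t:ℂ)) - F (0, 0) - B * t‖ + ‖c 0 * t‖ := norm_sub_le _ _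
          _ ≤ ‖F ((t:ℂ), (t:ℂ)) - F (0, 0)‖ + ‖B * t‖ + ‖c 0 * t‖ := by
              linarith [norm_sub_le (F ((t:ℂ), (t:ℂ)) - F (0, 0)) (B * t)]
          _ ≤ (‖F ((t:ℂ), (t:ℂ))‖ + ‖F (0, 0)‖) + ‖B‖ * ‖(t:ℂ)‖ + ‖c 0‖ * ‖(t:ℂ)‖ := by
              rw [norm_mul, norm_mul]
              linarith [norm_sub_le (F ((t:ℂ), (t:ℂ))) (F (0, 0))]
          _ ≤ M * t + ‖F (0, 0)‖ + ‖B‖ * t + ‖c 0‖ * t := by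
              rw [hnt]; linarith
      have hEt2 : ‖E‖ * t ^ 2 ≤ C' * t := by
        have h5 : ‖E * (t:ℂ) ^ 2‖ = ‖E‖ * t ^ 2 := by
          rw [norm_mul, norm_pow, hnt]
        rw [h5] at hEt
        have hF00 : ‖F (0,0)‖ ≤ ‖F (0,0)‖ * t := by nlinarith [norm_nonneg (F (0,0))]
        rw [hC']
        nlinarith
      nlinarith [norm_nonneg E]
    have hEpos : 0 < ‖E‖ := norm_pos_iff.2 hne
    have hne' : ‖E‖ ≠ 0 := ne_of_gt hEpos
    have hq : 0 ≤ (C' + 1) / ‖E‖ := div_nonneg (by linarith) hEpos.le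
    have hkey := key ((C' + 1) / ‖E‖ + 1) (by linarith)
    have hcomp : ‖E‖ * ((C' + 1) / ‖E‖ + 1) = C' + 1 + ‖E‖ := by
      rw [mul_add, mul_one, mul_div_cancel₀ _ hne']
    rw [hcomp] at hkey
    linarith
  have e1 := h1 w z
  have e2 := h2 w
  have e3 : F (1, w) - F (0, w) = c 0 + E * w := h3 w
  have e4 : c 0 = F (1, 0) - F (0, 0) := rfl
  linear_combination e1 + e2 + z * e3 + z * e4 + z * w * hE0

open Set Filter

lemma main_aux (lam : ℂ) (hlam : 1 < ‖lam‖)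
    (φ : ℝ → ℝ) (hφcont : ContinuousOn φ (Set.Ici 0))
    (hφbij : Set.BijOn φ (Set.Ici 0) (Set.Ici 0)) (hφ0 : φ 0 = 0)
    (hexp : ∀ x : ℝ, 0 < x → x < φ x)
    (ξ : ℂ → ℂ → ℝ → ℂ)
    (hcont : ContinuousOn (fun p : ℂ × ℂ × ℝ => ξ p.1 p.2.1 p.2.2)
      (Set.univ ×ˢ Set.univ ×ˢ Set.Ici 0))
    (hholo : ∀ x : ℝ, 0 ≤ x → Differentiable ℂ (fun z : ℂ × ℂ => ξ z.1 z.2 x))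
    (hL : ∀ z₁ z₂ : ℂ, ∀ x : ℝ, 0 ≤ x →
      ξ (lam * z₁) (lam * z₂) (φ x) = lam * ξ z₁ z₂ x) :
    ∀ x : ℝ, 0 ≤ x → ∀ z w : ℂ,
      ξ z w x = ξ 0 0 x + (ξ 1 0 0 - ξ 0 0 0) * z + (ξ 0 1 0 - ξ 0 0 0) * w := by
  have hlam0 : lam ≠ 0 := by
    intro h; rw [h] at hlam; simp at hlam; linarith
  have hφmaps : ∀ x : ℝ, 0 ≤ x → 0 ≤ φ x := fun x hx => hφbij.mapsTo hx
  have hcc : ∀ z w : ℂ, ContinuousOn (fun x => ξ z w x) (Set.Ici 0) := by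
    intro z w
    have hmap : Set.MapsTo (fun x : ℝ => ((z, w, x) : ℂ × ℂ × ℝ)) (Set.Ici 0)
        (Set.univ ×ˢ Set.univ ×ˢ Set.Ici 0) := fun x hx => ⟨Set.mem_univ _, Set.mem_univ _, hx⟩
    exact hcont.comp (Continuous.continuousOn (by continuity)) hmap
  have rep : ∀ x : ℝ, 0 ≤ x → ∀ z w : ℂ,
      ξ z w x = ξ 0 0 x + (ξ 1 0 x - ξ 0 0 x) * z + (ξ 0 1 x - ξ 0 0 x) * w := by
    intro x hx z w
    obtain ⟨M, hM0, hMb⟩ := growth_bound lam hlam φ hφcont hφbij hφ0 hexp ξ hcont hL x hx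
    exact affine_of_growth (fun p => ξ p.1 p.2 x) (hholo x hx) M hM0 (fun z w => hMb z w) z w
  have hA : ∀ x : ℝ, 0 ≤ x → ξ 0 0 (φ x) = lam * ξ 0 0 x := by
    intro x hx
    have := hL 0 0 x hx
    simpa using this
  have hCinv : ∀ x : ℝ, 0 ≤ x →
      ξ 1 0 (φ x) - ξ 0 0 (φ x) = ξ 1 0 x - ξ 0 0 x := by
    intro x hx
    have h1 := hL 1 0 x hx
    rw [mul_one, mul_zero] at h1
    have h2 := rep (φ x) (hφmaps x hx) lam 0
    have hAx := hA x hx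
    refine mul_left_cancel₀ hlam0 ?_
    linear_combination h1 - h2 - hAx
  have hBinv : ∀ x : ℝ, 0 ≤ x →
      ξ 0 1 (φ x) - ξ 0 0 (φ x) = ξ 0 1 x - ξ 0 0 x := by
    intro x hx
    have h1 := hL 0 1 x hx
    rw [mul_one, mul_zero] at h1
    have h2 := rep (φ x) (hφmaps x hx) 0 lam
    have hAx := hA x hx
    refine mul_left_cancel₀ hlam0 ?_
    linear_combination h1 - h2 - hAx
  intro x hx z w
  have hCconst : ξ 1 0 x - ξ 0 0 x = ξ 1 0 0 - ξ 0 0 0 :=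
    invariant_const φ hφcont hφbij hφ0 hexp (fun x => ξ 1 0 x - ξ 0 0 x)
      ((hcc 1 0).sub (hcc 0 0)) hCinv x hx
  have hBconst : ξ 0 1 x - ξ 0 0 x = ξ 0 1 0 - ξ 0 0 0 :=
    invariant_const φ hφcont hφbij hφ0 hexp (fun x => ξ 0 1 x - ξ 0 0 x)
      ((hcc 0 1).sub (hcc 0 0)) hBinv x hx
  linear_combination (rep x hx z w) + z * hCconst + w * hBconst



/-- Case 1 of Section 3.2 (underlying Theorem 3.9): for `G = λ·id` with `|λ| > 1`,
any leafwise-holomorphic lift `(ξ₁, ξ₂)` restricting to the identity on the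
boundary and equivariant for `(λz₁, λz₂, φ(x))` has the form
`ξ₁ = z₁ + a₁(x)`, `ξ₂ = z₂ + a₂(x)` with `aⱼ ∈ 𝒵_{φ,λ}`. -/
theorem case_1_classification (lam : ℂ) (hlam : 1 < ‖lam‖)
    (φ : ℝ → ℝ)
    (hφcont : ContinuousOn φ (Set.Ici 0))
    (hφmono : StrictMonoOn φ (Set.Ici 0))
    (hφbij : Set.BijOn φ (Set.Ici 0) (Set.Ici 0))
    (hφ0 : φ 0 = 0)
    (hexp : ∀ x : ℝ, 0 < x → x < φ x)
    (ξ₁ ξ₂ : ℂ → ℂ → ℝ → ℂ)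
    (hcont₁ : ContinuousOn (fun p : ℂ × ℂ × ℝ => ξ₁ p.1 p.2.1 p.2.2)
      (Set.univ ×ˢ Set.univ ×ˢ Set.Ici 0))
    (hcont₂ : ContinuousOn (fun p : ℂ × ℂ × ℝ => ξ₂ p.1 p.2.1 p.2.2)
      (Set.univ ×ˢ Set.univ ×ˢ Set.Ici 0))
    (hholo₁ : ∀ x : ℝ, 0 ≤ x → Differentiable ℂ (fun z : ℂ × ℂ => ξ₁ z.1 z.2 x))
    (hholo₂ : ∀ x : ℝ, 0 ≤ x → Differentiable ℂ (fun z : ℂ × ℂ => ξ₂ z.1 z.2 x))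
    (hbd₁ : ∀ z₁ z₂ : ℂ, ξ₁ z₁ z₂ 0 = z₁)
    (hbd₂ : ∀ z₁ z₂ : ℂ, ξ₂ z₁ z₂ 0 = z₂)
    (hL1 : ∀ z₁ z₂ : ℂ, ∀ x : ℝ, 0 ≤ x →
      ξ₁ (lam * z₁) (lam * z₂) (φ x) = lam * ξ₁ z₁ z₂ x)
    (hL2 : ∀ z₁ z₂ : ℂ, ∀ x : ℝ, 0 ≤ x →
      ξ₂ (lam * z₁) (lam * z₂) (φ x) = lam * ξ₂ z₁ z₂ x) :
    ∃ a₁ a₂ : ℝ → ℂ,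
      ContinuousOn a₁ (Set.Ici 0) ∧ ContinuousOn a₂ (Set.Ici 0) ∧
      a₁ 0 = 0 ∧ a₂ 0 = 0 ∧
      (∀ x : ℝ, 0 ≤ x → a₁ (φ x) = lam * a₁ x) ∧
      (∀ x : ℝ, 0 ≤ x → a₂ (φ x) = lam * a₂ x) ∧
      ∀ z₁ z₂ : ℂ, ∀ x : ℝ, 0 ≤ x →
        ξ₁ z₁ z₂ x = z₁ + a₁ x ∧ ξ₂ z₁ z₂ x = z₂ + a₂ x := by
  have hcc : ∀ (ξ : ℂ → ℂ → ℝ → ℂ),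
      ContinuousOn (fun p : ℂ × ℂ × ℝ => ξ p.1 p.2.1 p.2.2)
        (Set.univ ×ˢ Set.univ ×ˢ Set.Ici 0) →
      ∀ z w : ℂ, ContinuousOn (fun x => ξ z w x) (Set.Ici 0) := by
    intro ξ h z w
    have hmap : Set.MapsTo (fun x : ℝ => ((z, w, x) : ℂ × ℂ × ℝ)) (Set.Ici 0)
        (Set.univ ×ˢ Set.univ ×ˢ Set.Ici 0) := fun x hx => ⟨Set.mem_univ _, Set.mem_univ _, hx⟩
    exact h.comp (Continuous.continuousOn (by continuity)) hmap
  have key₁ := main_aux lam hlam φ hφcont hφbij hφ0 hexp ξ₁ hcont₁ hholo₁ hL1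
  have key₂ := main_aux lam hlam φ hφcont hφbij hφ0 hexp ξ₂ hcont₂ hholo₂ hL2
  refine ⟨fun x => ξ₁ 0 0 x, fun x => ξ₂ 0 0 x, hcc ξ₁ hcont₁ 0 0, hcc ξ₂ hcont₂ 0 0,
    hbd₁ 0 0, hbd₂ 0 0, ?_, ?_, ?_⟩
  · intro x hx
    have := hL1 0 0 x hx
    simpa using this
  · intro x hx
    have := hL2 0 0 x hx
    simpa using this
  · intro z w x hx
    constructor
    · have h := key₁ x hx z w
      rw [hbd₁ 1 0, hbd₁ 0 0, hbd₁ 0 1] at h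
      linear_combination h
    · have h := key₂ x hx z w
      rw [hbd₂ 1 0, hbd₂ 0 0, hbd₂ 0 1] at h
      linear_combination h
end

section
/- Let μ ∈ ℂ with |μ| > 1 and let p ≥ 2 be an integer. Suppose ξ₁, ξ₂ : ℂ² × [0,∞) → ℂ are as in the context and satisfy ξ₁(μᵖz₁, μz₂, φ(x)) = μᵖ·ξ₁(z₁,z₂,x) and ξ₂(μᵖz₁, μz₂, φ(x)) = μ·ξ₂(z₁,z₂,x) for all (z₁,z₂) ∈ ℂ² and x ≥ 0. Then there exist continuous functions a₀, a₁, …, a_{p−1}, b : [0,∞) → ℂ, all vanishing at 0, with aⱼ(φ(x)) = μ^{p−j}·aⱼ(x) for 0 ≤ j ≤ p−1 and b(φ(x)) = μ·b(x), such that ξ₁(z₁,z₂,x) = z₁ + Σ_{j=0}^{p−1} aⱼ(x)·z₂ʲ and ξ₂(z₁,z₂,x) = z₂ + b(x). (Classification in Case 2 of Section 3.2, underlying Theorem 3.10 (1)) -/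
open Set Filter Metric Polynomial


private lemma entire_poly_of_growth :
    ∀ (d : ℕ) (f : ℂ → ℂ), Differentiable ℂ f →
    ∀ C : ℝ, (∀ z, ‖f z‖ ≤ C * (1 + ‖z‖) ^ d) →
    ∃ c : ℕ → ℂ, ∀ z, f z = ∑ i ∈ Finset.range (d + 1), c i * z ^ i := by
  intro d
  induction d with
  | zero =>
    intro f hf C hC
    have hb : Bornology.IsBounded (Set.range f) := by
      rw [isBounded_iff_forall_norm_le]
      exact ⟨C, by rintro _ ⟨z, rfl⟩; simpa using hC z⟩
    refine ⟨fun _ => f 0, fun z => ?_⟩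
    simpa using hf.apply_eq_apply_of_bounded hb z 0
  | succ d ih =>
    intro f hf C hC
    have hC0 : 0 ≤ C := by
      have h0 : ‖f 0‖ ≤ C := by
        calc ‖f 0‖ ≤ C * (1 + ‖(0:ℂ)‖) ^ (d+1) := hC 0
        _ = C := by norm_num
      linarith [norm_nonneg (f 0)]
    set g : ℂ → ℂ := dslope f 0 with hg_def
    have hg : Differentiable ℂ g := by
      rw [← differentiableOn_univ]
      exact (Complex.differentiableOn_dslope (Filter.univ_mem)).mpr hf.differentiableOn
    obtain ⟨M, hM⟩ := (isCompact_closedBall (0:ℂ) 1).exists_bound_of_continuousOn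
      hg.continuous.continuousOn
    set C' : ℝ := max (max M 0) (4 * C) with hC'_def
    have hC'0 : 0 ≤ C' := le_trans (le_max_right M 0) (le_max_left _ _)
    have hgC : ∀ z, ‖g z‖ ≤ C' * (1 + ‖z‖) ^ d := by
      intro z
      have h1 : (1:ℝ) ≤ (1 + ‖z‖) ^ d := one_le_pow₀ (by linarith [norm_nonneg z])
      rcases le_or_gt ‖z‖ 1 with hz | hz
      · have hgM := hM z (by simpa [Metric.mem_closedBall] using hz)
        calc ‖g z‖ ≤ M := hgM
        _ ≤ C' := le_trans (le_max_left M 0) (le_max_left _ _)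
        _ = C' * 1 := (mul_one _).symm
        _ ≤ C' * (1 + ‖z‖) ^ d := by
            apply mul_le_mul_of_nonneg_left h1 hC'0
      · have hz0 : (0:ℝ) < ‖z‖ := lt_trans one_pos hz
        have hkey : (z - 0) • g z = f z - f 0 := sub_smul_dslope f 0 z
        have hnorm : ‖z‖ * ‖g z‖ = ‖f z - f 0‖ := by
          rw [← hkey]; simp [norm_smul]
        have h0 : ‖f 0‖ ≤ C := by
          calc ‖f 0‖ ≤ C * (1 + ‖(0:ℂ)‖) ^ (d+1) := hC 0
          _ = C := by norm_num
        have hb1 : ‖f z - f 0‖ ≤ C * (1 + ‖z‖) ^ (d+1) + C := by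
          calc ‖f z - f 0‖ ≤ ‖f z‖ + ‖f 0‖ := norm_sub_le _ _
          _ ≤ C * (1 + ‖z‖) ^ (d+1) + C := add_le_add (hC z) h0
        have hpow : (1 + ‖z‖) ^ (d+1) ≤ 2 * ‖z‖ * (1 + ‖z‖) ^ d := by
          rw [pow_succ]
          have h2 : (1 + ‖z‖) ≤ 2 * ‖z‖ := by linarith
          calc (1 + ‖z‖) ^ d * (1 + ‖z‖) ≤ (1 + ‖z‖) ^ d * (2 * ‖z‖) := by
                apply mul_le_mul_of_nonneg_left h2 (by positivity)
          _ = 2 * ‖z‖ * (1 + ‖z‖) ^ d := by ring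
        have hCle : C ≤ C * (1 + ‖z‖) ^ (d+1) := by
          nlinarith [one_le_pow₀ (show (1:ℝ) ≤ 1 + ‖z‖ by linarith [norm_nonneg z]) (n := d+1)]
        have hmul : ‖z‖ * ‖g z‖ ≤ ‖z‖ * (4 * C * (1 + ‖z‖) ^ d) := by
          rw [hnorm]
          calc ‖f z - f 0‖ ≤ 2 * (C * (1 + ‖z‖) ^ (d+1)) := by linarith
          _ ≤ 2 * (C * (2 * ‖z‖ * (1 + ‖z‖) ^ d)) := by
              apply mul_le_mul_of_nonneg_left _ (by norm_num)
              exact mul_le_mul_of_nonneg_left hpow hC0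
          _ = ‖z‖ * (4 * C * (1 + ‖z‖) ^ d) := by ring
        have h4 : ‖g z‖ ≤ 4 * C * (1 + ‖z‖) ^ d := (mul_le_mul_iff_right₀ hz0).mp hmul
        calc ‖g z‖ ≤ 4 * C * (1 + ‖z‖) ^ d := h4
        _ ≤ C' * (1 + ‖z‖) ^ d := by
            apply mul_le_mul_of_nonneg_right (le_max_right _ _) (by positivity)
    obtain ⟨c, hc⟩ := ih g hg C' hgC
    refine ⟨fun i => if i = 0 then f 0 else c (i - 1), fun z => ?_⟩
    have hfz : f z = f 0 + z * g z := by
      have hkey : (z - 0) • g z = f z - f 0 := sub_smul_dslope f 0 z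
      simp only [sub_zero, smul_eq_mul] at hkey
      linear_combination -hkey
    rw [hfz, hc z, Finset.mul_sum,
      Finset.sum_range_succ' (fun i => (if i = 0 then f 0 else c (i - 1)) * z ^ i) (d + 1)]
    simp only [Nat.add_sub_cancel, pow_zero, mul_one, if_pos rfl]
    have hterm : ∀ i ∈ Finset.range (d+1),
        z * (c i * z ^ i) = (if i + 1 = 0 then f 0 else c i) * z ^ (i+1) := by
      intro i _
      rw [if_neg (Nat.succ_ne_zero i)]
      ring
    rw [Finset.sum_congr rfl hterm]
    simp only [if_true]
    ring


private noncomputable def lagB (N j i : ℕ) : ℂ :=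
  (Lagrange.basis (Finset.range N) (fun k : ℕ => (k : ℂ)) i).coeff j

private lemma coeff_formula {N : ℕ} (f : ℂ → ℂ) (c : ℕ → ℂ)
    (h : ∀ w, f w = ∑ i ∈ Finset.range N, c i * w ^ i) :
    ∀ j < N, c j = ∑ i ∈ Finset.range N, f (i : ℂ) * lagB N j i := by
  classical
  set v : ℕ → ℂ := fun k => (k : ℂ) with hv
  have hvs : Set.InjOn v (Finset.range N) := fun a _ b _ hab => Nat.cast_injective hab
  set q : ℂ[X] := ∑ i ∈ Finset.range N, C (c i) * X ^ i with hq
  have heval : ∀ w, q.eval w = f w := by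
    intro w
    rw [h w, hq, Polynomial.eval_finset_sum]
    apply Finset.sum_congr rfl
    intro i _
    simp
  have hdeg : q.degree < (Finset.range N).card := by
    rw [Finset.card_range]
    have : q ∈ degreeLT ℂ N := by
      apply Submodule.sum_mem
      intro i hi
      rw [Polynomial.mem_degreeLT]
      exact lt_of_le_of_lt (Polynomial.degree_C_mul_X_pow_le i (c i))
        (by exact_mod_cast Finset.mem_range.mp hi)
    rwa [Polynomial.mem_degreeLT] at this
  have hinterp : q = Lagrange.interpolate (Finset.range N) v (fun i => f (v i)) := by
    have := Lagrange.eq_interpolate (f := q) hvs hdeg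
    rw [this]
    apply Lagrange.interpolate_eq_of_values_eq_on
    intro i _
    exact heval (v i)
  have hcoeffq : ∀ j < N, q.coeff j = c j := by
    intro j hj
    rw [hq, Polynomial.finset_sum_coeff]
    have : ∀ i ∈ Finset.range N, (C (c i) * X ^ i).coeff j = if j = i then c i else 0 := by
      intro i _
      rw [Polynomial.coeff_C_mul, Polynomial.coeff_X_pow]
      simp
    rw [Finset.sum_congr rfl this, Finset.sum_ite_eq (Finset.range N) j c]
    simp [Finset.mem_range.mpr hj]
  intro j hj
  rw [← hcoeffq j hj, hinterp, Lagrange.interpolate_apply, Polynomial.finset_sum_coeff]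
  apply Finset.sum_congr rfl
  intro i _
  rw [Polynomial.coeff_C_mul]
  rfl


private lemma exists_pow_between {t : ℝ} (ht : 1 < t) {r : ℝ} (hr : 0 ≤ r) :
    ∃ n : ℕ, r ≤ t ^ n ∧ t ^ n ≤ t * (1 + r) := by
  have hex : ∃ n : ℕ, r ≤ t ^ n := by
    obtain ⟨n, hn⟩ := pow_unbounded_of_one_lt r ht
    exact ⟨n, le_of_lt hn⟩
  classical
  refine ⟨Nat.find hex, Nat.find_spec hex, ?_⟩
  rcases Nat.eq_zero_or_pos (Nat.find hex) with h0 | hpos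
  · rw [h0, pow_zero]
    nlinarith
  · obtain ⟨m, hm⟩ := Nat.exists_eq_succ_of_ne_zero (Nat.pos_iff_ne_zero.mp hpos)
    have hmlt : ¬ (r ≤ t ^ m) := Nat.find_min hex (by omega)
    push_neg at hmlt
    rw [hm, pow_succ]
    have ht0 : 0 < t := lt_trans one_pos ht
    calc t ^ m * t ≤ r * t := by
          apply mul_le_mul_of_nonneg_right (le_of_lt hmlt) (le_of_lt ht0)
    _ ≤ t * (1 + r) := by nlinarith
  
private lemma shrink_exists (φ : ℝ → ℝ)
    (hφcont : ContinuousOn φ (Set.Ici 0))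
    (hφbij : Set.BijOn φ (Set.Ici 0) (Set.Ici 0))
    (hφ0 : φ 0 = 0)
    (hexp : ∀ x : ℝ, 0 < x → x < φ x) :
    ∃ ψ : ℝ → ℝ, (∀ y, 0 ≤ y → 0 ≤ ψ y ∧ ψ y ≤ y ∧ φ (ψ y) = y) ∧
      (∀ y, 0 ≤ y → ∀ n : ℕ, 0 ≤ ψ^[n] y ∧ ψ^[n] y ≤ y) ∧
      (∀ y, 0 ≤ y → Filter.Tendsto (fun n => ψ^[n] y) Filter.atTop (nhds 0)) := by
  classical
  set ψ : ℝ → ℝ := fun y => Function.invFunOn φ (Set.Ici 0) y with hψ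
  have hbase : ∀ y, 0 ≤ y → 0 ≤ ψ y ∧ ψ y ≤ y ∧ φ (ψ y) = y := by
    intro y hy
    have hyim : ∃ a ∈ Set.Ici (0:ℝ), φ a = y := by
      obtain ⟨a, ha, hay⟩ := hφbij.surjOn hy
      exact ⟨a, ha, hay⟩
    have hmem0 : ψ y ∈ Set.Ici (0:ℝ) := Function.invFunOn_mem hyim
    have heq : φ (ψ y) = y := Function.invFunOn_eq hyim
    refine ⟨hmem0, ?_, heq⟩
    by_contra hlt
    push_neg at hlt
    have h0 : 0 < ψ y := lt_of_le_of_lt hy hlt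
    have := hexp (ψ y) h0
    rw [heq] at this
    linarith
  have hiter : ∀ y, 0 ≤ y → ∀ n : ℕ, 0 ≤ ψ^[n] y ∧ ψ^[n] y ≤ y := by
    intro y hy n
    induction n with
    | zero =>
      simp only [Function.iterate_zero_apply]
      exact ⟨hy, le_refl y⟩
    | succ n ihn =>
      rw [Function.iterate_succ_apply']
      obtain ⟨h1, h2, _⟩ := hbase _ ihn.1
      exact ⟨h1, le_trans (le_trans h2 ihn.2) (le_refl y)⟩
  refine ⟨ψ, hbase, hiter, ?_⟩
  intro y hy
  have hanti : ∀ n : ℕ, ψ^[n+1] y ≤ ψ^[n] y := by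
    intro n
    rw [Function.iterate_succ_apply']
    exact (hbase _ (hiter y hy n).1).2.1
  have hantitone : Antitone (fun n => ψ^[n] y) :=
    antitone_nat_of_succ_le hanti
  have hbdd : BddBelow (Set.range fun n => ψ^[n] y) :=
    ⟨0, by rintro _ ⟨n, rfl⟩; exact (hiter y hy n).1⟩
  have htend : Filter.Tendsto (fun n => ψ^[n] y) Filter.atTop
      (nhds (⨅ n, ψ^[n] y)) := tendsto_atTop_ciInf hantitone hbdd
  set L : ℝ := ⨅ n, ψ^[n] y with hL
  have hL0 : 0 ≤ L := le_ciInf fun n => (hiter y hy n).1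
  -- show φ L = L
  have htendL : Filter.Tendsto (fun n => ψ^[n+1] y) Filter.atTop (nhds L) :=
    htend.comp (tendsto_add_atTop_nat 1)
  have htendin : Filter.Tendsto (fun n => ψ^[n+1] y) Filter.atTop (nhdsWithin L (Set.Ici 0)) := by
    rw [tendsto_nhdsWithin_iff]
    exact ⟨htendL, Filter.Eventually.of_forall fun n => (hiter y hy (n+1)).1⟩
  have hφL : Filter.Tendsto (fun n => φ (ψ^[n+1] y)) Filter.atTop (nhds (φ L)) :=
    (hφcont L hL0).tendsto.comp htendin
  have heq : ∀ n : ℕ, φ (ψ^[n+1] y) = ψ^[n] y := by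
    intro n
    rw [Function.iterate_succ_apply']
    exact (hbase _ (hiter y hy n).1).2.2
  have hφLL : φ L = L := by
    apply tendsto_nhds_unique _ htend
    convert hφL using 1
    funext n
    exact (heq n).symm
  have hLzero : L = 0 := by
    by_contra hne
    have hpos : 0 < L := lt_of_le_of_ne hL0 (Ne.symm hne)
    have := hexp L hpos
    rw [hφLL] at this
    linarith
  rwa [hLzero] at htend


private lemma affine_of_coeffs (f : ℂ → ℂ) (c : ℕ → ℂ)
    (hc : ∀ z, f z = ∑ i ∈ Finset.range 2, c i * z ^ i) :
    ∀ z, f z = f 0 + (f 1 - f 0) * z := by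
  intro z
  have e0 := hc 0
  have e1 := hc 1
  have ez := hc z
  simp [Finset.sum_range_succ] at e0 e1 ez
  rw [ez, e0, e1]
  ring

set_option maxHeartbeats 4000000 in
/-- Case 2 of Section 3.2 (underlying Theorem 3.10 (1)): for `G(z₁,z₂) = (μᵖz₁, μz₂)`
with `|μ| > 1`, `p ≥ 2`, any leafwise-holomorphic lift `(ξ₁, ξ₂)` restricting to
the identity on the boundary and equivariant for `T` has the form
`ξ₁ = z₁ + Σ_{j<p} aⱼ(x)·z₂ʲ`, `ξ₂ = z₂ + b(x)` with `aⱼ ∈ 𝒵_{φ,μ^{p−j}}`,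
`b ∈ 𝒵_{φ,μ}`. -/
theorem case_2_classification (μ : ℂ) (hμ : 1 < ‖μ‖)
    (p : ℕ) (hp : 2 ≤ p)
    (φ : ℝ → ℝ)
    (hφcont : ContinuousOn φ (Set.Ici 0))
    (hφmono : StrictMonoOn φ (Set.Ici 0))
    (hφbij : Set.BijOn φ (Set.Ici 0) (Set.Ici 0))
    (hφ0 : φ 0 = 0)
    (hexp : ∀ x : ℝ, 0 < x → x < φ x)
    (ξ₁ ξ₂ : ℂ → ℂ → ℝ → ℂ)
    (hcont₁ : ContinuousOn (fun q : ℂ × ℂ × ℝ => ξ₁ q.1 q.2.1 q.2.2)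
      (Set.univ ×ˢ Set.univ ×ˢ Set.Ici 0))
    (hcont₂ : ContinuousOn (fun q : ℂ × ℂ × ℝ => ξ₂ q.1 q.2.1 q.2.2)
      (Set.univ ×ˢ Set.univ ×ˢ Set.Ici 0))
    (hholo₁ : ∀ x : ℝ, 0 ≤ x → Differentiable ℂ (fun z : ℂ × ℂ => ξ₁ z.1 z.2 x))
    (hholo₂ : ∀ x : ℝ, 0 ≤ x → Differentiable ℂ (fun z : ℂ × ℂ => ξ₂ z.1 z.2 x))
    (hbd₁ : ∀ z₁ z₂ : ℂ, ξ₁ z₁ z₂ 0 = z₁)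
    (hbd₂ : ∀ z₁ z₂ : ℂ, ξ₂ z₁ z₂ 0 = z₂)
    (hL1 : ∀ z₁ z₂ : ℂ, ∀ x : ℝ, 0 ≤ x →
      ξ₁ (μ ^ p * z₁) (μ * z₂) (φ x) = μ ^ p * ξ₁ z₁ z₂ x)
    (hL2 : ∀ z₁ z₂ : ℂ, ∀ x : ℝ, 0 ≤ x →
      ξ₂ (μ ^ p * z₁) (μ * z₂) (φ x) = μ * ξ₂ z₁ z₂ x) :
    ∃ a : Fin p → ℝ → ℂ, ∃ b : ℝ → ℂ,
      (∀ j : Fin p, ContinuousOn (a j) (Set.Ici 0)) ∧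
      ContinuousOn b (Set.Ici 0) ∧
      (∀ j : Fin p, a j 0 = 0) ∧ b 0 = 0 ∧
      (∀ j : Fin p, ∀ x : ℝ, 0 ≤ x → a j (φ x) = μ ^ (p - (j : ℕ)) * a j x) ∧
      (∀ x : ℝ, 0 ≤ x → b (φ x) = μ * b x) ∧
      ∀ z₁ z₂ : ℂ, ∀ x : ℝ, 0 ≤ x →
        ξ₁ z₁ z₂ x = z₁ + ∑ j : Fin p, a j x * z₂ ^ (j : ℕ) ∧
        ξ₂ z₁ z₂ x = z₂ + b x := by
  -- Basic facts about μ
  have hμn : (1:ℝ) < ‖μ‖ := by exact hμ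
  have hμ0 : μ ≠ 0 := by
    intro h; rw [h] at hμn; simp at hμn; linarith
  have hμp0 : μ ^ p ≠ 0 := pow_ne_zero p hμ0
  have hμpn : (1:ℝ) < ‖μ ^ p‖ := by
    rw [norm_pow]; exact one_lt_pow₀ hμn (by omega)
  have hle : ‖μ‖ ≤ ‖μ ^ p‖ := by
    rw [norm_pow]
    calc ‖μ‖ = ‖μ‖ ^ 1 := (pow_one _).symm
    _ ≤ ‖μ‖ ^ p := pow_le_pow_right₀ (le_of_lt hμn) (by omega)
  have hφpos : ∀ x : ℝ, 0 ≤ x → 0 ≤ φ x := fun x hx => hφbij.mapsTo hx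
  obtain ⟨ψ, hψbase, hψiter, hψtend⟩ := shrink_exists φ hφcont hφbij hφ0 hexp
  -- The vanishing lemma
  have hvanish : ∀ (c : ℝ → ℂ) (lam : ℂ), ContinuousOn c (Set.Ici 0) → ‖lam‖ ≤ 1 → c 0 = 0 →
      (∀ x, 0 ≤ x → c (φ x) = lam * c x) → ∀ y, 0 ≤ y → c y = 0 := by
    intro c lam hccont hlam hc0 hrec y hy
    have hiterc : ∀ n : ℕ, c y = lam ^ n * c (ψ^[n] y) := by
      intro n
      induction n with
      | zero => simp
      | succ n ihn =>
        rw [ihn, Function.iterate_succ_apply']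
        obtain ⟨h1, _, h3⟩ := hψbase _ (hψiter y hy n).1
        have hstep : c (ψ^[n] y) = lam * c (ψ (ψ^[n] y)) := by
          conv_lhs => rw [← h3]
          exact hrec _ h1
        rw [hstep, pow_succ]
        ring
    have htendc : Filter.Tendsto (fun n => c (ψ^[n] y)) Filter.atTop (nhds 0) := by
      rw [← hc0]
      apply (hccont 0 Set.self_mem_Ici).tendsto.comp
      rw [tendsto_nhdsWithin_iff]
      exact ⟨hψtend y hy, Filter.Eventually.of_forall fun n => (hψiter y hy n).1⟩
    have hnorm : Filter.Tendsto (fun n => lam ^ n * c (ψ^[n] y)) Filter.atTop (nhds 0) := by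
      apply squeeze_zero_norm (fun n => ?_)
        (tendsto_zero_iff_norm_tendsto_zero.mp htendc)
      rw [norm_mul]
      calc ‖lam ^ n‖ * ‖c (ψ^[n] y)‖ ≤ 1 * ‖c (ψ^[n] y)‖ := by
            apply mul_le_mul_of_nonneg_right _ (norm_nonneg _)
            rw [norm_pow]
            exact pow_le_one₀ (norm_nonneg _) hlam
      _ = ‖c (ψ^[n] y)‖ := one_mul _
    have hconst : Filter.Tendsto (fun _ : ℕ => c y) Filter.atTop (nhds 0) := by
      have : (fun n : ℕ => lam ^ n * c (ψ^[n] y)) = fun _ : ℕ => c y := by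
        funext n; exact (hiterc n).symm
      rwa [this] at hnorm
    exact tendsto_nhds_unique tendsto_const_nhds hconst
  -- The iteration lemma
  have hiterF : ∀ (F : ℂ → ℂ → ℝ → ℂ) (σ₁ σ₂ lam : ℂ), σ₁ ≠ 0 → σ₂ ≠ 0 →
      (∀ u v t, 0 ≤ t → F (σ₁*u) (σ₂*v) (φ t) = lam * F u v t) →
      ∀ (n : ℕ), ∀ u v : ℂ, ∀ y : ℝ, 0 ≤ y →
        F u v y = lam ^ n * F (u / σ₁ ^ n) (v / σ₂ ^ n) (ψ^[n] y) := by
    intro F σ₁ σ₂ lam h1 h2 hstep n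
    induction n with
    | zero => intro u v y _; simp
    | succ n ihn =>
      intro u v y hy
      rw [ihn u v y hy]
      obtain ⟨ht1, _, ht3⟩ := hψbase _ (hψiter y hy n).1
      have hu : u / σ₁ ^ n = σ₁ * (u / σ₁ ^ (n+1)) := by
        field_simp [pow_succ]; ring
      have hv : v / σ₂ ^ n = σ₂ * (v / σ₂ ^ (n+1)) := by
        field_simp [pow_succ]; ring
      have hstep' : F (u / σ₁ ^ n) (v / σ₂ ^ n) (ψ^[n] y)
          = lam * F (u / σ₁ ^ (n+1)) (v / σ₂ ^ (n+1)) (ψ (ψ^[n] y)) := by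
        conv_lhs => rw [← ht3, hu, hv]
        exact hstep _ _ _ ht1
      rw [Function.iterate_succ_apply', hstep', pow_succ]
      ring
  -- Continuity in x of slices
  have hcx : ∀ (ξ : ℂ → ℂ → ℝ → ℂ),
      ContinuousOn (fun q : ℂ × ℂ × ℝ => ξ q.1 q.2.1 q.2.2) (Set.univ ×ˢ Set.univ ×ˢ Set.Ici 0) →
      ∀ w₁ w₂ : ℂ, ContinuousOn (fun x => ξ w₁ w₂ x) (Set.Ici 0) := by
    intro ξ hc w₁ w₂
    have hmap : Set.MapsTo (fun x : ℝ => ((w₁, w₂, x) : ℂ × ℂ × ℝ)) (Set.Ici 0)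
        (Set.univ ×ˢ Set.univ ×ˢ Set.Ici 0) := by
      intro x hx
      simp only [Set.mem_prod, Set.mem_univ, true_and]
      exact hx
    exact hc.comp
      ((continuous_const.prodMk (continuous_const.prodMk continuous_id)).continuousOn) hmap
  -- Bounds on compact boxes
  have hbound : ∀ (ξ : ℂ → ℂ → ℝ → ℂ),
      ContinuousOn (fun q : ℂ × ℂ × ℝ => ξ q.1 q.2.1 q.2.2) (Set.univ ×ˢ Set.univ ×ˢ Set.Ici 0) →
      ∀ x R : ℝ, 0 ≤ x → 0 ≤ R → ∃ M : ℝ, 0 ≤ M ∧ ∀ w₁ w₂ : ℂ, ∀ y : ℝ,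
        ‖w₁‖ ≤ R → ‖w₂‖ ≤ R → y ∈ Set.Icc 0 x → ‖ξ w₁ w₂ y‖ ≤ M := by
    intro ξ hc x R hx hR
    have hK : IsCompact ((Metric.closedBall (0:ℂ) R) ×ˢ (Metric.closedBall (0:ℂ) R) ×ˢ
        (Set.Icc (0:ℝ) x)) :=
      (isCompact_closedBall _ _).prod ((isCompact_closedBall _ _).prod isCompact_Icc)
    have hKsub : ((Metric.closedBall (0:ℂ) R) ×ˢ (Metric.closedBall (0:ℂ) R) ×ˢ
        (Set.Icc (0:ℝ) x)) ⊆ Set.univ ×ˢ Set.univ ×ˢ Set.Ici 0 := by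
      intro q hq
      simp only [Set.mem_prod, Metric.mem_closedBall] at hq
      simp only [Set.mem_prod, Set.mem_univ, true_and]
      exact hq.2.2.1
    obtain ⟨M, hM⟩ := hK.exists_bound_of_continuousOn (hc.mono hKsub)
    refine ⟨max M 0, le_max_right _ _, ?_⟩
    intro w₁ w₂ y h1 h2 hy
    have hmem : ((w₁, w₂, y) : ℂ × ℂ × ℝ) ∈ ((Metric.closedBall (0:ℂ) R) ×ˢ
        (Metric.closedBall (0:ℂ) R) ×ˢ (Set.Icc (0:ℝ) x)) := by
      simp only [Set.mem_prod, Metric.mem_closedBall, dist_zero_right]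
      exact ⟨h1, h2, hy⟩
    exact le_trans (hM _ hmem) (le_max_left _ _)
  -- Iterated equivariance
  have hit₁ := hiterF ξ₁ (μ^p) μ (μ^p) hμp0 hμ0 (fun u v t ht => hL1 u v t ht)
  have hit₂ := hiterF ξ₂ (μ^p) μ μ hμp0 hμ0 (fun u v t ht => hL2 u v t ht)
  -- ξ₂ is affine in z₁
  have hE2 : ∀ z₂ : ℂ, ∀ x : ℝ, 0 ≤ x → ∀ z₁ : ℂ,
      ξ₂ z₁ z₂ x = ξ₂ 0 z₂ x + (ξ₂ 1 z₂ x - ξ₂ 0 z₂ x) * z₁ := by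
    intro z₂ x hx
    set R : ℝ := max 1 ‖z₂‖ with hR_def
    have hR0 : (0:ℝ) ≤ R := le_trans zero_le_one (le_max_left _ _)
    obtain ⟨M, hM0, hM⟩ := hbound ξ₂ hcont₂ x R hx hR0
    set f : ℂ → ℂ := fun z₁ => ξ₂ z₁ z₂ x with hf_def
    have hdiff : Differentiable ℂ f :=
      (hholo₂ x hx).comp (differentiable_id.prodMk (differentiable_const _))
    have hgrow : ∀ z₁, ‖f z₁‖ ≤ (‖μ ^ p‖ * M) * (1 + ‖z₁‖) ^ 1 := by
      intro z₁
      obtain ⟨n, hn1, hn2⟩ := exists_pow_between hμpn (norm_nonneg z₁)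
      have hrep : f z₁ = μ ^ n * ξ₂ (z₁ / (μ^p) ^ n) (z₂ / μ ^ n) (ψ^[n] x) :=
        hit₂ n z₁ z₂ x hx
      rw [hrep, norm_mul]
      have hp1 : ‖z₁ / (μ^p) ^ n‖ ≤ R := by
        rw [norm_div, norm_pow]
        refine le_trans (le_trans ?_ (le_refl (1:ℝ))) (le_max_left _ _)
        exact div_le_one_of_le₀ hn1 (by positivity)
      have hp2 : ‖z₂ / μ ^ n‖ ≤ R := by
        rw [norm_div, norm_pow]
        exact le_trans (div_le_self (norm_nonneg _) (one_le_pow₀ (le_of_lt hμn)))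
          (le_max_right _ _)
      have hp3 : ψ^[n] x ∈ Set.Icc 0 x := ⟨(hψiter x hx n).1, (hψiter x hx n).2⟩
      have hξ := hM _ _ _ hp1 hp2 hp3
      have hμnb : ‖μ ^ n‖ ≤ ‖μ ^ p‖ * (1 + ‖z₁‖) := by
        rw [norm_pow]
        calc ‖μ‖ ^ n ≤ ‖μ ^ p‖ ^ n := pow_le_pow_left₀ (norm_nonneg μ) hle n
        _ ≤ ‖μ ^ p‖ * (1 + ‖z₁‖) := hn2
      calc ‖μ ^ n‖ * ‖ξ₂ (z₁ / (μ^p) ^ n) (z₂ / μ ^ n) (ψ^[n] x)‖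
          ≤ (‖μ ^ p‖ * (1 + ‖z₁‖)) * M :=
            mul_le_mul hμnb hξ (norm_nonneg _) (by positivity)
      _ = (‖μ ^ p‖ * M) * (1 + ‖z₁‖) ^ 1 := by ring
    obtain ⟨c, hc⟩ := entire_poly_of_growth 1 f hdiff _ hgrow
    exact affine_of_coeffs f c hc
  -- ξ₁ is affine in z₁
  have hE1 : ∀ z₂ : ℂ, ∀ x : ℝ, 0 ≤ x → ∀ z₁ : ℂ,
      ξ₁ z₁ z₂ x = ξ₁ 0 z₂ x + (ξ₁ 1 z₂ x - ξ₁ 0 z₂ x) * z₁ := by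
    intro z₂ x hx
    set R : ℝ := max 1 ‖z₂‖ with hR_def
    have hR0 : (0:ℝ) ≤ R := le_trans zero_le_one (le_max_left _ _)
    obtain ⟨M, hM0, hM⟩ := hbound ξ₁ hcont₁ x R hx hR0
    set f : ℂ → ℂ := fun z₁ => ξ₁ z₁ z₂ x with hf_def
    have hdiff : Differentiable ℂ f :=
      (hholo₁ x hx).comp (differentiable_id.prodMk (differentiable_const _))
    have hgrow : ∀ z₁, ‖f z₁‖ ≤ (‖μ ^ p‖ * M) * (1 + ‖z₁‖) ^ 1 := by
      intro z₁
      obtain ⟨n, hn1, hn2⟩ := exists_pow_between hμpn (norm_nonneg z₁)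
      have hrep : f z₁ = (μ^p) ^ n * ξ₁ (z₁ / (μ^p) ^ n) (z₂ / μ ^ n) (ψ^[n] x) :=
        hit₁ n z₁ z₂ x hx
      rw [hrep, norm_mul]
      have hp1 : ‖z₁ / (μ^p) ^ n‖ ≤ R := by
        rw [norm_div, norm_pow]
        refine le_trans ?_ (le_max_left _ _)
        exact div_le_one_of_le₀ hn1 (by positivity)
      have hp2 : ‖z₂ / μ ^ n‖ ≤ R := by
        rw [norm_div, norm_pow]
        exact le_trans (div_le_self (norm_nonneg _) (one_le_pow₀ (le_of_lt hμn)))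
          (le_max_right _ _)
      have hp3 : ψ^[n] x ∈ Set.Icc 0 x := ⟨(hψiter x hx n).1, (hψiter x hx n).2⟩
      have hξ := hM _ _ _ hp1 hp2 hp3
      have hμnb : ‖(μ^p) ^ n‖ ≤ ‖μ ^ p‖ * (1 + ‖z₁‖) := by
        rw [norm_pow]; exact hn2
      calc ‖(μ^p) ^ n‖ * ‖ξ₁ (z₁ / (μ^p) ^ n) (z₂ / μ ^ n) (ψ^[n] x)‖
          ≤ (‖μ ^ p‖ * (1 + ‖z₁‖)) * M :=
            mul_le_mul hμnb hξ (norm_nonneg _) (by positivity)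
      _ = (‖μ ^ p‖ * M) * (1 + ‖z₁‖) ^ 1 := by ring
    obtain ⟨c, hc⟩ := entire_poly_of_growth 1 f hdiff _ hgrow
    exact affine_of_coeffs f c hc
  
  -- One-step relations for the z₂-coefficient functions
  have hstepβ₂ : ∀ v : ℂ, ∀ t : ℝ, 0 ≤ t →
      ξ₂ 1 (μ * v) (φ t) - ξ₂ 0 (μ * v) (φ t) = (μ / μ ^ p) * (ξ₂ 1 v t - ξ₂ 0 v t) := by
    intro v t ht
    have hA := hL2 ((μ^p)⁻¹) v t ht
    rw [mul_inv_cancel₀ hμp0] at hA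
    have hB := hL2 0 v t ht
    rw [mul_zero] at hB
    have hC := hE2 v t ht ((μ^p)⁻¹)
    rw [hC] at hA
    linear_combination hA - hB
  have hstepγ₂ : ∀ v : ℂ, ∀ t : ℝ, 0 ≤ t → ξ₂ 0 (μ * v) (φ t) = μ * ξ₂ 0 v t := by
    intro v t ht
    have hB := hL2 0 v t ht
    rwa [mul_zero] at hB
  have hstepβ₁ : ∀ v : ℂ, ∀ t : ℝ, 0 ≤ t →
      ξ₁ 1 (μ * v) (φ t) - ξ₁ 0 (μ * v) (φ t) = 1 * (ξ₁ 1 v t - ξ₁ 0 v t) := by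
    intro v t ht
    have hA := hL1 ((μ^p)⁻¹) v t ht
    rw [mul_inv_cancel₀ hμp0] at hA
    have hB := hL1 0 v t ht
    rw [mul_zero] at hB
    have hC := hE1 v t ht ((μ^p)⁻¹)
    rw [hC] at hA
    have hinv : μ ^ p * (μ ^ p)⁻¹ = 1 := mul_inv_cancel₀ hμp0
    linear_combination hA - hB + (ξ₁ 1 v t - ξ₁ 0 v t) * hinv
  have hstepγ₁ : ∀ v : ℂ, ∀ t : ℝ, 0 ≤ t → ξ₁ 0 (μ * v) (φ t) = μ ^ p * ξ₁ 0 v t := by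
    intro v t ht
    have hB := hL1 0 v t ht
    rwa [mul_zero] at hB
  -- Iterations for them
  have hitβ₂ := hiterF (fun _ v t => ξ₂ 1 v t - ξ₂ 0 v t) 1 μ (μ / μ ^ p) one_ne_zero hμ0
    (fun u v t ht => hstepβ₂ v t ht)
  have hitβ₁ := hiterF (fun _ v t => ξ₁ 1 v t - ξ₁ 0 v t) 1 μ 1 one_ne_zero hμ0
    (fun u v t ht => hstepβ₁ v t ht)
  have hitγ₂ := hiterF (fun _ v t => ξ₂ 0 v t) 1 μ μ one_ne_zero hμ0
    (fun u v t ht => hstepγ₂ v t ht)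
  have hitγ₁ := hiterF (fun _ v t => ξ₁ 0 v t) 1 μ (μ ^ p) one_ne_zero hμ0
    (fun u v t ht => hstepγ₁ v t ht)
  -- β₂ vanishes identically
  have hβ₂zero : ∀ v : ℂ, ∀ x : ℝ, 0 ≤ x → ξ₂ 1 v x - ξ₂ 0 v x = 0 := by
    have hccont : ContinuousOn (fun x => ξ₂ 1 0 x - ξ₂ 0 0 x) (Set.Ici 0) :=
      (hcx ξ₂ hcont₂ 1 0).sub (hcx ξ₂ hcont₂ 0 0)
    have hlam : ‖μ / μ ^ p‖ ≤ 1 := by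
      rw [norm_div]
      exact div_le_one_of_le₀ hle (norm_nonneg _)
    have hrec0 : ∀ x, 0 ≤ x →
        ξ₂ 1 0 (φ x) - ξ₂ 0 0 (φ x) = (μ / μ ^ p) * (ξ₂ 1 0 x - ξ₂ 0 0 x) := by
      intro x hx
      have := hstepβ₂ 0 x hx
      rwa [mul_zero] at this
    have hczero : ∀ y, 0 ≤ y → ξ₂ 1 0 y - ξ₂ 0 0 y = 0 :=
      hvanish _ _ hccont hlam (by rw [hbd₂, hbd₂]; ring) hrec0
    intro v x hx
    obtain ⟨M, hM0, hM⟩ := hbound ξ₂ hcont₂ x 1 hx zero_le_one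
    set g : ℂ → ℂ := fun v => ξ₂ 1 v x - ξ₂ 0 v x with hg_def
    have hdiffg : Differentiable ℂ g :=
      ((hholo₂ x hx).comp ((differentiable_const _).prodMk differentiable_id)).sub
        ((hholo₂ x hx).comp ((differentiable_const _).prodMk differentiable_id))
    have hbdg : ∀ w, ‖g w‖ ≤ (M + M) * (1 + ‖w‖) ^ 0 := by
      intro w
      obtain ⟨n, hn1, _⟩ := exists_pow_between hμn (norm_nonneg w)
      have hrep : g w = (μ / μ ^ p) ^ n *
          (ξ₂ 1 (w / μ ^ n) (ψ^[n] x) - ξ₂ 0 (w / μ ^ n) (ψ^[n] x)) := hitβ₂ n 0 w x hx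
      rw [hrep, norm_mul, pow_zero, mul_one]
      have hp2 : ‖w / μ ^ n‖ ≤ 1 := by
        rw [norm_div, norm_pow]
        exact div_le_one_of_le₀ hn1 (by positivity)
      have hp3 : ψ^[n] x ∈ Set.Icc 0 x := ⟨(hψiter x hx n).1, (hψiter x hx n).2⟩
      have hin : ‖ξ₂ 1 (w / μ ^ n) (ψ^[n] x) - ξ₂ 0 (w / μ ^ n) (ψ^[n] x)‖ ≤ M + M := by
        calc ‖ξ₂ 1 (w / μ ^ n) (ψ^[n] x) - ξ₂ 0 (w / μ ^ n) (ψ^[n] x)‖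
            ≤ ‖ξ₂ 1 (w / μ ^ n) (ψ^[n] x)‖ + ‖ξ₂ 0 (w / μ ^ n) (ψ^[n] x)‖ := norm_sub_le _ _
        _ ≤ M + M := add_le_add
              (hM _ _ _ (by simp) hp2 hp3) (hM _ _ _ (by simp) hp2 hp3)
      calc ‖(μ / μ ^ p) ^ n‖ * ‖ξ₂ 1 (w / μ ^ n) (ψ^[n] x) - ξ₂ 0 (w / μ ^ n) (ψ^[n] x)‖
          ≤ 1 * (M + M) := by
            apply mul_le_mul _ hin (norm_nonneg _) zero_le_one
            rw [norm_pow]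
            exact pow_le_one₀ (norm_nonneg _) hlam
      _ = M + M := one_mul _
    obtain ⟨c, hcg⟩ := entire_poly_of_growth 0 g hdiffg _ hbdg
    have hv : ξ₂ 1 v x - ξ₂ 0 v x = c 0 := by simpa using hcg v
    have h00 : ξ₂ 1 0 x - ξ₂ 0 0 x = c 0 := by simpa using hcg 0
    rw [hv, ← h00]
    exact hczero x hx
  -- β₁ is identically 1
  have hβ₁one : ∀ v : ℂ, ∀ x : ℝ, 0 ≤ x → ξ₁ 1 v x - ξ₁ 0 v x = 1 := by
    have hconst : ∀ v : ℂ, ∀ x : ℝ, 0 ≤ x →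
        ξ₁ 1 v x - ξ₁ 0 v x = ξ₁ 1 0 x - ξ₁ 0 0 x := by
      intro v x hx
      obtain ⟨M, hM0, hM⟩ := hbound ξ₁ hcont₁ x 1 hx zero_le_one
      set g : ℂ → ℂ := fun v => ξ₁ 1 v x - ξ₁ 0 v x with hg_def
      have hdiffg : Differentiable ℂ g :=
        ((hholo₁ x hx).comp ((differentiable_const _).prodMk differentiable_id)).sub
          ((hholo₁ x hx).comp ((differentiable_const _).prodMk differentiable_id))
      have hbdg : ∀ w, ‖g w‖ ≤ (M + M) * (1 + ‖w‖) ^ 0 := by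
        intro w
        obtain ⟨n, hn1, _⟩ := exists_pow_between hμn (norm_nonneg w)
        have hrep : g w = (1:ℂ) ^ n *
            (ξ₁ 1 (w / μ ^ n) (ψ^[n] x) - ξ₁ 0 (w / μ ^ n) (ψ^[n] x)) := hitβ₁ n 0 w x hx
        rw [hrep, one_pow, one_mul, pow_zero, mul_one]
        have hp2 : ‖w / μ ^ n‖ ≤ 1 := by
          rw [norm_div, norm_pow]
          exact div_le_one_of_le₀ hn1 (by positivity)
        have hp3 : ψ^[n] x ∈ Set.Icc 0 x := ⟨(hψiter x hx n).1, (hψiter x hx n).2⟩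
        calc ‖ξ₁ 1 (w / μ ^ n) (ψ^[n] x) - ξ₁ 0 (w / μ ^ n) (ψ^[n] x)‖
            ≤ ‖ξ₁ 1 (w / μ ^ n) (ψ^[n] x)‖ + ‖ξ₁ 0 (w / μ ^ n) (ψ^[n] x)‖ := norm_sub_le _ _
        _ ≤ M + M := add_le_add
              (hM _ _ _ (by simp) hp2 hp3) (hM _ _ _ (by simp) hp2 hp3)
      obtain ⟨c, hcg⟩ := entire_poly_of_growth 0 g hdiffg _ hbdg
      have hv : ξ₁ 1 v x - ξ₁ 0 v x = c 0 := by simpa using hcg v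
      have h00 : ξ₁ 1 0 x - ξ₁ 0 0 x = c 0 := by simpa using hcg 0
      rw [hv, h00]
    have hccont : ContinuousOn (fun x => (ξ₁ 1 0 x - ξ₁ 0 0 x) - 1) (Set.Ici 0) :=
      (((hcx ξ₁ hcont₁ 1 0).sub (hcx ξ₁ hcont₁ 0 0)).sub continuousOn_const)
    have hrec0 : ∀ x, 0 ≤ x →
        (ξ₁ 1 0 (φ x) - ξ₁ 0 0 (φ x)) - 1 = 1 * ((ξ₁ 1 0 x - ξ₁ 0 0 x) - 1) := by
      intro x hx
      have := hstepβ₁ 0 x hx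
      rw [mul_zero] at this
      rw [this]
      ring
    have hczero : ∀ y, 0 ≤ y → (ξ₁ 1 0 y - ξ₁ 0 0 y) - 1 = 0 :=
      hvanish _ _ hccont norm_one.le (by rw [hbd₁, hbd₁]; ring) hrec0
    intro v x hx
    rw [hconst v x hx]
    have := hczero x hx
    linear_combination this
  -- ξ₂ 0 · · is affine in z₂ : coefficients b and α
  have hAff₂ : ∀ x : ℝ, 0 ≤ x → ∀ z₂ : ℂ,
      ξ₂ 0 z₂ x = ξ₂ 0 0 x + (ξ₂ 0 1 x - ξ₂ 0 0 x) * z₂ := by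
    intro x hx
    obtain ⟨M, hM0, hM⟩ := hbound ξ₂ hcont₂ x 1 hx zero_le_one
    set g : ℂ → ℂ := fun v => ξ₂ 0 v x with hg_def
    have hdiffg : Differentiable ℂ g :=
      (hholo₂ x hx).comp ((differentiable_const _).prodMk differentiable_id)
    have hbdg : ∀ w, ‖g w‖ ≤ (‖μ‖ * M) * (1 + ‖w‖) ^ 1 := by
      intro w
      obtain ⟨n, hn1, hn2⟩ := exists_pow_between hμn (norm_nonneg w)
      have hrep : g w = μ ^ n * ξ₂ 0 (w / μ ^ n) (ψ^[n] x) := hitγ₂ n 0 w x hx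
      rw [hrep, norm_mul]
      have hp2 : ‖w / μ ^ n‖ ≤ 1 := by
        rw [norm_div, norm_pow]
        exact div_le_one_of_le₀ hn1 (by positivity)
      have hp3 : ψ^[n] x ∈ Set.Icc 0 x := ⟨(hψiter x hx n).1, (hψiter x hx n).2⟩
      calc ‖μ ^ n‖ * ‖ξ₂ 0 (w / μ ^ n) (ψ^[n] x)‖ ≤ (‖μ‖ * (1 + ‖w‖)) * M := by
            apply mul_le_mul _ (hM _ _ _ (by simp) hp2 hp3) (norm_nonneg _) (by positivity)
            rw [norm_pow]
            exact hn2
      _ = (‖μ‖ * M) * (1 + ‖w‖) ^ 1 := by ring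
    obtain ⟨c, hcg⟩ := entire_poly_of_growth 1 g hdiffg _ hbdg
    exact fun z₂ => affine_of_coeffs g c hcg z₂
  -- α ≡ 1
  have hα : ∀ x : ℝ, 0 ≤ x → ξ₂ 0 1 x - ξ₂ 0 0 x = 1 := by
    have hccont : ContinuousOn (fun x => (ξ₂ 0 1 x - ξ₂ 0 0 x) - 1) (Set.Ici 0) :=
      (((hcx ξ₂ hcont₂ 0 1).sub (hcx ξ₂ hcont₂ 0 0)).sub continuousOn_const)
    have hrec0 : ∀ x, 0 ≤ x →
        (ξ₂ 0 1 (φ x) - ξ₂ 0 0 (φ x)) - 1 = 1 * ((ξ₂ 0 1 x - ξ₂ 0 0 x) - 1) := by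
      intro x hx
      have h1 : ξ₂ 0 (μ * 1) (φ x) = μ * ξ₂ 0 1 x := hstepγ₂ 1 x hx
      have h0 : ξ₂ 0 0 (φ x) = μ * ξ₂ 0 0 x := by
        have := hstepγ₂ 0 x hx
        rwa [mul_zero] at this
      rw [mul_one] at h1
      have hexpand := hAff₂ (φ x) (hφpos x hx) μ
      -- ξ₂ 0 μ (φ x) = ξ₂ 0 0 (φ x) + (ξ₂ 0 1 (φ x) - ξ₂ 0 0 (φ x)) * μ
      have hkey : (ξ₂ 0 1 (φ x) - ξ₂ 0 0 (φ x)) * μ = μ * (ξ₂ 0 1 x - ξ₂ 0 0 x) := by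
        linear_combination h1 - h0 - hexpand
      have := mul_right_cancel₀ hμ0 (by linear_combination hkey :
        (ξ₂ 0 1 (φ x) - ξ₂ 0 0 (φ x)) * μ = (ξ₂ 0 1 x - ξ₂ 0 0 x) * μ)
      rw [this]
      ring
    have hczero : ∀ y, 0 ≤ y → (ξ₂ 0 1 y - ξ₂ 0 0 y) - 1 = 0 :=
      hvanish _ _ hccont norm_one.le (by rw [hbd₂, hbd₂]; ring) hrec0
    intro x hx
    linear_combination hczero x hx
  -- Full description of ξ₂
  have hξ₂final : ∀ z₁ z₂ : ℂ, ∀ x : ℝ, 0 ≤ x → ξ₂ z₁ z₂ x = z₂ + ξ₂ 0 0 x := by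
    intro z₁ z₂ x hx
    have h1 := hE2 z₂ x hx z₁
    rw [hβ₂zero z₂ x hx] at h1
    rw [h1, hAff₂ x hx z₂, hα x hx]
    ring
  -- The polynomial coefficients of ξ₁ 0 · x
  set A : ℕ → ℝ → ℂ := fun j x => ∑ i ∈ Finset.range (p+1), ξ₁ 0 (i : ℂ) x * lagB (p+1) j i
    with hA_def
  have hrepγ : ∀ x : ℝ, 0 ≤ x → ∃ c : ℕ → ℂ,
      ∀ w : ℂ, ξ₁ 0 w x = ∑ j ∈ Finset.range (p+1), c j * w ^ j := by
    intro x hx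
    obtain ⟨M, hM0, hM⟩ := hbound ξ₁ hcont₁ x 1 hx zero_le_one
    set g : ℂ → ℂ := fun v => ξ₁ 0 v x with hg_def
    have hdiffg : Differentiable ℂ g :=
      (hholo₁ x hx).comp ((differentiable_const _).prodMk differentiable_id)
    have hbdg : ∀ w, ‖g w‖ ≤ (‖μ‖ ^ p * M) * (1 + ‖w‖) ^ p := by
      intro w
      obtain ⟨n, hn1, hn2⟩ := exists_pow_between hμn (norm_nonneg w)
      have hrep : g w = (μ ^ p) ^ n * ξ₁ 0 (w / μ ^ n) (ψ^[n] x) := hitγ₁ n 0 w x hx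
      rw [hrep, norm_mul]
      have hp2 : ‖w / μ ^ n‖ ≤ 1 := by
        rw [norm_div, norm_pow]
        exact div_le_one_of_le₀ hn1 (by positivity)
      have hp3 : ψ^[n] x ∈ Set.Icc 0 x := ⟨(hψiter x hx n).1, (hψiter x hx n).2⟩
      have hnormpow : ‖(μ ^ p) ^ n‖ = (‖μ‖ ^ n) ^ p := by
        rw [norm_pow, norm_pow, ← pow_mul, ← pow_mul, Nat.mul_comm]
      calc ‖(μ ^ p) ^ n‖ * ‖ξ₁ 0 (w / μ ^ n) (ψ^[n] x)‖
          ≤ (‖μ‖ * (1 + ‖w‖)) ^ p * M := by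
            apply mul_le_mul _ (hM _ _ _ (by simp) hp2 hp3) (norm_nonneg _) (by positivity)
            rw [hnormpow]
            exact pow_le_pow_left₀ (by positivity) hn2 p
      _ = (‖μ‖ ^ p * M) * (1 + ‖w‖) ^ p := by rw [mul_pow]; ring
    obtain ⟨c, hcg⟩ := entire_poly_of_growth p g hdiffg _ hbdg
    exact ⟨c, hcg⟩
  have hrepA : ∀ x : ℝ, 0 ≤ x → ∀ w : ℂ,
      ξ₁ 0 w x = ∑ j ∈ Finset.range (p+1), A j x * w ^ j := by
    intro x hx w
    obtain ⟨c, hc⟩ := hrepγ x hx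
    have hcoef := coeff_formula (fun w => ξ₁ 0 w x) c hc
    rw [hc w]
    apply Finset.sum_congr rfl
    intro j hj
    rw [hcoef j (Finset.mem_range.mp hj)]
  -- Coefficient recursion
  have hArec : ∀ j < p + 1, ∀ x : ℝ, 0 ≤ x →
      A j (φ x) * μ ^ j = μ ^ p * A j x := by
    intro j hj x hx
    have h1 : ∀ w : ℂ, ξ₁ 0 (μ * w) (φ x)
        = ∑ k ∈ Finset.range (p+1), (A k (φ x) * μ ^ k) * w ^ k := by
      intro w
      rw [hrepA (φ x) (hφpos x hx) (μ * w)]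
      apply Finset.sum_congr rfl
      intro k _
      rw [mul_pow]
      ring
    have h2 : ∀ w : ℂ, ξ₁ 0 (μ * w) (φ x)
        = ∑ k ∈ Finset.range (p+1), (μ ^ p * A k x) * w ^ k := by
      intro w
      rw [hstepγ₁ w x hx, hrepA x hx w, Finset.mul_sum]
      apply Finset.sum_congr rfl
      intro k _
      ring
    have hc1 := coeff_formula (fun w => ξ₁ 0 (μ * w) (φ x)) _ h1 j hj
    have hc2 := coeff_formula (fun w => ξ₁ 0 (μ * w) (φ x)) _ h2 j hj
    rw [hc1, ← hc2]
  -- continuity and boundary values of A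
  have hAcont : ∀ j, ContinuousOn (A j) (Set.Ici 0) := by
    intro j
    apply continuousOn_finset_sum
    intro i _
    exact (hcx ξ₁ hcont₁ 0 (i : ℂ)).mul continuousOn_const
  have hA0 : ∀ j, A j 0 = 0 := by
    intro j
    rw [hA_def]
    simp only []
    apply Finset.sum_eq_zero
    intro i _
    rw [hbd₁]
    simp
  -- top coefficient vanishes
  have hAp : ∀ x : ℝ, 0 ≤ x → A p x = 0 := by
    have hrec : ∀ x, 0 ≤ x → A p (φ x) = 1 * A p x := by
      intro x hx
      have h := hArec p (Nat.lt_succ_self p) x hx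
      rw [mul_comm (μ ^ p) (A p x)] at h
      rw [mul_right_cancel₀ hμp0 h, one_mul]
    exact hvanish (A p) 1 (hAcont p) norm_one.le (hA0 p) hrec
  -- Final assembly
  refine ⟨fun j => A (j : ℕ), fun x => ξ₂ 0 0 x, fun j => hAcont (j : ℕ),
    hcx ξ₂ hcont₂ 0 0, fun j => hA0 (j : ℕ), hbd₂ 0 0, ?_, ?_, ?_⟩
  · intro j x hx
    have hj : (j : ℕ) < p + 1 := lt_of_lt_of_le j.isLt (Nat.le_succ p)
    have h := hArec (j : ℕ) hj x hx
    have hsplit : μ ^ (p - (j : ℕ)) * μ ^ (j : ℕ) = μ ^ p := by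
      rw [← pow_add]
      congr 1
      omega
    apply mul_right_cancel₀ (pow_ne_zero (j : ℕ) hμ0)
    rw [h, ← hsplit]
    ring
  · intro x hx
    have := hstepγ₂ 0 x hx
    rwa [mul_zero] at this
  · intro z₁ z₂ x hx
    constructor
    · have h1 := hE1 z₂ x hx z₁
      rw [hβ₁one z₂ x hx, one_mul] at h1
      have hfin : ∑ j : Fin p, A (j : ℕ) x * z₂ ^ (j : ℕ)
          = ∑ j ∈ Finset.range p, A j x * z₂ ^ j :=
        Fin.sum_univ_eq_sum_range (fun j => A j x * z₂ ^ j) p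
      rw [h1, hrepA x hx z₂, Finset.sum_range_succ, hAp x hx, hfin]
      ring
    · exact hξ₂final z₁ z₂ x hx
end
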